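/- arXiv:math/0407408 — 5 statements merged into one kernel-verified Lean document; each statement's English description precedes it below -/
import Mathlib

section
/- Let d ≥ 2 and let x_1 < y_1 < x_2 < y_2 < ... < x_{d-1} < y_{d-1} be 2(d-1) real numbers. Then there exists a unique real polynomial p of the form p(z) = z^n + c_{n-1}z^{n-1} + ... + c_1 z (monic, zero constant term) with 2 ≤ n ≤ d such that p(x_j) = p(y_j) for all j = 1, ..., d-1. -/
open Polynomial

theorem key_deg (d : ℕ) (hd : 2 ≤ d) (x y : Fin (d - 1) → ℝ)
    (hxy : ∀ j, x j < y j)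
    (hinter : ∀ j k : Fin (d - 1), j < k → y j < x k)
    (p : ℝ[X]) (hp0 : p ≠ 0) (hc : p.coeff 0 = 0) (hdeg : p.natDegree ≤ d)
    (heq : ∀ j, p.eval (x j) = p.eval (y j)) : p.natDegree = d := by
  have hnd : p.natDegree ≠ 0 := by
    intro h
    have := Polynomial.eq_C_of_natDegree_eq_zero h
    rw [hc] at this
    simp [this] at hp0
  have hroot : ∀ j, ∃ z ∈ Set.Ioo (x j) (y j), p.derivative.eval z = 0 := by
    intro j
    obtain ⟨z, hz1, hz2⟩ := exists_deriv_eq_zero (hxy j) p.continuousOn (heq j)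
    exact ⟨z, hz1, by rwa [← p.deriv]⟩
  choose z hz1 hz2 using hroot
  have hzinj : Function.Injective z := by
    intro j k h
    by_contra hne
    rcases lt_or_gt_of_ne hne with hlt | hlt
    · have : z j < z k := lt_trans (lt_trans (hz1 j).2 (hinter j k hlt)) (hz1 k).1
      exact absurd h this.ne
    · have : z k < z j := lt_trans (lt_trans (hz1 k).2 (hinter k j hlt)) (hz1 j).1
      exact absurd h.symm this.ne
  have hd' : p.derivative ≠ 0 := fun h => hnd (natDegree_eq_zero_of_derivative_eq_zero h)
  have hsub : Finset.image z Finset.univ ⊆ p.derivative.roots.toFinset := by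
    intro t ht
    obtain ⟨j, _, rfl⟩ := Finset.mem_image.mp ht
    rw [Multiset.mem_toFinset, mem_roots hd']
    exact hz2 j
  have hcard : d - 1 ≤ p.derivative.natDegree := by
    calc d - 1 = (Finset.image z Finset.univ).card := by
          rw [Finset.card_image_of_injective _ hzinj, Finset.card_univ, Fintype.card_fin]
      _ ≤ p.derivative.roots.toFinset.card := Finset.card_le_card hsub
      _ ≤ Multiset.card p.derivative.roots := Multiset.toFinset_card_le _
      _ ≤ p.derivative.natDegree := Polynomial.card_roots' p.derivative
  have := Polynomial.natDegree_derivative_le p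
  omega

theorem exists_sol (d : ℕ) (hd : 2 ≤ d) (x y : Fin (d - 1) → ℝ) :
    ∃ p : ℝ[X], p ≠ 0 ∧ p.coeff 0 = 0 ∧ p.natDegree ≤ d ∧
      ∀ j, p.eval (x j) = p.eval (y j) := by
  set M : Matrix (Fin (d - 1)) (Fin d) ℝ :=
    fun j i => x j ^ ((i : ℕ) + 1) - y j ^ ((i : ℕ) + 1) with hM
  -- there is a nonzero kernel vector
  obtain ⟨c, hc0, hcker⟩ : ∃ c : Fin d → ℝ, c ≠ 0 ∧ M.mulVecLin c = 0 := by
    by_contra h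
    push_neg at h
    have hinj : Function.Injective M.mulVecLin := by
      rw [← LinearMap.ker_eq_bot, LinearMap.ker_eq_bot']
      intro m hm
      by_contra hm0
      exact (h m hm0) hm
    have := LinearMap.finrank_le_finrank_of_injective hinj
    rw [Module.finrank_fin_fun, Module.finrank_fin_fun] at this
    omega
  set p : ℝ[X] := ∑ i : Fin d, C (c i) * X ^ ((i : ℕ) + 1) with hp
  have hcoeff : ∀ i : Fin d, p.coeff ((i : ℕ) + 1) = c i := by
    intro i
    rw [hp, finset_sum_coeff, Finset.sum_eq_single i]
    · simp
    · intro j _ hji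
      have : (j : ℕ) + 1 ≠ (i : ℕ) + 1 := by
        simp only [ne_eq, Nat.add_right_cancel_iff]
        exact fun h => hji (Fin.ext h)
      rw [coeff_C_mul, coeff_X_pow, if_neg (fun h => this h.symm), mul_zero]
    · simp
  refine ⟨p, ?_, ?_, ?_, ?_⟩
  · intro h
    apply hc0
    funext i
    have := hcoeff i
    rw [h] at this
    simpa using this.symm
  · rw [hp, finset_sum_coeff]
    simp [coeff_X_pow]
  · apply Polynomial.natDegree_sum_le_of_forall_le
    intro i _
    refine (Polynomial.natDegree_C_mul_le _ _).trans ?_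
    rw [natDegree_X_pow]
    exact i.2
  · intro j
    have hker := congrFun hcker j
    have heval : ∀ t : ℝ, p.eval t = ∑ i : Fin d, c i * t ^ ((i : ℕ) + 1) := by
      intro t; rw [hp, eval_finset_sum]; simp [eval_C, eval_pow]
    rw [heval, heval]
    have : ∑ i : Fin d, (x j ^ ((i : ℕ) + 1) - y j ^ ((i : ℕ) + 1)) * c i = 0 := by
      rw [Matrix.mulVecLin_apply] at hker
      simpa [Matrix.mulVecLin_apply, Matrix.mulVec, dotProduct, hM] using hker
    have expand : ∑ i : Fin d, (c i * x j ^ ((i : ℕ) + 1) - c i * y j ^ ((i : ℕ) + 1)) = 0 := by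
      rw [← this]
      exact Finset.sum_congr rfl fun i _ => by ring
    rw [Finset.sum_sub_distrib] at expand
    linarith [expand]

/-- For `d ≥ 2` and interlaced reals
`x 0 < y 0 < x 1 < y 1 < … < x (d-2) < y (d-2)`, there is a unique real polynomial `p`
of the form `z^n + c_{n-1} z^{n-1} + … + c_1 z` (monic, zero constant term) with
`2 ≤ n ≤ d` such that `p (x j) = p (y j)` for all `j`. -/
theorem unique_monic_polynomial_constant_on_pairs
    (d : ℕ) (hd : 2 ≤ d) (x y : Fin (d - 1) → ℝ)
    (hxy : ∀ j, x j < y j)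
    (hinter : ∀ j k : Fin (d - 1), j < k → y j < x k) :
    ∃! p : Polynomial ℝ,
      (∃ n : ℕ, 2 ≤ n ∧ n ≤ d ∧ p.Monic ∧ p.natDegree = n ∧ p.coeff 0 = 0) ∧
      ∀ j, p.eval (x j) = p.eval (y j) := by
  obtain ⟨p0, hp0, hc0, hdeg0, heq0⟩ := exists_sol d hd x y
  have hdegp0 : p0.natDegree = d := key_deg d hd x y hxy hinter p0 hp0 hc0 hdeg0 heq0
  have hlead : p0.leadingCoeff ≠ 0 := leadingCoeff_ne_zero.mpr hp0
  set p : ℝ[X] := C p0.leadingCoeff⁻¹ * p0 with hpdef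
  have hmon : p.Monic := monic_C_mul_of_mul_leadingCoeff_eq_one (by
    field_simp)
  have hpdeg : p.natDegree = d := by
    rw [hpdef, natDegree_C_mul (inv_ne_zero hlead), hdegp0]
  have hpc : p.coeff 0 = 0 := by rw [hpdef, coeff_C_mul, hc0, mul_zero]
  have hpeq : ∀ j, p.eval (x j) = p.eval (y j) := by
    intro j; rw [hpdef]; simp [heq0 j]
  refine ⟨p, ⟨⟨d, hd, le_refl d, hmon, hpdeg, hpc⟩, hpeq⟩, ?_⟩
  rintro q ⟨⟨n, hn2, hnd, hqmon, hqdeg, hqc⟩, hqeq⟩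
  have hq0 : q ≠ 0 := hqmon.ne_zero
  have hqdegd : q.natDegree = d := key_deg d hd x y hxy hinter q hq0 hqc (hqdeg ▸ hnd) hqeq
  by_contra hne
  set r : ℝ[X] := q - p with hr
  have hr0 : r ≠ 0 := sub_ne_zero.mpr hne
  have hrc : r.coeff 0 = 0 := by rw [hr, coeff_sub, hqc, hpc, sub_zero]
  have hrdeg : r.natDegree ≤ d := by
    refine (Polynomial.natDegree_sub_le _ _).trans ?_
    rw [hqdegd, hpdeg]; omega
  have hreq : ∀ j, r.eval (x j) = r.eval (y j) := by
    intro j; rw [hr]; simp [hqeq j, hpeq j]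
  have hrd : r.natDegree = d := key_deg d hd x y hxy hinter r hr0 hrc hrdeg hreq
  have : r.coeff d = 0 := by
    rw [hr, coeff_sub]
    have h1 : q.coeff d = 1 := by
      have := hqmon.leadingCoeff; rwa [leadingCoeff, hqdegd] at this
    have h2 : p.coeff d = 1 := by
      have := hmon.leadingCoeff; rwa [leadingCoeff, hpdeg] at this
    rw [h1, h2, sub_self]
  have : r.leadingCoeff = 0 := by rwa [leadingCoeff, hrd]
  exact hr0 (leadingCoeff_eq_zero.mp this)
end

section
/- For 1 ≤ a ≤ d-1, the number of semistandard Young tableaux of shape 2×(d-1) with content (a, 1, 1, ..., 1) (the entry 1 appearing a times and each of the entries 2, 3, ..., 2d-1-a appearing exactly once) equals ((a+1)/d)·binomial(2d-2-a, d-1). -/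
/-- The number of cells of a `2 × m` tableau `T` carrying the entry `k`. -/
def entryCount {m : ℕ} (T : Fin 2 → Fin m → ℕ) (k : ℕ) : ℕ :=
  (Finset.univ.filter fun c : Fin 2 × Fin m => T c.1 c.2 = k).card

open Finset

open scoped Classical in
noncomputable def ballotSet (n t a : ℕ) : Finset (Finset ℕ) :=
  (Finset.range n).powerset.filter fun A =>
    A.card = t ∧ ∀ k ≤ n, 2 * (A ∩ Finset.range k).card ≤ k + a

lemma mem_ballotSet {n t a : ℕ} {A : Finset ℕ} :
    A ∈ ballotSet n t a ↔ A ⊆ Finset.range n ∧ A.card = t ∧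
      ∀ k ≤ n, 2 * (A ∩ Finset.range k).card ≤ k + a := by
  simp [ballotSet, Finset.mem_filter, Finset.mem_powerset, and_assoc]

lemma ballotSet_eq_empty {n t a : ℕ} (h : n + a < 2 * t) : ballotSet n t a = ∅ := by
  ext A
  simp only [mem_ballotSet, Finset.notMem_empty, iff_false]
  rintro ⟨hsub, hcard, hcond⟩
  have h1 := hcond n le_rfl
  rw [Finset.inter_eq_left.2 hsub, hcard] at h1
  omega

lemma ballotSet_zero_eq {n a : ℕ} : ballotSet n 0 a = {∅} := by
  ext A
  simp only [mem_ballotSet, Finset.mem_singleton, Finset.card_eq_zero]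
  constructor
  · rintro ⟨-, h, -⟩; exact h
  · rintro rfl
    exact ⟨Finset.empty_subset _, rfl, fun k _ => by simp⟩

lemma ballotSet_full_card {n a : ℕ} :
    (ballotSet n n a).card = if n ≤ a then 1 else 0 := by
  have hmem : ∀ A : Finset ℕ, A ∈ ballotSet n n a ↔ A = Finset.range n ∧ n ≤ a := by
    intro A
    rw [mem_ballotSet]
    constructor
    · rintro ⟨hsub, hcard, hcond⟩
      have hA : A = Finset.range n := Finset.eq_of_subset_of_card_le hsub (by simp [hcard])
      subst hA
      have := hcond n le_rfl
      rw [Finset.inter_self, Finset.card_range] at this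
      exact ⟨rfl, by omega⟩
    · rintro ⟨rfl, hna⟩
      refine ⟨le_rfl, Finset.card_range n, fun k hk => ?_⟩
      rw [Finset.inter_eq_right.2 (Finset.range_subset_range.2 hk), Finset.card_range]
      omega
  by_cases hna : n ≤ a
  · have : ballotSet n n a = {Finset.range n} := by ext A; simp [hmem, hna]
    rw [this]; simp [hna]
  · have : ballotSet n n a = ∅ := by ext A; simp [hmem, hna]
    rw [this]; simp [hna]

lemma ballotSet_succ_card {n t a : ℕ} (ht : 1 ≤ t) (h : 2 * t ≤ n + 1 + a) :
    (ballotSet (n+1) t a).card = (ballotSet n t a).card + (ballotSet n (t-1) a).card := by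
  classical
  have hsub1 : Finset.range n ⊆ Finset.range (n+1) := Finset.range_subset_range.2 (by omega)
  have hnotn : ∀ k ≤ n, (n : ℕ) ∉ Finset.range k := fun k hk => by simp; omega
  have h1 : (ballotSet (n+1) t a).filter (fun A => n ∉ A) = ballotSet n t a := by
    ext A
    simp only [Finset.mem_filter, mem_ballotSet]
    constructor
    · rintro ⟨⟨hsub, hcard, hcond⟩, hnA⟩
      refine ⟨fun x hx => ?_, hcard, fun k hk => hcond k (by omega)⟩
      have hx1 := Finset.mem_range.1 (hsub hx)
      have hx2 : x ≠ n := fun hxn => hnA (hxn ▸ hx)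
      simp only [Finset.mem_range]; omega
    · rintro ⟨hsub, hcard, hcond⟩
      have hnA : n ∉ A := fun hn => by simpa using Finset.mem_range.1 (hsub hn)
      refine ⟨⟨hsub.trans hsub1, hcard, fun k hk => ?_⟩, hnA⟩
      rcases Nat.lt_or_ge k (n+1) with hk' | hk'
      · exact hcond k (by omega)
      · have hkn : k = n + 1 := by omega
        subst hkn
        have h2 := hcond n le_rfl
        rw [Finset.inter_eq_left.2 hsub] at h2
        rw [Finset.inter_eq_left.2 (hsub.trans hsub1)]
        omega
  have h2 : ((ballotSet (n+1) t a).filter (fun A => n ∈ A)).card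
      = (ballotSet n (t-1) a).card := by
    refine Finset.card_bij' (fun A _ => A.erase n) (fun A _ => insert n A) ?_ ?_ ?_ ?_
    · -- hi
      intro A hA
      rw [Finset.mem_filter, mem_ballotSet] at hA
      obtain ⟨⟨hsub, hcard, hcond⟩, hnA⟩ := hA
      rw [mem_ballotSet]
      refine ⟨fun x hx => ?_, by rw [Finset.card_erase_of_mem hnA, hcard], fun k hk => ?_⟩
      · obtain ⟨hxn, hxA⟩ := Finset.mem_erase.1 hx
        have := Finset.mem_range.1 (hsub hxA)
        simp only [Finset.mem_range]; omega
      · have : A.erase n ∩ Finset.range k = A ∩ Finset.range k := by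
          ext x
          simp only [Finset.mem_inter, Finset.mem_erase, Finset.mem_range]
          constructor
          · rintro ⟨⟨-, hx⟩, hk'⟩; exact ⟨hx, hk'⟩
          · rintro ⟨hx, hk'⟩; exact ⟨⟨by omega, hx⟩, hk'⟩
        rw [this]
        exact hcond k (by omega)
    · -- hj
      intro A hA
      rw [mem_ballotSet] at hA
      obtain ⟨hsub, hcard, hcond⟩ := hA
      have hnA : n ∉ A := fun hn => by simpa using Finset.mem_range.1 (hsub hn)
      rw [Finset.mem_filter, mem_ballotSet]
      refine ⟨⟨?_, ?_, fun k hk => ?_⟩, Finset.mem_insert_self n A⟩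
      · intro x hx
        rcases Finset.mem_insert.1 hx with rfl | hx'
        · simp
        · exact hsub1 (hsub hx')
      · rw [Finset.card_insert_of_notMem hnA, hcard]; omega
      · rcases Nat.lt_or_ge k (n+1) with hk' | hk'
        · have : insert n A ∩ Finset.range k = A ∩ Finset.range k := by
            ext x
            simp only [Finset.mem_inter, Finset.mem_insert, Finset.mem_range]
            constructor
            · rintro ⟨rfl | hx, hkx⟩
              · omega
              · exact ⟨hx, hkx⟩
            · rintro ⟨hx, hkx⟩; exact ⟨Or.inr hx, hkx⟩
          rw [this]
          exact hcond k (by omega)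
        · have hkn : k = n + 1 := by omega
          subst hkn
          have hsub' : insert n A ⊆ Finset.range (n+1) := by
            intro x hx
            rcases Finset.mem_insert.1 hx with rfl | hx'
            · simp
            · exact hsub1 (hsub hx')
          rw [Finset.inter_eq_left.2 hsub', Finset.card_insert_of_notMem hnA, hcard]
          omega
    · -- left inverse
      intro A hA
      rw [Finset.mem_filter] at hA
      exact Finset.insert_erase hA.2
    · -- right inverse
      intro A hA
      rw [mem_ballotSet] at hA
      have hnA : n ∉ A := fun hn => by simpa using Finset.mem_range.1 (hA.1 hn)
      exact Finset.erase_insert hnA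
  rw [← Finset.card_filter_add_card_filter_not
    (p := fun A => n ∉ A) (s := ballotSet (n+1) t a), h1]
  congr 1
  rw [← h2]
  congr 1
  ext A
  simp [not_not]

lemma ballotSet_card {n : ℕ} : ∀ t a : ℕ, 2 * t ≤ n + a + 1 → t ≤ n →
    (ballotSet n t a).card + n.choose (n - t + a + 1) = n.choose t := by
  induction n with
  | zero =>
    intro t a h1 h2
    interval_cases t
    rw [ballotSet_zero_eq]
    simp
  | succ n ih =>
    intro t a h1 h2
    rcases Nat.eq_zero_or_pos t with rfl | ht
    · rw [ballotSet_zero_eq, Nat.choose_eq_zero_of_lt (by omega : n + 1 < n + 1 - 0 + a + 1)]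
      simp
    rcases Nat.lt_or_ge (n + 1 + a) (2*t) with hgt | hle
    · -- 2t = n+a+2
      have h2t : 2 * t = n + a + 2 := by omega
      rw [ballotSet_eq_empty (by omega)]
      have hidx : n + 1 - t + a + 1 = t := by omega
      rw [hidx]
      simp
    rcases Nat.lt_or_ge n t with hfull | htle
    · -- t = n+1
      have htn : t = n + 1 := by omega
      subst htn
      have hna : n + 1 ≤ a := by omega
      rw [show n + 1 - (n+1) + a + 1 = a + 1 by omega]
      rw [ballotSet_full_card]
      rw [if_pos (by omega : n + 1 ≤ a)]
      rw [Nat.choose_eq_zero_of_lt (by omega), Nat.choose_self]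
    · -- main case
      obtain ⟨t', rfl⟩ : ∃ t', t = t' + 1 := ⟨t-1, by omega⟩
      rw [ballotSet_succ_card ht hle]
      simp only [Nat.add_sub_cancel]
      have ih1 := ih (t'+1) a (by omega) htle
      have ih2 := ih t' a (by omega) (by omega)
      have hidx2 : n - t' + a + 1 = n - (t'+1) + a + 2 := by omega
      rw [hidx2] at ih2
      have hp1 : (n+1).choose (n - (t'+1) + a + 2)
          = n.choose (n-(t'+1)+a+1) + n.choose (n-(t'+1)+a+2) :=
        Nat.choose_succ_succ n (n-(t'+1)+a+1)
      have hp2 : (n+1).choose (t'+1) = n.choose t' + n.choose (t'+1) :=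
        Nat.choose_succ_succ n t'
      have hidx3 : n + 1 - (t'+1) + a + 1 = n - (t'+1) + a + 2 := by omega
      rw [hidx3, hp1, hp2]
      omega

open Finset

-- L1
lemma emb_lt_iff {A : Finset ℕ} {m : ℕ} (h : A.card = m) (i : Fin m) (x : ℕ) :
    A.orderEmbOfFin h i < x ↔ (i : ℕ) < (A ∩ Finset.range x).card := by
  constructor
  · intro hlt
    have : (Finset.range ((i : ℕ) + 1)).card ≤ (A ∩ Finset.range x).card := by
      apply Finset.card_le_card_of_injOn
        (fun j => A.orderEmbOfFin h ⟨min j (i : ℕ), by have := i.2; omega⟩)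
      · intro j hj
        simp only [Finset.mem_coe, Finset.mem_range] at hj
        refine Finset.mem_inter.2 ⟨Finset.orderEmbOfFin_mem _ _ _, Finset.mem_range.2 ?_⟩
        calc A.orderEmbOfFin h ⟨min j (i:ℕ), _⟩ ≤ A.orderEmbOfFin h i := by
              apply (A.orderEmbOfFin h).monotone
              rw [Fin.le_def]; simp
          _ < x := hlt
      · intro j1 h1 j2 h2 heq
        simp only [Finset.mem_coe, Finset.mem_range] at h1 h2
        have := (A.orderEmbOfFin h).injective heq
        have := Fin.mk.injEq .. ▸ this
        omega
    simpa using this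
  · intro hlt
    set S : Finset (Fin m) := Finset.univ.filter (fun s => A.orderEmbOfFin h s < x) with hS
    have hcardS : S.card = (A ∩ Finset.range x).card := by
      apply Finset.card_bij (fun s _ => A.orderEmbOfFin h s)
      · intro s hs
        simp only [hS, Finset.mem_filter] at hs
        exact Finset.mem_inter.2 ⟨Finset.orderEmbOfFin_mem _ _ _, Finset.mem_range.2 hs.2⟩
      · intro s1 h1 s2 h2 heq
        exact (A.orderEmbOfFin h).injective heq
      · intro y hy
        obtain ⟨hyA, hyx⟩ := Finset.mem_inter.1 hy
        have : y ∈ Set.range (A.orderEmbOfFin h) := by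
          rw [Finset.range_orderEmbOfFin]; exact hyA
        obtain ⟨s, hs⟩ := this
        refine ⟨s, ?_, hs⟩
        simp only [hS, Finset.mem_filter]
        exact ⟨Finset.mem_univ _, by rw [hs]; exact Finset.mem_range.1 hyx⟩
    by_contra hcon
    push_neg at hcon
    have hall : ∀ s ∈ S, (s : ℕ) < (i : ℕ) := by
      intro s hs
      simp only [hS, Finset.mem_filter] at hs
      by_contra hge
      push_neg at hge
      have : A.orderEmbOfFin h i ≤ A.orderEmbOfFin h s :=
        (A.orderEmbOfFin h).monotone (by rw [Fin.le_def]; exact hge)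
      omega
    have : S.card ≤ (i : ℕ) := by
      have := Finset.card_le_card_of_injOn (fun s : Fin m => (s : ℕ))
        (fun s hs => Finset.mem_range.2 (hall s hs)) (fun s1 _ s2 _ => Fin.ext)
      simpa using this
    omega

-- L2
lemma card_inter_range_emb {A : Finset ℕ} {m : ℕ} (h : A.card = m) (i : Fin m) :
    (A ∩ Finset.range (A.orderEmbOfFin h i)).card = (i : ℕ) := by
  set c := (A ∩ Finset.range (A.orderEmbOfFin h i)).card with hc
  have h1 : ¬ ((i : ℕ) < c) := by
    rw [hc, ← emb_lt_iff h i]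
    omega
  have h2 : ¬ (c < (i : ℕ)) := by
    intro hci
    have hcm : c < m := by have := i.2; omega
    have hlt : A.orderEmbOfFin h ⟨c, hcm⟩ < A.orderEmbOfFin h i :=
      (A.orderEmbOfFin h).strictMono (by rw [Fin.lt_def]; exact hci)
    have h3 := (emb_lt_iff h ⟨c, hcm⟩ _).1 hlt
    rw [← hc] at h3
    simp at h3
  omega

def tabOf (a : ℕ) (A B : Finset ℕ) (i j : ℕ) : ℕ :=
  if i = 1 then (A.sort (· ≤ ·)).getD j 0 + 2
  else if j < a then 1 else (B.sort (· ≤ ·)).getD (j - a) 0 + 2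

lemma getD_sort_eq {A : Finset ℕ} {m : ℕ} (h : A.card = m) {j : ℕ} (hj : j < m) :
    (A.sort (· ≤ ·)).getD j 0 = A.orderEmbOfFin h ⟨j, hj⟩ := by
  have hlen : j < (A.sort (· ≤ ·)).length := by rw [Finset.length_sort, h]; exact hj
  rw [Finset.orderEmbOfFin_apply, List.getD_eq_getElem _ _ hlen]
  rfl

lemma entryCount_split {m : ℕ} (T : Fin 2 → Fin m → ℕ) (v : ℕ) :
    entryCount T v = (Finset.univ.filter fun j : Fin m => T 0 j = v).card
      + (Finset.univ.filter fun j : Fin m => T 1 j = v).card := by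
  classical
  unfold entryCount
  have hsplit : (Finset.univ.filter fun c : Fin 2 × Fin m => T c.1 c.2 = v)
      = ((Finset.univ.filter fun j : Fin m => T 0 j = v).image fun j => ((0 : Fin 2), j))
        ∪ ((Finset.univ.filter fun j : Fin m => T 1 j = v).image fun j => ((1 : Fin 2), j)) := by
    ext ⟨i, j⟩
    fin_cases i <;>
      simp [Prod.ext_iff, eq_comm]
  rw [hsplit, Finset.card_union_of_disjoint, Finset.card_image_of_injective,
    Finset.card_image_of_injective]
  · intro x y hxy; simpa [Prod.ext_iff] using hxy
  · intro x y hxy; simpa [Prod.ext_iff] using hxy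
  · rw [Finset.disjoint_left]
    rintro ⟨i, j⟩ h1 h2
    simp only [Finset.mem_image] at h1 h2
    obtain ⟨x, -, hx⟩ := h1
    obtain ⟨y, -, hy⟩ := h2
    rw [← hy] at hx
    simp at hx

lemma card_filter_fin_lt {m a : ℕ} (ham : a ≤ m) :
    (Finset.univ.filter fun j : Fin m => (j : ℕ) < a).card = a := by
  have h := Finset.card_bij
    (s := Finset.univ.filter fun j : Fin m => (j : ℕ) < a) (t := Finset.range a)
    (fun j _ => (j : ℕ)) ?_ ?_ ?_
  · rw [h, Finset.card_range]
  · intro j hj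
    simp only [Finset.mem_filter] at hj
    exact Finset.mem_range.2 hj.2
  · intro j1 _ j2 _ h
    exact Fin.ext h
  · intro y hy
    have hya := Finset.mem_range.1 hy
    exact ⟨⟨y, by omega⟩, by simp [hya], rfl⟩

lemma tabOf_spec {m a : ℕ} (ha : 1 ≤ a) (ham : a ≤ m) {A : Finset ℕ}
    (hA : A ∈ ballotSet (2*m-a) m a) (T : Fin 2 → Fin m → ℕ)
    (hT : T = fun i j => tabOf a A (Finset.range (2*m-a) \ A) i.val j.val) :
    ((∀ i, Monotone (T i)) ∧ (∀ j, T 0 j < T 1 j) ∧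
     entryCount T 1 = a ∧ (∀ k, 2 ≤ k → k ≤ 2*m+1-a → entryCount T k = 1) ∧
     (∀ i j, 1 ≤ T i j ∧ T i j ≤ 2*m+1-a)) ∧
    Finset.univ.image (fun j : Fin m => T 1 j - 2) = A := by
  obtain ⟨hsub, hAc, hcond⟩ := mem_ballotSet.1 hA
  set N := 2*m - a with hN
  have hm1 : 1 ≤ m := le_trans ha ham
  set B := Finset.range N \ A with hB
  have hBc : B.card = m - a := by
    rw [hB, Finset.card_sdiff_of_subset hsub, Finset.card_range, hAc]; omega
  have v1 : ∀ j : Fin m, T 1 j = A.orderEmbOfFin hAc j + 2 := by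
    intro j
    rw [hT]
    show tabOf a A B (1:Fin 2).val j.val = _
    rw [tabOf, if_pos (show ((1:Fin 2):ℕ) = 1 from rfl), getD_sort_eq hAc j.2]
  have v2 : ∀ j : Fin m, (j : ℕ) < a → T 0 j = 1 := by
    intro j hj
    rw [hT]
    show tabOf a A B (0:Fin 2).val j.val = _
    rw [tabOf, if_neg (show ¬ ((0:Fin 2):ℕ) = 1 by decide), if_pos hj]
  have hjsub : ∀ j : Fin m, a ≤ (j:ℕ) → (j : ℕ) - a < m - a := fun j hj => by
    have := j.2; omega
  have v3 : ∀ (j : Fin m) (hj : a ≤ (j:ℕ)),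
      T 0 j = B.orderEmbOfFin hBc ⟨(j:ℕ) - a, hjsub j hj⟩ + 2 := by
    intro j hj
    rw [hT]
    show tabOf a A B (0:Fin 2).val j.val = _
    rw [tabOf, if_neg (show ¬ ((0:Fin 2):ℕ) = 1 by decide), if_neg (by omega), getD_sort_eq hBc (hjsub j hj)]
  have hAmem : ∀ j : Fin m, A.orderEmbOfFin hAc j ∈ A := fun j =>
    Finset.orderEmbOfFin_mem _ _ _
  have hAlt : ∀ j : Fin m, A.orderEmbOfFin hAc j < N := fun j =>
    Finset.mem_range.1 (hsub (hAmem j))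
  have hBmem : ∀ j : Fin (m-a), B.orderEmbOfFin hBc j ∈ B := fun j =>
    Finset.orderEmbOfFin_mem _ _ _
  have hBlt : ∀ j : Fin (m-a), B.orderEmbOfFin hBc j < N := fun j =>
    Finset.mem_range.1 (Finset.mem_sdiff.1 (hBmem j)).1
  have hBnotA : ∀ j : Fin (m-a), B.orderEmbOfFin hBc j ∉ A := fun j =>
    (Finset.mem_sdiff.1 (hBmem j)).2
  have key : ∀ (j : Fin m) (hj : a ≤ (j:ℕ)),
      B.orderEmbOfFin hBc ⟨(j:ℕ) - a, hjsub j hj⟩ < A.orderEmbOfFin hAc j := by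
    intro j hj
    set x := A.orderEmbOfFin hAc j with hx
    have hxA : x ∈ A := hAmem j
    have hxN : x < N := hAlt j
    have hj1 : (A ∩ Finset.range x).card = (j : ℕ) := card_inter_range_emb hAc j
    have hins : A ∩ Finset.range (x+1) = insert x (A ∩ Finset.range x) := by
      ext y
      simp only [Finset.mem_inter, Finset.mem_insert, Finset.mem_range]
      constructor
      · rintro ⟨hyA, hyx⟩
        rcases Nat.lt_or_ge y x with h | h
        · exact Or.inr ⟨hyA, h⟩
        · exact Or.inl (by omega)
      · rintro (rfl | ⟨hyA, hyx⟩)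
        · exact ⟨hxA, by omega⟩
        · exact ⟨hyA, by omega⟩
    have hcard1 : (A ∩ Finset.range (x+1)).card = (j:ℕ) + 1 := by
      rw [hins, Finset.card_insert_of_notMem (by simp), hj1]
    have hballot := hcond (x+1) (by omega)
    rw [hcard1] at hballot
    have hjx : (j : ℕ) ≤ x := by
      have h := Finset.card_le_card
        (Finset.inter_subset_right : A ∩ Finset.range x ⊆ Finset.range x)
      rw [hj1, Finset.card_range] at h
      exact h
    have hBx : (B ∩ Finset.range x).card + (A ∩ Finset.range x).card = x := by
      have hsplit : B ∩ Finset.range x = Finset.range x \ A := by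
        rw [hB]
        ext y
        simp only [Finset.mem_inter, Finset.mem_sdiff, Finset.mem_range]
        constructor
        · rintro ⟨⟨h1, h2⟩, h3⟩; exact ⟨h3, h2⟩
        · rintro ⟨h1, h2⟩; exact ⟨⟨by omega, h2⟩, h1⟩
      have h2 := Finset.card_sdiff_add_card_inter (Finset.range x) A
      rw [Finset.card_range] at h2
      rw [hsplit, Finset.inter_comm A (Finset.range x)]
      exact h2
    rw [emb_lt_iff hBc]
    show (j:ℕ) - a < _
    omega
  have hT1ge : ∀ j : Fin m, 2 ≤ T 1 j := fun j => by rw [v1 j]; omega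
  have hb0 : ∀ j : Fin m, 1 ≤ T 0 j ∧ T 0 j ≤ 2*m+1-a := by
    intro j
    rcases Nat.lt_or_ge (j:ℕ) a with hja | hja
    · rw [v2 j hja]; omega
    · rw [v3 j hja]; have := hBlt ⟨(j:ℕ)-a, hjsub j hja⟩; omega
  have hb1 : ∀ j : Fin m, 1 ≤ T 1 j ∧ T 1 j ≤ 2*m+1-a := by
    intro j
    rw [v1 j]; have := hAlt j; omega
  have hmono0 : Monotone (T 0) := by
    intro j j' hjj
    rcases Nat.lt_or_ge (j' : ℕ) a with h' | h'
    · have hja : (j:ℕ) < a := by have := Fin.le_def.1 hjj; omega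
      rw [v2 j hja, v2 j' h']
    · rcases Nat.lt_or_ge (j:ℕ) a with hja | hja
      · rw [v2 j hja, v3 j' h']; omega
      · rw [v3 j hja, v3 j' h']
        have h := (B.orderEmbOfFin hBc).monotone
          (show (⟨(j:ℕ)-a, hjsub j hja⟩ : Fin (m-a)) ≤ ⟨(j':ℕ)-a, hjsub j' h'⟩ by
            rw [Fin.le_def]
            have := Fin.le_def.1 hjj
            simp only []
            omega)
        omega
  have hmono1 : Monotone (T 1) := by
    intro j j' hjj
    rw [v1 j, v1 j']
    have := (A.orderEmbOfFin hAc).monotone hjj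
    omega
  refine ⟨⟨?_, ?_, ?_, ?_, ?_⟩, ?_⟩
  · intro i
    fin_cases i
    · exact hmono0
    · exact hmono1
  · intro j
    rcases Nat.lt_or_ge (j:ℕ) a with hja | hja
    · rw [v2 j hja, v1 j]; omega
    · rw [v3 j hja, v1 j]
      have := key j hja
      omega
  · rw [entryCount_split]
    have h0 : (Finset.univ.filter fun j : Fin m => T 0 j = 1)
        = (Finset.univ.filter fun j : Fin m => (j:ℕ) < a) := by
      ext j
      simp only [Finset.mem_filter, Finset.mem_univ, true_and]
      constructor
      · intro h
        by_contra hc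
        push_neg at hc
        rw [v3 j hc] at h
        omega
      · exact v2 j
    have h1 : (Finset.univ.filter fun j : Fin m => T 1 j = 1) = ∅ := by
      ext j
      simp only [Finset.mem_filter, Finset.mem_univ, true_and, Finset.notMem_empty, iff_false]
      have := hT1ge j; omega
    rw [h0, h1, card_filter_fin_lt ham, Finset.card_empty]
    rfl
  · intro v hv2 hvK
    have hvN : v - 2 < N := by omega
    rw [entryCount_split]
    by_cases hvA : v - 2 ∈ A
    · have hex : v - 2 ∈ Set.range (A.orderEmbOfFin hAc) := by
        rw [Finset.range_orderEmbOfFin]; exact hvA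
      obtain ⟨j0, hj0⟩ := hex
      have h1 : (Finset.univ.filter fun j : Fin m => T 1 j = v) = {j0} := by
        ext j
        simp only [Finset.mem_filter, Finset.mem_univ, true_and, Finset.mem_singleton]
        rw [v1 j]
        constructor
        · intro h
          have heq : A.orderEmbOfFin hAc j = v - 2 := by omega
          exact (A.orderEmbOfFin hAc).injective (by rw [heq, hj0])
        · rintro rfl; omega
      have h0 : (Finset.univ.filter fun j : Fin m => T 0 j = v) = ∅ := by
        ext j
        simp only [Finset.mem_filter, Finset.mem_univ, true_and, Finset.notMem_empty, iff_false]
        intro h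
        rcases Nat.lt_or_ge (j:ℕ) a with hja | hja
        · rw [v2 j hja] at h; omega
        · rw [v3 j hja] at h
          have hmem := hBnotA ⟨(j:ℕ)-a, hjsub j hja⟩
          have heq : B.orderEmbOfFin hBc ⟨(j:ℕ)-a, hjsub j hja⟩ = v - 2 := by omega
          rw [heq] at hmem
          exact hmem hvA
      rw [h0, h1]
      simp
    · have hvB : v - 2 ∈ B := Finset.mem_sdiff.2 ⟨Finset.mem_range.2 hvN, hvA⟩
      have hex : v - 2 ∈ Set.range (B.orderEmbOfFin hBc) := by
        rw [Finset.range_orderEmbOfFin]; exact hvB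
      obtain ⟨j0, hj0⟩ := hex
      have haj0 : a + (j0 : ℕ) < m := by have := j0.2; omega
      have h0 : (Finset.univ.filter fun j : Fin m => T 0 j = v) = {⟨a + (j0:ℕ), haj0⟩} := by
        ext j
        simp only [Finset.mem_filter, Finset.mem_univ, true_and, Finset.mem_singleton]
        constructor
        · intro h
          rcases Nat.lt_or_ge (j:ℕ) a with hja | hja
          · rw [v2 j hja] at h; omega
          · rw [v3 j hja] at h
            have heq : B.orderEmbOfFin hBc ⟨(j:ℕ)-a, hjsub j hja⟩
                = B.orderEmbOfFin hBc j0 := by rw [hj0]; omega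
            have hval := (B.orderEmbOfFin hBc).injective heq
            have hval' : (j:ℕ) - a = (j0:ℕ) := by
              simpa [Fin.ext_iff] using hval
            apply Fin.ext
            show (j:ℕ) = a + (j0:ℕ)
            omega
        · rintro rfl
          rw [v3 ⟨a + (j0:ℕ), haj0⟩ (by show a ≤ a + (j0:ℕ); omega)]
          have heq : (⟨(a + (j0:ℕ)) - a, hjsub ⟨a + (j0:ℕ), haj0⟩ (by show a ≤ a + (j0:ℕ); omega)⟩ : Fin (m-a)) = j0 := by
            apply Fin.ext
            show a + (j0:ℕ) - a = (j0:ℕ)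
            omega
          rw [heq, hj0]
          omega
      have h1 : (Finset.univ.filter fun j : Fin m => T 1 j = v) = ∅ := by
        ext j
        simp only [Finset.mem_filter, Finset.mem_univ, true_and, Finset.notMem_empty, iff_false]
        rw [v1 j]
        intro h
        have heq : A.orderEmbOfFin hAc j = v - 2 := by omega
        exact hvA (heq ▸ hAmem j)
      rw [h0, h1]
      simp
  · intro i j
    fin_cases i
    · exact hb0 j
    · exact hb1 j
  · have himg : ∀ j : Fin m, T 1 j - 2 = A.orderEmbOfFin hAc j := fun j => by
      rw [v1 j]; omega
    apply Finset.coe_injective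
    rw [Finset.coe_image, Finset.coe_univ, Set.image_univ,
      show (fun j : Fin m => T 1 j - 2) = ⇑(A.orderEmbOfFin hAc) from funext himg]
    exact Finset.range_orderEmbOfFin A hAc

lemma tab_recover {m a : ℕ} (ha : 1 ≤ a) (ham : a ≤ m) (T : Fin 2 → Fin m → ℕ)
    (hT : (∀ i, Monotone (T i)) ∧ (∀ j, T 0 j < T 1 j) ∧
      entryCount T 1 = a ∧ (∀ k, 2 ≤ k → k ≤ 2*m+1-a → entryCount T k = 1) ∧
      (∀ i j, 1 ≤ T i j ∧ T i j ≤ 2*m+1-a)) :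
    (Finset.univ.image fun j : Fin m => T 1 j - 2) ∈ ballotSet (2*m-a) m a ∧
    T = fun i j => tabOf a (Finset.univ.image fun j : Fin m => T 1 j - 2)
      (Finset.range (2*m-a) \ (Finset.univ.image fun j : Fin m => T 1 j - 2)) i.val j.val := by
  obtain ⟨hmono, hcol, hone, huniq, hbound⟩ := hT
  set N := 2*m - a with hN
  have hm1 : 1 ≤ m := le_trans ha ham
  have hv2 : ∀ j : Fin m, 2 ≤ T 1 j := fun j => by
    have h1 := hcol j; have h2 := (hbound 0 j).1; omega
  have noDup : ∀ (i : Fin 2) (j : Fin m) (i' : Fin 2) (j' : Fin m),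
      (i, j) ≠ (i', j') → 2 ≤ T i j → T i j = T i' j' → False := by
    intro i j i' j' hne h2 heq
    have hb := (hbound i j).2
    have h1 := huniq (T i j) h2 hb
    have hcard : 1 < (Finset.univ.filter fun c : Fin 2 × Fin m => T c.1 c.2 = T i j).card := by
      apply Finset.one_lt_card.2
      refine ⟨(i, j), by simp, (i', j'), by simp [heq.symm], hne⟩
    unfold entryCount at h1
    omega
  have hinj1 : Function.Injective (T 1) := by
    intro j j' heq
    by_contra hne
    exact noDup 1 j 1 j' (by simp [hne]) (hv2 j) heq
  have hinjf : Function.Injective (fun j : Fin m => T 1 j - 2) := by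
    intro j j' h
    apply hinj1
    have := hv2 j; have := hv2 j'
    simp only [] at h
    omega
  set A := Finset.univ.image fun j : Fin m => T 1 j - 2 with hAdef
  have hAc : A.card = m := by
    rw [hAdef, Finset.card_image_of_injective _ hinjf, Finset.card_univ, Fintype.card_fin]
  have hsub : A ⊆ Finset.range N := by
    intro x hx
    rw [hAdef] at hx
    obtain ⟨j, -, rfl⟩ := Finset.mem_image.1 hx
    have h1 := hv2 j
    have h2 := (hbound 1 j).2
    exact Finset.mem_range.2 (by omega)
  have hO : (Finset.univ.filter fun j : Fin m => T 0 j = 1).card = a := by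
    have h := hone
    rw [entryCount_split] at h
    have h1 : (Finset.univ.filter fun j : Fin m => T 1 j = 1) = ∅ := by
      ext j
      simp only [Finset.mem_filter, Finset.mem_univ, true_and, Finset.notMem_empty, iff_false]
      have := hv2 j; omega
    rw [h1, Finset.card_empty] at h
    omega
  have ones_iff : ∀ j : Fin m, T 0 j = 1 ↔ (j : ℕ) < a := by
    intro j
    constructor
    · intro h
      by_contra hc
      push_neg at hc
      have hcard : (Finset.range ((j:ℕ)+1)).card
          ≤ (Finset.univ.filter fun j' : Fin m => T 0 j' = 1).card := by
        apply Finset.card_le_card_of_injOn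
          (fun y => (⟨min y (j:ℕ), by have := j.2; omega⟩ : Fin m))
        · intro y hy
          simp only [Finset.mem_coe, Finset.mem_range] at hy
          simp only [Finset.mem_coe, Finset.mem_filter, Finset.mem_univ, true_and]
          have hle : T 0 ⟨min y (j:ℕ), by have := j.2; omega⟩ ≤ T 0 j := by
            apply hmono 0
            rw [Fin.le_def]
            exact Nat.min_le_right y (j:ℕ)
          have hge := (hbound 0 ⟨min y (j:ℕ), by have := j.2; omega⟩).1
          omega
        · intro y1 h1 y2 h2 he
          simp only [Finset.mem_coe, Finset.mem_range] at h1 h2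
          have hv := congrArg Fin.val he
          simp only [] at hv
          rw [Nat.min_eq_left (by omega), Nat.min_eq_left (by omega)] at hv
          exact hv
      rw [Finset.card_range, hO] at hcard
      omega
    · intro hja
      by_contra hc
      have h2 : 2 ≤ T 0 j := by have := (hbound 0 j).1; omega
      have hsubO : (Finset.univ.filter fun j' : Fin m => T 0 j' = 1)
          ⊆ Finset.univ.filter fun j' : Fin m => (j' : ℕ) < (j : ℕ) := by
        intro j' hj'
        simp only [Finset.mem_filter, Finset.mem_univ, true_and] at hj' ⊢
        by_contra hge
        push_neg at hge
        have hle : T 0 j ≤ T 0 j' := hmono 0 (by rw [Fin.le_def]; exact hge)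
        omega
      have hc1 := Finset.card_le_card hsubO
      rw [hO, card_filter_fin_lt (le_of_lt j.2)] at hc1
      omega
  have htail2 : ∀ j : Fin m, a ≤ (j:ℕ) → 2 ≤ T 0 j := by
    intro j hj
    have h1 := (hbound 0 j).1
    have hne : T 0 j ≠ 1 := fun h => by have := (ones_iff j).1 h; omega
    omega
  have hcondA : ∀ k ≤ N, 2 * (A ∩ Finset.range k).card ≤ k + a := by
    intro k hk
    set R2 := Finset.univ.filter (fun j : Fin m => T 1 j < k + 2) with hR2
    have hcard2 : (A ∩ Finset.range k).card = R2.card := by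
      symm
      apply Finset.card_bij (fun j _ => T 1 j - 2)
      · intro j hj
        rw [hR2, Finset.mem_filter] at hj
        refine Finset.mem_inter.2 ⟨?_, Finset.mem_range.2 ?_⟩
        · rw [hAdef]; exact Finset.mem_image_of_mem _ (Finset.mem_univ j)
        · have := hv2 j; omega
      · intro j1 _ j2 _ he
        exact hinjf he
      · intro x hx
        obtain ⟨hxA, hxk⟩ := Finset.mem_inter.1 hx
        rw [hAdef] at hxA
        obtain ⟨j, -, rfl⟩ := Finset.mem_image.1 hxA
        refine ⟨j, ?_, rfl⟩
        rw [hR2, Finset.mem_filter]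
        have := hv2 j
        have := Finset.mem_range.1 hxk
        exact ⟨Finset.mem_univ j, by omega⟩
    set R1 := Finset.univ.filter (fun j : Fin m => 2 ≤ T 0 j ∧ T 0 j < k + 2) with hR1
    have claim1 : R2.card ≤ a + R1.card := by
      have hsub2 : R2 ⊆ Finset.univ.filter (fun j : Fin m => T 0 j < k+2) := by
        intro j hj
        rw [hR2, Finset.mem_filter] at hj
        simp only [Finset.mem_filter, Finset.mem_univ, true_and]
        have := hcol j
        omega
      have hsplit := Finset.card_filter_add_card_filter_not
        (p := fun j : Fin m => T 0 j = 1)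
        (s := Finset.univ.filter (fun j : Fin m => T 0 j < k+2))
      have e1 : ((Finset.univ.filter (fun j : Fin m => T 0 j < k+2)).filter
          (fun j => T 0 j = 1)).card ≤ a := by
        rw [← hO]
        apply Finset.card_le_card
        intro j hj
        simp only [Finset.mem_filter, Finset.mem_univ, true_and] at hj ⊢
        exact hj.2
      have e2 : (Finset.univ.filter (fun j : Fin m => T 0 j < k+2)).filter
          (fun j => ¬ T 0 j = 1) = R1 := by
        rw [hR1]
        ext j
        simp only [Finset.mem_filter, Finset.mem_univ, true_and]
        have := (hbound 0 j).1
        constructor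
        · rintro ⟨h1, h2⟩; exact ⟨by omega, h1⟩
        · rintro ⟨h1, h2⟩; exact ⟨h2, by omega⟩
      have hle2 := Finset.card_le_card hsub2
      rw [← hsplit, e2] at hle2
      omega
    have claim2 : R2.card + R1.card ≤ k := by
      set I2 := R2.image (fun j => T 1 j) with hI2
      set I1 := R1.image (fun j => T 0 j) with hI1
      have c2 : I2.card = R2.card := Finset.card_image_of_injective _ hinj1
      have c1 : I1.card = R1.card := by
        apply Finset.card_image_of_injOn
        intro j hj j' hj' he
        by_contra hne
        rw [hR1] at hj
        simp only [Finset.mem_coe, Finset.mem_filter] at hj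
        exact noDup 0 j 0 j' (by simp [hne]) hj.2.1 he
      have hdisj : Disjoint I2 I1 := by
        rw [Finset.disjoint_left]
        intro v hv2' hv1'
        rw [hI2] at hv2'
        rw [hI1] at hv1'
        obtain ⟨j, hj, rfl⟩ := Finset.mem_image.1 hv2'
        obtain ⟨j', hj', he⟩ := Finset.mem_image.1 hv1'
        exact noDup 1 j 0 j' (by simp [Prod.ext_iff]) (hv2 j) he.symm
      have hsubI : I2 ∪ I1 ⊆ Finset.Icc 2 (k+1) := by
        intro v hv
        rcases Finset.mem_union.1 hv with h | h
        · rw [hI2] at h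
          obtain ⟨j, hj, rfl⟩ := Finset.mem_image.1 h
          rw [hR2, Finset.mem_filter] at hj
          have := hv2 j
          exact Finset.mem_Icc.2 ⟨by omega, by omega⟩
        · rw [hI1] at h
          obtain ⟨j, hj, rfl⟩ := Finset.mem_image.1 h
          rw [hR1, Finset.mem_filter] at hj
          exact Finset.mem_Icc.2 ⟨hj.2.1, by omega⟩
      have hcardI := Finset.card_le_card hsubI
      rw [Finset.card_union_of_disjoint hdisj, c1, c2, Nat.card_Icc] at hcardI
      omega
    rw [hcard2]
    omega
  have hmem : A ∈ ballotSet N m a := mem_ballotSet.2 ⟨hsub, hAc, hcondA⟩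
  refine ⟨hmem, ?_⟩
  set B := Finset.range N \ A with hB
  have hBc : B.card = m - a := by
    rw [hB, Finset.card_sdiff_of_subset hsub, Finset.card_range, hAc]; omega
  have hfeq : (fun j : Fin m => T 1 j - 2) = ⇑(A.orderEmbOfFin hAc) := by
    apply Finset.orderEmbOfFin_unique
    · intro j
      rw [hAdef]
      exact Finset.mem_image_of_mem _ (Finset.mem_univ j)
    · intro j j' hjj
      have hlt : T 1 j < T 1 j' := by
        rcases Nat.lt_or_ge (T 1 j) (T 1 j') with h | h
        · exact h
        · exfalso
          have hle : T 1 j' ≤ T 1 j := h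
          have hle2 : T 1 j ≤ T 1 j' := hmono 1 (le_of_lt hjj)
          exact noDup 1 j 1 j' (by simp [Fin.ne_of_lt hjj]) (hv2 j) (by omega)
      have := hv2 j
      simp only []
      omega
  have hrow1 : ∀ j : Fin m, T 1 j = A.orderEmbOfFin hAc j + 2 := by
    intro j
    have := congrFun hfeq j
    have := hv2 j
    omega
  have haj : ∀ j : Fin (m - a), a + (j : ℕ) < m := fun j => by have := j.2; omega
  set g : Fin (m - a) → ℕ := fun j => T 0 ⟨a + (j:ℕ), haj j⟩ - 2 with hg
  have hgmem : ∀ j, g j ∈ B := by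
    intro j
    have hgj : g j = T 0 ⟨a + (j:ℕ), haj j⟩ - 2 := rfl
    rw [hgj, hB]
    have h2 : 2 ≤ T 0 ⟨a + (j:ℕ), haj j⟩ := htail2 _ (by show a ≤ a + (j:ℕ); omega)
    have hb := (hbound 0 ⟨a + (j:ℕ), haj j⟩).2
    refine Finset.mem_sdiff.2 ⟨Finset.mem_range.2 (by omega), ?_⟩
    intro hmemA
    rw [hAdef] at hmemA
    obtain ⟨j', -, he⟩ := Finset.mem_image.1 hmemA
    have := hv2 j'
    have heq : T 1 j' = T 0 ⟨a + (j:ℕ), haj j⟩ := by omega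
    exact noDup 1 j' 0 ⟨a + (j:ℕ), haj j⟩ (by simp [Prod.ext_iff]) (hv2 j') heq
  have hgsm : StrictMono g := by
    intro j j' hjj
    rw [hg]
    have hvlt : (⟨a + (j:ℕ), haj j⟩ : Fin m) < ⟨a + (j':ℕ), haj j'⟩ := by
      rw [Fin.lt_def]
      have := Fin.lt_def.1 hjj
      show a + (j:ℕ) < a + (j':ℕ)
      omega
    have hle : T 0 ⟨a + (j:ℕ), haj j⟩ ≤ T 0 ⟨a + (j':ℕ), haj j'⟩ := hmono 0 (le_of_lt hvlt)
    have h2 : 2 ≤ T 0 ⟨a + (j:ℕ), haj j⟩ := htail2 _ (by show a ≤ a + (j:ℕ); omega)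
    have hne : T 0 ⟨a + (j:ℕ), haj j⟩ ≠ T 0 ⟨a + (j':ℕ), haj j'⟩ := by
      intro he
      apply noDup 0 ⟨a + (j:ℕ), haj j⟩ 0 ⟨a + (j':ℕ), haj j'⟩ ?_ h2 he
      intro hcon
      have hcon2 := congrArg (fun p : Fin 2 × Fin m => (p.2 : ℕ)) hcon
      have hcon3 : a + (j:ℕ) = a + (j':ℕ) := hcon2
      have := Fin.lt_def.1 hjj
      omega
    simp only []
    omega
  have hgeq : g = ⇑(B.orderEmbOfFin hBc) := Finset.orderEmbOfFin_unique hBc hgmem hgsm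
  have heq1 : ∀ j : Fin m, T 1 j = tabOf a A B 1 (j:ℕ) := by
    intro j
    rw [tabOf, if_pos rfl, getD_sort_eq hAc j.2, hrow1 j]
  have heq0 : ∀ j : Fin m, T 0 j = tabOf a A B 0 (j:ℕ) := by
    intro j
    rw [tabOf, if_neg (by omega)]
    rcases Nat.lt_or_ge (j:ℕ) a with hja | hja
    · rw [if_pos hja]
      exact (ones_iff j).2 hja
    · rw [if_neg (by omega)]
      have hja' : (j:ℕ) - a < m - a := by have := j.2; omega
      rw [getD_sort_eq hBc hja']
      have hgj := congrFun hgeq ⟨(j:ℕ) - a, hja'⟩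
      rw [hg] at hgj
      simp only [] at hgj
      have hfin : (⟨a + ((j:ℕ) - a), haj ⟨(j:ℕ) - a, hja'⟩⟩ : Fin m) = j := by
        apply Fin.ext
        show a + ((j:ℕ) - a) = (j:ℕ)
        omega
      rw [hfin] at hgj
      have h2 := htail2 j hja
      omega
  funext i j
  fin_cases i
  · exact heq0 j
  · exact heq1 j

lemma tableau_card (m a : ℕ) (ha : 1 ≤ a) (ham : a ≤ m) :
    Nat.card {T : Fin 2 → Fin m → ℕ //
      (∀ i, Monotone (T i)) ∧ (∀ j, T 0 j < T 1 j) ∧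
      entryCount T 1 = a ∧ (∀ k, 2 ≤ k → k ≤ 2*m+1-a → entryCount T k = 1) ∧
      (∀ i j, 1 ≤ T i j ∧ T i j ≤ 2*m+1-a)}
    = (ballotSet (2*m-a) m a).card := by
  classical
  have e : {T : Fin 2 → Fin m → ℕ //
      (∀ i, Monotone (T i)) ∧ (∀ j, T 0 j < T 1 j) ∧
      entryCount T 1 = a ∧ (∀ k, 2 ≤ k → k ≤ 2*m+1-a → entryCount T k = 1) ∧
      (∀ i j, 1 ≤ T i j ∧ T i j ≤ 2*m+1-a)}
      ≃ {A // A ∈ ballotSet (2*m-a) m a} :=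
  { toFun := fun T => ⟨Finset.univ.image fun j : Fin m => T.1 1 j - 2,
      (tab_recover ha ham T.1 T.2).1⟩
    invFun := fun A => ⟨fun i j => tabOf a A.1 (Finset.range (2*m-a) \ A.1) i.val j.val,
      (tabOf_spec ha ham A.2 _ rfl).1⟩
    left_inv := fun T => by
      apply Subtype.ext
      exact ((tab_recover ha ham T.1 T.2).2).symm
    right_inv := fun A => by
      apply Subtype.ext
      exact (tabOf_spec ha ham A.2 _ rfl).2 }
  rw [Nat.card_congr e, Nat.card_eq_fintype_card, Fintype.card_coe]

/-- For `1 ≤ a ≤ d - 1`, the number of semistandard Young tableaux of shape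
`2 × (d-1)` with content `(a, 1, 1, …, 1)` (the entry `1` appears `a` times, each entry
`k` with `2 ≤ k ≤ 2d-1-a` appears exactly once) equals `((a+1)/d) * choose (2d-2-a) (d-1)`. -/
theorem card_ssyt_content_a_ones (d a : ℕ) (ha : 1 ≤ a) (had : a ≤ d - 1) :
    d * Nat.card {T : Fin 2 → Fin (d - 1) → ℕ //
      (∀ i, Monotone (T i)) ∧
      (∀ j, T 0 j < T 1 j) ∧
      entryCount T 1 = a ∧
      (∀ k, 2 ≤ k → k ≤ 2 * d - 1 - a → entryCount T k = 1) ∧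
      (∀ i j, 1 ≤ T i j ∧ T i j ≤ 2 * d - 1 - a)}
    = (a + 1) * Nat.choose (2 * d - 2 - a) (d - 1) := by
  have hd : 1 ≤ d := by omega
  obtain ⟨m, rfl⟩ : ∃ m, d = m + 1 := ⟨d - 1, by omega⟩
  have ham : a ≤ m := by omega
  simp only [show m + 1 - 1 = m from rfl,
    show 2 * (m+1) - 1 - a = 2*m+1-a from by omega,
    show 2 * (m+1) - 2 - a = 2*m-a from by omega]
  show (m + 1) * Nat.card {T : Fin 2 → Fin m → ℕ //
      (∀ i, Monotone (T i)) ∧ (∀ j, T 0 j < T 1 j) ∧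
      entryCount T 1 = a ∧ (∀ k, 2 ≤ k → k ≤ 2*m+1-a → entryCount T k = 1) ∧
      (∀ i j, 1 ≤ T i j ∧ T i j ≤ 2*m+1-a)}
    = (a + 1) * Nat.choose (2*m-a) m
  rw [tableau_card m a ha ham]
  have hb := ballotSet_card (n := 2*m-a) m a (by omega) (by omega)
  rw [show 2*m-a - m + a + 1 = m+1 from by omega] at hb
  have hch := Nat.choose_succ_right_eq (2*m-a) m
  rw [show 2*m-a - m = m-a from by omega] at hch
  have e1 : (m+1) * ((ballotSet (2*m-a) m a).card) + (m+1) * ((2*m-a).choose (m+1))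
      = (m+1) * ((2*m-a).choose m) := by rw [← Nat.mul_add, hb]
  have e2 : (m+1) * ((2*m-a).choose (m+1)) = (m-a) * ((2*m-a).choose m) := by
    rw [Nat.mul_comm, hch, Nat.mul_comm]
  have e3 : (m+1) * ((2*m-a).choose m)
      = (a+1) * ((2*m-a).choose m) + (m-a) * ((2*m-a).choose m) := by
    rw [← Nat.add_mul]
    congr 1
    omega
  omega
end

section
/- Let A_1, ..., A_q be pairwise disjoint finite subsets of the real line such that max A_i < min A_j whenever i < j, with |A_j| = a_j + 1 and sum of a_j equal to 2d-2. Then the number of perfect matchings of the multiset of 'slots' — where interval j contributes a_j slots — realized as non-crossing chord diagrams on 2d-2 linearly ordered points (a_j consecutive points for each j) with no chord joining two points of the same group j, equals the Kostka number K_{(a_1,...,a_q)} of shape 2×(d-1). -/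
/-- A fixed-point-free involution `f` of `Fin N` (a perfect matching, pairing `i` with `f i`)
is *non-crossing* if there are no two pairs `{a, f a}`, `{c, f c}` with `a < c < f a < f c`. -/
def NoncrossingMatching {N : ℕ} (f : Fin N → Fin N) : Prop :=
  Function.Involutive f ∧ (∀ i, f i ≠ i) ∧
    ¬∃ a c : Fin N, a < c ∧ c < f a ∧ f a < f c

namespace NCMaux
open Finset

variable {N : ℕ}

/-- prefix height: #openers − #closers among the first `k` points -/
def hgt (ω : Fin N → Bool) (k : ℕ) : ℤ :=
  ((univ.filter fun i : Fin N => i.val < k ∧ ω i = true).card : ℤ)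
  - ((univ.filter fun i : Fin N => i.val < k ∧ ω i = false).card : ℤ)

lemma hgt_zero (ω : Fin N → Bool) : hgt ω 0 = 0 := by simp [hgt]

/-- number of points with value `b` in `[a, c)` -/
def cntIn (ω : Fin N → Bool) (b : Bool) (a c : ℕ) : ℕ :=
  (univ.filter fun i : Fin N => a ≤ i.val ∧ i.val < c ∧ ω i = b).card

lemma filter_split (ω : Fin N → Bool) (b : Bool) (a c : ℕ) (hac : a ≤ c) :
    (univ.filter fun i : Fin N => i.val < c ∧ ω i = b).card
      = (univ.filter fun i : Fin N => i.val < a ∧ ω i = b).card + cntIn ω b a c := by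
  rw [cntIn, ← card_union_of_disjoint]
  · congr 1
    ext i
    simp only [mem_union, mem_filter, mem_univ, true_and]
    constructor
    · rintro ⟨h1, h2⟩
      rcases lt_or_ge i.val a with h | h
      · exact Or.inl ⟨h, h2⟩
      · exact Or.inr ⟨h, h1, h2⟩
    · rintro (⟨h1, h2⟩ | ⟨h1, h2, h3⟩)
      · exact ⟨lt_of_lt_of_le h1 hac, h2⟩
      · exact ⟨h2, h3⟩
  · rw [disjoint_left]
    intro i hi hi'
    simp only [mem_filter] at hi hi'
    omega

lemma hgt_sub (ω : Fin N → Bool) {a c : ℕ} (hac : a ≤ c) :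
    hgt ω c = hgt ω a + ((cntIn ω true a c : ℤ) - (cntIn ω false a c : ℤ)) := by
  unfold hgt
  rw [filter_split ω true a c hac, filter_split ω false a c hac]
  push_cast
  ring

lemma cntIn_single (ω : Fin N → Bool) {k : ℕ} (hk : k < N) (b : Bool) :
    cntIn ω b k (k + 1) = if ω ⟨k, hk⟩ = b then 1 else 0 := by
  unfold cntIn
  by_cases h : ω ⟨k, hk⟩ = b
  · rw [if_pos h, Finset.card_eq_one]
    refine ⟨⟨k, hk⟩, ?_⟩
    ext i
    simp only [mem_filter, mem_univ, true_and, mem_singleton]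
    constructor
    · rintro ⟨h1, h2, h3⟩
      exact Fin.ext (show i.val = k by omega)
    · rintro rfl
      exact ⟨le_refl _, Nat.lt_succ_self k, h⟩
  · rw [if_neg h, card_eq_zero]
    rw [Finset.eq_empty_iff_forall_notMem]
    intro i hi
    simp only [mem_filter, mem_univ, true_and] at hi
    obtain ⟨h1, h2, h3⟩ := hi
    have : i = ⟨k, hk⟩ := Fin.ext (show i.val = k by omega)
    exact h (this ▸ h3)

lemma hgt_succ_true (ω : Fin N → Bool) {k : ℕ} (hk : k < N) (h : ω ⟨k, hk⟩ = true) :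
    hgt ω (k + 1) = hgt ω k + 1 := by
  rw [hgt_sub ω (Nat.le_succ k), cntIn_single ω hk, cntIn_single ω hk]
  rw [if_pos h, if_neg (by simp [h])]
  push_cast; ring

lemma hgt_succ_false (ω : Fin N → Bool) {k : ℕ} (hk : k < N) (h : ω ⟨k, hk⟩ = false) :
    hgt ω (k + 1) = hgt ω k - 1 := by
  rw [hgt_sub ω (Nat.le_succ k), cntIn_single ω hk, cntIn_single ω hk]
  rw [if_neg (by simp [h]), if_pos h]
  push_cast; ring

lemma hgt_stable (ω : Fin N → Bool) {k : ℕ} (h : N ≤ k) : hgt ω k = hgt ω N := by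
  have e : ∀ b, (univ.filter fun i : Fin N => i.val < k ∧ ω i = b)
      = (univ.filter fun i : Fin N => i.val < N ∧ ω i = b) := by
    intro b
    ext i
    simp only [mem_filter, mem_univ, true_and]
    have hi := i.isLt
    constructor
    · rintro ⟨h1, h2⟩; exact ⟨hi, h2⟩
    · rintro ⟨h1, h2⟩; exact ⟨lt_of_lt_of_le hi h, h2⟩
  unfold hgt
  rw [e true, e false]

lemma hgt_step_up (ω : Fin N → Bool) (k : ℕ) : hgt ω (k + 1) ≤ hgt ω k + 1 := by
  rcases lt_or_ge k N with hk | hk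
  · cases h : ω ⟨k, hk⟩
    · rw [hgt_succ_false ω hk h]; omega
    · rw [hgt_succ_true ω hk h]
  · rw [hgt_stable ω hk, hgt_stable ω (le_trans hk (Nat.le_succ k))]; omega

lemma hgt_step_down (ω : Fin N → Bool) (k : ℕ) : hgt ω k - 1 ≤ hgt ω (k + 1) := by
  rcases lt_or_ge k N with hk | hk
  · cases h : ω ⟨k, hk⟩
    · rw [hgt_succ_false ω hk h]
    · rw [hgt_succ_true ω hk h]; omega
  · rw [hgt_stable ω hk, hgt_stable ω (le_trans hk (Nat.le_succ k))]; omega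

lemma ivt_up (f : ℕ → ℤ) (hstep : ∀ k, f (k + 1) ≤ f k + 1) (a b : ℕ) (hab : a ≤ b) :
    ∀ v : ℤ, f a ≤ v → v ≤ f b → ∃ k, a ≤ k ∧ k ≤ b ∧ f k = v := by
  induction b, hab using Nat.le_induction with
  | base => exact fun v h1 h2 => ⟨a, le_refl a, le_refl a, le_antisymm h1 h2⟩
  | succ b hb ih =>
    intro v h1 h2
    by_cases hv : v ≤ f b
    · obtain ⟨k, hk1, hk2, hk3⟩ := ih v h1 hv
      exact ⟨k, hk1, le_trans hk2 (Nat.le_succ b), hk3⟩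
    · have h3 := hstep b
      refine ⟨b + 1, by omega, le_refl _, by omega⟩

lemma ivt_down (f : ℕ → ℤ) (hstep : ∀ k, f k - 1 ≤ f (k + 1)) (a b : ℕ) (hab : a ≤ b)
    (v : ℤ) (h1 : v ≤ f a) (h2 : f b ≤ v) : ∃ k, a ≤ k ∧ k ≤ b ∧ f k = v := by
  obtain ⟨k, hk1, hk2, hk3⟩ := ivt_up (fun k => -f k)
    (fun k => by have := hstep k; show -f (k + 1) ≤ -f k + 1; omega) a b hab (-v)
    (by simpa using h1) (by simpa using h2)
  have h4 : -f k = -v := hk3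
  exact ⟨k, hk1, hk2, by omega⟩


def natMax (s : Finset ℕ) : ℕ := s.max.getD 0

lemma natMax_eq {s : Finset ℕ} (hs : s.Nonempty) : natMax s = s.max' hs := by
  unfold natMax
  rw [← coe_max' hs]
  rfl

lemma natMax_mem {s : Finset ℕ} (hs : s.Nonempty) : natMax s ∈ s := by
  rw [natMax_eq hs]; exact s.max'_mem hs

lemma le_natMax {s : Finset ℕ} {x : ℕ} (hx : x ∈ s) : x ≤ natMax s := by
  rw [natMax_eq ⟨x, hx⟩]; exact s.le_max' x hx

/-- partner of a closer at position `c` -/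
def fcN (ω : Fin N → Bool) (c : ℕ) : ℕ :=
  natMax ((Finset.range c).filter fun k => hgt ω k = hgt ω c - 1)

/-- partner of an opener at position `o` -/
noncomputable def foN (ω : Fin N → Bool) (o : ℕ) : ℕ :=
  sInf {k | o < k ∧ k < N ∧ hgt ω (k + 1) = hgt ω o}

section Construct

variable (ω : Fin N → Bool)
variable (hb1 : ∀ k, 0 ≤ hgt ω k) (hb2 : hgt ω N = 0)

include hb1 in
lemma closer_analysis {c : ℕ} (hc : c < N) (hωc : ω ⟨c, hc⟩ = false) :
    fcN ω c < c ∧ hgt ω (fcN ω c) = hgt ω c - 1 ∧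
      (∀ j, fcN ω c < j → j ≤ c → hgt ω c ≤ hgt ω j) ∧
      ∃ ho : fcN ω c < N, ω ⟨fcN ω c, ho⟩ = true := by
  have hc1 : 1 ≤ hgt ω c := by
    have h1 := hgt_succ_false ω hc hωc
    have h2 := hb1 (c + 1)
    omega
  set S := (Finset.range c).filter fun k => hgt ω k = hgt ω c - 1 with hS
  have hSne : S.Nonempty := by
    obtain ⟨k, hk1, hk2, hk3⟩ := ivt_up (hgt ω) (hgt_step_up ω) 0 c (Nat.zero_le c)
      (hgt ω c - 1) (by rw [hgt_zero]; omega) (by omega)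
    have : k ≠ c := by intro h; rw [h] at hk3; omega
    exact ⟨k, by simp only [hS, mem_filter, mem_range]; exact ⟨by omega, hk3⟩⟩
  set o := natMax S with ho
  have hoS : o ∈ S := natMax_mem hSne
  have hoc : o < c := by
    have := hoS; simp only [hS, mem_filter, mem_range] at this; exact this.1
  have hoh : hgt ω o = hgt ω c - 1 := by
    have := hoS; simp only [hS, mem_filter, mem_range] at this; exact this.2
  have key : ∀ j, o < j → j ≤ c → hgt ω c ≤ hgt ω j := by
    intro j hj1 hj2
    by_contra hcon
    push_neg at hcon
    obtain ⟨k, hk1, hk2, hk3⟩ := ivt_up (hgt ω) (hgt_step_up ω) j c hj2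
      (hgt ω c - 1) (by omega) (by omega)
    have hkc : k ≠ c := by intro h; rw [h] at hk3; omega
    have : k ∈ S := by simp only [hS, mem_filter, mem_range]; exact ⟨by omega, hk3⟩
    have := le_natMax this
    omega
  refine ⟨hoc, hoh, key, lt_trans hoc hc, ?_⟩
  by_contra hcon
  have hoN : o < N := lt_trans hoc hc
  rw [Bool.not_eq_true] at hcon
  have h1 := hgt_succ_false ω hoN hcon
  have h2 := key (o + 1) (Nat.lt_succ_self o) (by omega)
  omega

include hb1 hb2 in
lemma opener_analysis {o : ℕ} (ho : o < N) (hωo : ω ⟨o, ho⟩ = true) :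
    o < foN ω o ∧ foN ω o < N ∧ hgt ω (foN ω o) = hgt ω o + 1 ∧
      hgt ω (foN ω o + 1) = hgt ω o ∧
      (∀ j, o < j → j ≤ foN ω o → hgt ω o + 1 ≤ hgt ω j) ∧
      ∃ hcN : foN ω o < N, ω ⟨foN ω o, hcN⟩ = false := by
  have hsucc : hgt ω (o + 1) = hgt ω o + 1 := hgt_succ_true ω ho hωo
  set T := {k | o < k ∧ k < N ∧ hgt ω (k + 1) = hgt ω o} with hT
  have hTne : T.Nonempty := by
    have hoN1 : o + 1 < N := by
      rcases Nat.lt_or_ge (o + 1) N with h | h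
      · exact h
      · exfalso
        have := hgt_stable ω h
        have := hb1 o
        omega
    obtain ⟨k, hk1, hk2, hk3⟩ := ivt_down (hgt ω) (hgt_step_down ω) (o + 1) N
      (by omega) (hgt ω o) (by omega) (by have := hb1 o; omega)
    have hko : k ≠ o + 1 := by intro h; rw [h] at hk3; omega
    refine ⟨k - 1, ?_, ?_, ?_⟩
    · omega
    · omega
    · have : k - 1 + 1 = k := by omega
      rw [this]; exact hk3
  set c := sInf T with hcdef
  have hcT : c ∈ T := Nat.sInf_mem hTne
  obtain ⟨hc1, hc2, hc3⟩ := hcT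
  have key : ∀ j, o < j → j ≤ c → hgt ω o + 1 ≤ hgt ω j := by
    intro j hj1 hj2
    by_contra hcon
    push_neg at hcon
    have hj1' : o + 1 ≤ j := hj1
    obtain ⟨k, hk1, hk2, hk3⟩ := ivt_down (hgt ω) (hgt_step_down ω) (o + 1) j hj1'
      (hgt ω o) (by omega) (by omega)
    have hko : k ≠ o + 1 := by intro h; rw [h] at hk3; omega
    have hmem : k - 1 ∈ T := by
      refine ⟨by omega, by omega, ?_⟩
      have : k - 1 + 1 = k := by omega
      rw [this]; exact hk3
    have := Nat.sInf_le hmem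
    omega
  have hchgt : hgt ω c = hgt ω o + 1 := by
    have h1 := key c hc1 (le_refl c)
    have h2 := hgt_step_down ω c
    omega
  have hωc : ω ⟨c, hc2⟩ = false := by
    cases h : ω ⟨c, hc2⟩
    · rfl
    · exfalso
      have := hgt_succ_true ω hc2 h
      omega
  exact ⟨hc1, hc2, hchgt, hc3, key, hc2, hωc⟩

include hb1 hb2 in
lemma fc_fo (o : ℕ) (ho : o < N) (hωo : ω ⟨o, ho⟩ = true) : fcN ω (foN ω o) = o := by
  obtain ⟨h1, h2, h3, h4, h5, _⟩ := opener_analysis ω hb1 hb2 ho hωo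
  set c := foN ω o
  set S := (Finset.range c).filter fun k => hgt ω k = hgt ω c - 1 with hS
  have hoS : o ∈ S := by
    simp only [hS, mem_filter, mem_range]
    exact ⟨h1, by omega⟩
  have hmax : ∀ x ∈ S, x ≤ o := by
    intro x hx
    simp only [hS, mem_filter, mem_range] at hx
    by_contra hcon
    push_neg at hcon
    have := h5 x hcon (le_of_lt hx.1)
    omega
  have h6 := le_natMax hoS
  have h7 := hmax _ (natMax_mem ⟨o, hoS⟩)
  exact le_antisymm h7 h6

include hb1 in
lemma fo_fc (c : ℕ) (hc : c < N) (hωc : ω ⟨c, hc⟩ = false) : foN ω (fcN ω c) = c := by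
  obtain ⟨h1, h2, h3, hoN, hωo⟩ := closer_analysis ω hb1 hc hωc
  set o := fcN ω c
  have hcT : c ∈ {k | o < k ∧ k < N ∧ hgt ω (k + 1) = hgt ω o} := by
    refine ⟨h1, hc, ?_⟩
    have := hgt_succ_false ω hc hωc
    omega
  have hlb : ∀ k ∈ {k | o < k ∧ k < N ∧ hgt ω (k + 1) = hgt ω o}, c ≤ k := by
    rintro k ⟨hk1, hk2, hk3⟩
    by_contra hcon
    push_neg at hcon
    have := h3 (k + 1) (by omega) (by omega)
    omega
  have h := le_antisymm (Nat.sInf_le hcT) (hlb _ (Nat.sInf_mem ⟨c, hcT⟩))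
  exact h

end Construct

/-- the canonical noncrossing matching attached to a word `ω` -/
noncomputable def F (ω : Fin N → Bool) : Fin N → Fin N := fun i =>
  if ω i = true then ⟨foN ω i % N, Nat.mod_lt _ (lt_of_le_of_lt (Nat.zero_le _) i.isLt)⟩
  else ⟨fcN ω i % N, Nat.mod_lt _ (lt_of_le_of_lt (Nat.zero_le _) i.isLt)⟩

section FProps

variable (ω : Fin N → Bool)
variable (hb1 : ∀ k, 0 ≤ hgt ω k) (hb2 : hgt ω N = 0)

include hb1 hb2 in
lemma F_opener {i : Fin N} (h : ω i = true) :
    (F ω i).val = foN ω i.val ∧ i < F ω i ∧ ω (F ω i) = false := by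
  obtain ⟨h1, h2, _, _, _, hc, hωc⟩ :=
    opener_analysis ω hb1 hb2 i.isLt (by rwa [show (⟨i.val, i.isLt⟩ : Fin N) = i from rfl])
  have hv : (F ω i).val = foN ω i.val := by
    simp only [F, if_pos h]
    exact Nat.mod_eq_of_lt h2
  refine ⟨hv, ?_, ?_⟩
  · rw [Fin.lt_def, hv]; exact h1
  · have : F ω i = ⟨foN ω i.val, hc⟩ := Fin.ext hv
    rw [this]; exact hωc

include hb1 in
lemma F_closer {i : Fin N} (h : ω i = false) :
    (F ω i).val = fcN ω i.val ∧ F ω i < i ∧ ω (F ω i) = true := by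
  obtain ⟨h1, h2, _, ho, hωo⟩ :=
    closer_analysis ω hb1 i.isLt (by rwa [show (⟨i.val, i.isLt⟩ : Fin N) = i from rfl])
  have hv : (F ω i).val = fcN ω i.val := by
    simp only [F, h]
    simp only [Bool.false_eq_true, if_false]
    exact Nat.mod_eq_of_lt ho
  refine ⟨hv, ?_, ?_⟩
  · rw [Fin.lt_def, hv]; exact h1
  · have : F ω i = ⟨fcN ω i.val, ho⟩ := Fin.ext hv
    rw [this]; exact hωo

include hb1 hb2 in
lemma F_invol : Function.Involutive (F ω) := by
  intro i
  cases h : ω i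
  · obtain ⟨hv, hlt, hω⟩ := F_closer ω hb1 h
    obtain ⟨hv2, _, _⟩ := F_opener ω hb1 hb2 hω
    apply Fin.ext
    rw [hv2, hv]
    exact fo_fc ω hb1 i.val i.isLt (by rwa [show (⟨i.val, i.isLt⟩ : Fin N) = i from rfl])
  · obtain ⟨hv, hlt, hω⟩ := F_opener ω hb1 hb2 h
    obtain ⟨hv2, _, _⟩ := F_closer ω hb1 hω
    apply Fin.ext
    rw [hv2, hv]
    exact fc_fo ω hb1 hb2 i.val i.isLt (by rwa [show (⟨i.val, i.isLt⟩ : Fin N) = i from rfl])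

include hb1 hb2 in
lemma F_ne : ∀ i, F ω i ≠ i := by
  intro i
  cases h : ω i
  · exact ne_of_lt (F_closer ω hb1 h).2.1
  · exact ne_of_gt (F_opener ω hb1 hb2 h).2.1

include hb1 hb2 in
lemma F_noncross : ¬∃ x y : Fin N, x < y ∧ y < F ω x ∧ F ω x < F ω y := by
  rintro ⟨x, y, h1, h2, h3⟩
  have hωx : ω x = true := by
    cases h : ω x
    · exfalso
      have := (F_closer ω hb1 h).2.1
      exact absurd h1 (not_lt.mpr (le_of_lt (lt_trans h2 this)))
    · rfl
  have hωy : ω y = true := by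
    cases h : ω y
    · exfalso
      have := (F_closer ω hb1 h).2.1
      exact absurd h2 (not_lt.mpr (le_of_lt (lt_trans h3 this)))
    · rfl
  obtain ⟨hvx, _, _⟩ := F_opener ω hb1 hb2 hωx
  obtain ⟨hvy, _, _⟩ := F_opener ω hb1 hb2 hωy
  obtain ⟨_, _, hx3, _, hx5, _⟩ := opener_analysis ω hb1 hb2 x.isLt
    (by rwa [show (⟨x.val, x.isLt⟩ : Fin N) = x from rfl])
  obtain ⟨_, _, _, _, hy5, _⟩ := opener_analysis ω hb1 hb2 y.isLt
    (by rwa [show (⟨y.val, y.isLt⟩ : Fin N) = y from rfl])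
  rw [Fin.lt_def, hvx] at h2
  rw [Fin.lt_def, hvx, hvy] at h3
  rw [Fin.lt_def] at h1
  have e1 : hgt ω (foN ω x.val) = hgt ω x.val + 1 := hx3
  have e2 : hgt ω y.val ≥ hgt ω x.val + 1 := hx5 y.val h1 (le_of_lt h2)
  have e3 : hgt ω (foN ω x.val) ≥ hgt ω y.val + 1 := hy5 (foN ω x.val) h2 (le_of_lt h3)
  omega

end FProps


section Unique

variable (f : Fin N → Fin N)

/-- the opener/closer word of a matching -/
def wd : Fin N → Bool := fun i => decide (i < f i)

lemma wd_true {i : Fin N} : wd f i = true ↔ i < f i := by simp [wd]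

variable (hf : Function.Involutive f) (hfpf : ∀ i, f i ≠ i)
    (hnc : ¬∃ a c : Fin N, a < c ∧ c < f a ∧ f a < f c)

include hfpf in
lemma wd_false {i : Fin N} : wd f i = false ↔ f i < i := by
  simp only [wd, decide_eq_false_iff_not, not_lt]
  exact ⟨fun h => lt_of_le_of_ne h (hfpf i), le_of_lt⟩

include hf hnc in
lemma U_closed {c x : Fin N} (hc : f c < c) (h1 : f c < x) (h2 : x < c) :
    f c < f x ∧ f x < c := by
  constructor
  · by_contra hcon
    push_neg at hcon
    have hne : f x ≠ f c := by
      intro h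
      exact absurd (hf.injective h) (ne_of_lt h2)
    have hlt : f x < f c := lt_of_le_of_ne hcon hne
    exact hnc ⟨f x, f c, hlt, by rw [hf x]; exact h1, by rw [hf x, hf c]; exact h2⟩
  · by_contra hcon
    push_neg at hcon
    have hne : f x ≠ c := by
      intro h
      have : x = f c := by rw [← hf c] at h; exact hf.injective h
      rw [this] at h1
      exact absurd h1 (lt_irrefl _)
    have hlt : c < f x := lt_of_le_of_ne hcon (Ne.symm hne)
    exact hnc ⟨f c, x, h1, by rw [hf c]; exact h2, by rw [hf c]; exact hlt⟩

include hf hnc hfpf in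
lemma U_ge {c : Fin N} (hc : f c < c) :
    ∀ j, (f c).val < j → j ≤ c.val → hgt (wd f) (f c).val + 1 ≤ hgt (wd f) j := by
  intro j hj1 hj2
  have hsub := hgt_sub (wd f) (show (f c).val + 1 ≤ j by omega)
  have hstep : hgt (wd f) ((f c).val + 1) = hgt (wd f) (f c).val + 1 := by
    apply hgt_succ_true (wd f) (f c).isLt
    have : (⟨(f c).val, (f c).isLt⟩ : Fin N) = f c := rfl
    rw [this, wd_true, hf c]
    exact hc
  have hcard : cntIn (wd f) false ((f c).val + 1) j ≤ cntIn (wd f) true ((f c).val + 1) j := by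
    apply card_le_card_of_injOn f
    · intro x hx
      simp only [Finset.mem_coe, mem_filter, mem_univ, true_and] at hx ⊢
      obtain ⟨hx1, hx2, hx3⟩ := hx
      have hfx : f x < x := (wd_false f hfpf).mp hx3
      have hoc : f c < x := by rw [Fin.lt_def]; omega
      have hxc : x < c := by rw [Fin.lt_def]; omega
      obtain ⟨hcl1, hcl2⟩ := U_closed f hf hnc hc hoc hxc
      refine ⟨by rw [Fin.lt_def] at hcl1; omega, by rw [Fin.lt_def] at hfx; omega, ?_⟩
      rw [wd_true, hf x]
      exact hfx
    · exact Set.injOn_of_injective hf.injective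
  omega

include hf hnc hfpf in
lemma U_le {c : Fin N} (hc : f c < c) :
    hgt (wd f) c.val ≤ hgt (wd f) (f c).val + 1 := by
  have hle : (f c).val + 1 ≤ c.val := by rw [Fin.lt_def] at hc; omega
  have hsub := hgt_sub (wd f) hle
  have hstep : hgt (wd f) ((f c).val + 1) = hgt (wd f) (f c).val + 1 := by
    apply hgt_succ_true (wd f) (f c).isLt
    have : (⟨(f c).val, (f c).isLt⟩ : Fin N) = f c := rfl
    rw [this, wd_true, hf c]
    exact hc
  have hcard : cntIn (wd f) true ((f c).val + 1) c.val ≤ cntIn (wd f) false ((f c).val + 1) c.val := by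
    apply card_le_card_of_injOn f
    · intro x hx
      simp only [Finset.mem_coe, mem_filter, mem_univ, true_and] at hx ⊢
      obtain ⟨hx1, hx2, hx3⟩ := hx
      have hfx : x < f x := (wd_true f).mp hx3
      have hoc : f c < x := by rw [Fin.lt_def]; omega
      have hxc : x < c := by rw [Fin.lt_def]; omega
      obtain ⟨hcl1, hcl2⟩ := U_closed f hf hnc hc hoc hxc
      refine ⟨by rw [Fin.lt_def] at hfx hoc; omega, by rw [Fin.lt_def] at hcl2; omega, ?_⟩
      rw [wd_false f hfpf, hf x]
      exact hfx
    · exact Set.injOn_of_injective hf.injective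
  omega

include hf hfpf in
lemma U_W1 : ∀ k, 0 ≤ hgt (wd f) k := by
  intro k
  have hsub := hgt_sub (wd f) (Nat.zero_le k)
  rw [hgt_zero] at hsub
  have hcard : cntIn (wd f) false 0 k ≤ cntIn (wd f) true 0 k := by
    apply card_le_card_of_injOn f
    · intro x hx
      simp only [Finset.mem_coe, mem_filter, mem_univ, true_and] at hx ⊢
      obtain ⟨hx1, hx2, hx3⟩ := hx
      have hfx : f x < x := (wd_false f hfpf).mp hx3
      rw [Fin.lt_def] at hfx
      refine ⟨Nat.zero_le _, by omega, ?_⟩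
      rw [wd_true, hf x]
      rw [Fin.lt_def]
      omega
    · exact Set.injOn_of_injective hf.injective
  omega

include hf hfpf in
lemma U_W2 : hgt (wd f) N = 0 := by
  have hsub := hgt_sub (wd f) (Nat.zero_le N)
  rw [hgt_zero] at hsub
  have hcard : cntIn (wd f) true 0 N ≤ cntIn (wd f) false 0 N := by
    apply card_le_card_of_injOn f
    · intro x hx
      simp only [Finset.mem_coe, mem_filter, mem_univ, true_and] at hx ⊢
      obtain ⟨hx1, hx2, hx3⟩ := hx
      have hfx : x < f x := (wd_true f).mp hx3
      refine ⟨Nat.zero_le _, (f x).isLt, ?_⟩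
      rw [wd_false f hfpf, hf x]
      exact hfx
    · exact Set.injOn_of_injective hf.injective
  have := U_W1 f hf hfpf N
  omega

include hf hfpf hnc in
lemma U_main : ∀ i, F (wd f) i = f i := by
  have hb1 := U_W1 f hf hfpf
  have hb2 := U_W2 f hf hfpf
  have hclos : ∀ i : Fin N, wd f i = false → F (wd f) i = f i := by
    intro i hw
    have hfi : f i < i := (wd_false f hfpf).mp hw
    obtain ⟨hv, _, _⟩ := F_closer (wd f) hb1 hw
    apply Fin.ext
    rw [hv]
    have hgeq : hgt (wd f) (f i).val = hgt (wd f) i.val - 1 := by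
      have h1 := U_ge f hf hfpf hnc hfi i.val (by rw [Fin.lt_def] at hfi; omega) (le_refl _)
      have h2 := U_le f hf hfpf hnc hfi
      omega
    set S := (Finset.range i.val).filter fun k => hgt (wd f) k = hgt (wd f) i.val - 1 with hS
    have hmem : (f i).val ∈ S := by
      simp only [hS, mem_filter, mem_range]
      exact ⟨by rw [Fin.lt_def] at hfi; omega, hgeq⟩
    have hub : ∀ x ∈ S, x ≤ (f i).val := by
      intro x hx
      simp only [hS, mem_filter, mem_range] at hx
      by_contra hcon
      push_neg at hcon
      have := U_ge f hf hfpf hnc hfi x hcon (le_of_lt hx.1)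
      omega
    have h6 := le_natMax hmem
    have h7 := hub _ (natMax_mem ⟨_, hmem⟩)
    show natMax S = (f i).val
    omega
  intro i
  cases hw : wd f i
  · exact hclos i hw
  · have hfi : i < f i := (wd_true f).mp hw
    have hwc : wd f (f i) = false := by
      rw [wd_false f hfpf, hf i]
      exact hfi
    have h1 : F (wd f) (f i) = i := by rw [hclos (f i) hwc, hf i]
    have h2 := F_invol (wd f) hb1 hb2 (f i)
    rw [h1] at h2
    exact h2.trans (rfl)

end Unique


lemma card_filter_val_lt (n t : ℕ) :
    ((univ : Finset (Fin n)).filter fun j => j.val < t).card = min t n := by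
  rw [← Finset.card_range (min t n)]
  apply card_nbij (fun j => j.val)
  · intro j hj
    simp only [Finset.mem_coe, mem_filter, mem_univ, true_and] at hj
    simp only [Finset.mem_coe, Finset.mem_range]
    have := j.isLt
    omega
  · intro x _ y _ h
    exact Fin.ext h
  · intro v hv
    simp only [Finset.coe_range, Set.mem_Iio] at hv
    have hvn : v < n := lt_of_lt_of_le hv (min_le_right t n)
    refine ⟨⟨v, hvn⟩, ?_, rfl⟩
    simp only [coe_filter, Set.mem_setOf_eq, mem_univ, true_and]
    exact lt_of_lt_of_le hv (min_le_left t n)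

lemma card_filter_le_val (n m : ℕ) :
    ((univ : Finset (Fin n)).filter fun j => m ≤ j.val).card = n - m := by
  have h1 := card_filter_add_card_filter_not (s := (univ : Finset (Fin n)))
    (p := fun j : Fin n => j.val < m)
  rw [card_filter_val_lt] at h1
  have h2 : (univ.filter fun j : Fin n => ¬ j.val < m)
      = (univ.filter fun j : Fin n => m ≤ j.val) := by
    apply filter_congr
    intro j _
    simp [not_lt]
  rw [h2] at h1
  have h3 : (univ : Finset (Fin n)).card = n := by simp
  omega

lemma dc_iff {n : ℕ} (S : Finset (Fin n))
    (hdc : ∀ x ∈ S, ∀ y : Fin n, y ≤ x → y ∈ S) (x : Fin n) :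
    x ∈ S ↔ x.val < S.card := by
  constructor
  · intro hx
    have hsub : (univ.filter fun y : Fin n => y.val < x.val + 1) ⊆ S := by
      intro y hy
      simp only [mem_filter, mem_univ, true_and] at hy
      exact hdc x hx y (by rw [Fin.le_def]; omega)
    have := card_le_card hsub
    rw [card_filter_val_lt] at this
    have := x.isLt
    omega
  · intro hx
    by_contra hcon
    have hsub : S ⊆ univ.filter fun y : Fin n => y.val < x.val := by
      intro s hs
      simp only [mem_filter, mem_univ, true_and]
      by_contra hcon2
      push_neg at hcon2
      exact hcon (hdc s hs x (by rw [Fin.le_def]; omega))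
    have := card_le_card hsub
    rw [card_filter_val_lt] at this
    omega

lemma uc_above {n : ℕ} (Fs : Finset (Fin n)) (s : Fin Fs.card) :
    (Fs.filter fun y => ((Fs.orderIsoOfFin rfl) s : Fin n) ≤ y).card = Fs.card - s.val := by
  set e := Fs.orderIsoOfFin rfl with he
  have himg : (Fs.filter fun y => (e s : Fin n) ≤ y)
      = (univ.filter fun s' : Fin Fs.card => s ≤ s').image (fun s' => (e s' : Fin n)) := by
    ext y
    simp only [mem_filter, mem_image, mem_univ, true_and]
    constructor
    · rintro ⟨hy1, hy2⟩
      refine ⟨e.symm ⟨y, hy1⟩, ?_, ?_⟩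
      · rw [← e.le_iff_le]
        rw [OrderIso.apply_symm_apply]
        exact hy2
      · rw [OrderIso.apply_symm_apply]
    · rintro ⟨s', hs', rfl⟩
      exact ⟨(e s').2, Subtype.coe_le_coe.mpr (e.le_iff_le.mpr hs')⟩
  rw [himg, card_image_of_injective _ (fun a b hab => e.injective (Subtype.ext hab))]
  have : (univ.filter fun s' : Fin Fs.card => s ≤ s')
      = (univ.filter fun s' : Fin Fs.card => s.val ≤ s'.val) := by
    apply filter_congr; intro j _; exact Fin.le_def
  rw [this, card_filter_le_val]

lemma uc_count {n : ℕ} (Fs : Finset (Fin n)) (t : ℕ) (ht : t ≤ Fs.card) :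
    (Fs.filter fun x => (Fs.filter fun y => x ≤ y).card ≤ t).card = t := by
  set e := Fs.orderIsoOfFin rfl with he
  have himg : (Fs.filter fun x => (Fs.filter fun y => x ≤ y).card ≤ t)
      = (univ.filter fun s : Fin Fs.card => Fs.card - t ≤ s.val).image
          (fun s => (e s : Fin n)) := by
    ext x
    simp only [mem_filter, mem_image, mem_univ, true_and]
    constructor
    · rintro ⟨hx1, hx2⟩
      refine ⟨e.symm ⟨x, hx1⟩, ?_, by rw [OrderIso.apply_symm_apply]⟩
      have := uc_above Fs (e.symm ⟨x, hx1⟩)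
      rw [← he] at this
      rw [OrderIso.apply_symm_apply] at this
      simp only at this
      rw [this] at hx2
      have := (e.symm ⟨x, hx1⟩).isLt
      omega
    · rintro ⟨s, hs, rfl⟩
      refine ⟨(e s).2, ?_⟩
      have := uc_above Fs s
      rw [← he] at this
      rw [this]
      have := s.isLt
      omega
  rw [himg, card_image_of_injective _ (fun a b hab => e.injective (Subtype.ext hab))]
  rw [card_filter_le_val]
  omega

/-- closers precede openers within each fiber of `g` -/
def Pcond {q : ℕ} (g : Fin N → Fin q) (ω : Fin N → Bool) : Prop :=
  ∀ i j : Fin N, i ≤ j → g i = g j → ω i = true → ω j = true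

section E1sec

variable {q : ℕ} (g : Fin N → Fin q) (hg : Monotone g)

include hg in
lemma matching_pcond (f : Fin N → Fin N) (hf : Function.Involutive f)
    (hfpf : ∀ i, f i ≠ i) (hnc : ¬∃ a c : Fin N, a < c ∧ c < f a ∧ f a < f c)
    (hgrp : ∀ i, g (f i) ≠ g i) : Pcond g (wd f) := by
  intro i j hij hgij hωi
  by_contra hωj'
  rw [Bool.not_eq_true] at hωj'
  have hb1 := U_W1 f hf hfpf
  have hij' : i < j := by
    rcases lt_or_eq_of_le hij with h | h
    · exact h
    · rw [h] at hωi; rw [hωi] at hωj'; exact absurd hωj' (by simp)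
  set K := univ.filter fun t : Fin N => i ≤ t ∧ t < j ∧ wd f t = true with hK
  have hKne : K.Nonempty := ⟨i, by simp only [hK, mem_filter, mem_univ, true_and]
                                   exact ⟨le_refl i, hij', hωi⟩⟩
  set k := K.max' hKne with hk
  have hkK := K.max'_mem hKne
  simp only [hK, mem_filter, mem_univ, true_and] at hkK
  obtain ⟨hk1, hk2, hk3⟩ := hkK
  have hkj : k.val < j.val := hk2
  have hkN : k.val + 1 < N := by
    have := j.isLt
    omega
  set k' : Fin N := ⟨k.val + 1, hkN⟩ with hk'
  have hkk' : k ≤ k' := by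
    rw [Fin.le_def]
    show k.val ≤ k.val + 1
    omega
  have hk'j : k' ≤ j := by
    rw [Fin.le_def]
    show k.val + 1 ≤ j.val
    omega
  have hωk' : wd f k' = false := by
    rcases eq_or_lt_of_le hk'j with h | h
    · rw [h]; exact hωj'
    · cases hcase : wd f k'
      · rfl
      · exfalso
        have : k' ∈ K := by
          simp only [hK, mem_filter, mem_univ, true_and]
          exact ⟨le_trans hk1 hkk', h, hcase⟩
        have h9 := K.le_max' k' this
        rw [← hk, Fin.le_def] at h9
        have h10 : k.val + 1 ≤ k.val := h9
        omega
  -- g k' = g k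
  have hgk' : g k' = g k := by
    have h1 : g i ≤ g k := hg hk1
    have h2 : g k ≤ g k' := hg hkk'
    have h3 : g k' ≤ g j := hg hk'j
    rw [← hgij] at h3
    exact le_antisymm (le_trans h3 h1) h2
  -- f k' = k
  have hfk' : f k' = k := by
    have hmain := U_main f hf hfpf hnc k'
    obtain ⟨hv, _, _⟩ := F_closer (wd f) hb1 hωk'
    have hstep : hgt (wd f) (k.val + 1) = hgt (wd f) k.val + 1 := by
      apply hgt_succ_true (wd f) k.isLt
      have : (⟨k.val, k.isLt⟩ : Fin N) = k := rfl
      rw [this]; exact hk3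
    have hfc : fcN (wd f) k'.val = k.val := by
      set S := (Finset.range k'.val).filter
        fun x => hgt (wd f) x = hgt (wd f) k'.val - 1 with hS
      have hmem : k.val ∈ S := by
        simp only [hS, mem_filter, mem_range, hk']
        exact ⟨Nat.lt_succ_self _, by rw [hstep]; ring⟩
      have hub : ∀ x ∈ S, x ≤ k.val := by
        intro x hx
        simp only [hS, mem_filter, mem_range, hk'] at hx
        omega
      have h6 := le_natMax hmem
      have h7 := hub _ (natMax_mem ⟨_, hmem⟩)
      show natMax S = k.val
      omega
    rw [← hmain]
    apply Fin.ext
    rw [hv, hfc]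
  have := hgrp k'
  rw [hfk', hgk'] at this
  exact this rfl

noncomputable def E1 :
    {f : Fin N → Fin N // NoncrossingMatching f ∧ ∀ i, g (f i) ≠ g i} ≃
      {ω : Fin N → Bool // (∀ k, 0 ≤ hgt ω k) ∧ hgt ω N = 0 ∧ Pcond g ω} where
  toFun := fun fp =>
    ⟨wd fp.1, by
      obtain ⟨f, ⟨hf, hfpf, hnc⟩, hgrp⟩ := fp
      exact ⟨U_W1 f hf hfpf, U_W2 f hf hfpf, matching_pcond g hg f hf hfpf hnc hgrp⟩⟩
  invFun := fun ωp =>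
    ⟨F ωp.1, by
      obtain ⟨ω, hb1, hb2, hP⟩ := ωp
      refine ⟨⟨F_invol ω hb1 hb2, F_ne ω hb1 hb2, F_noncross ω hb1 hb2⟩, ?_⟩
      intro i heq
      cases hw : ω i
      · obtain ⟨_, hlt, hop⟩ := F_closer ω hb1 hw
        have := hP (F ω i) i (le_of_lt hlt) heq hop
        rw [this] at hw; exact absurd hw (by simp)
      · obtain ⟨_, hlt, hcl⟩ := F_opener ω hb1 hb2 hw
        have := hP i (F ω i) (le_of_lt hlt) heq.symm hw
        rw [this] at hcl; exact absurd hcl (by simp)⟩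
  left_inv := fun fp => by
    obtain ⟨f, ⟨hf, hfpf, hnc⟩, hgrp⟩ := fp
    exact Subtype.ext (funext fun i => U_main f hf hfpf hnc i)
  right_inv := fun ωp => by
    obtain ⟨ω, hb1, hb2, hP⟩ := ωp
    apply Subtype.ext
    funext i
    cases hw : ω i
    · obtain ⟨_, hlt, _⟩ := F_closer ω hb1 hw
      show decide (i < F ω i) = ω i
      rw [hw, decide_eq_false_iff_not, not_lt]
      exact le_of_lt hlt
    · obtain ⟨_, hlt, _⟩ := F_opener ω hb1 hb2 hw
      show decide (i < F ω i) = ω i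
      rw [hw, decide_eq_true_eq]
      exact hlt

end E1sec


section E2sec

variable {q : ℕ} (g : Fin N → Fin q)

/-- number of openers in fiber `j` -/
def ocount (ω : Fin N → Bool) (j : Fin q) : ℕ :=
  (univ.filter fun i => g i = j ∧ ω i = true).card

/-- the word attached to an opener-count vector: within each fiber,
the last `o j` elements are openers -/
def wrd (o : Fin q → ℕ) : Fin N → Bool := fun i =>
  decide ((univ.filter fun y => g y = g i ∧ i ≤ y).card ≤ o (g i))

lemma grp_sum (ω : Fin N → Bool) (b : Bool) (p : Fin q → Prop) [DecidablePred p] :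
    (univ.filter fun x => p (g x) ∧ ω x = b).card
      = ∑ i ∈ univ.filter p, (univ.filter fun x => g x = i ∧ ω x = b).card := by
  rw [card_eq_sum_card_fiberwise (f := g) (t := univ.filter p)
    (fun x hx => by simp only [Finset.mem_coe, mem_filter, mem_univ, true_and] at hx ⊢; exact hx.1)]
  apply sum_congr rfl
  intro i hi
  simp only [mem_filter, mem_univ, true_and] at hi
  congr 1
  ext x
  simp only [mem_filter, mem_univ, true_and]
  constructor
  · rintro ⟨⟨h1, h2⟩, h3⟩
    exact ⟨h3, h2⟩
  · rintro ⟨h1, h2⟩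
    exact ⟨⟨h1 ▸ hi, h2⟩, h1⟩

lemma fib_split (ω : Fin N → Bool) (a : Fin q → ℕ)
    (hfiber : ∀ j, (univ.filter fun i => g i = j).card = a j) (j : Fin q) :
    ocount g ω j + (univ.filter fun i => g i = j ∧ ω i = false).card = a j := by
  have h := card_filter_add_card_filter_not
    (s := univ.filter fun i : Fin N => g i = j) (p := fun i => ω i = true)
  rw [filter_filter, filter_filter] at h
  have h2 : (univ.filter fun i : Fin N => g i = j ∧ ¬ ω i = true)
      = univ.filter fun i : Fin N => g i = j ∧ ω i = false := by
    apply filter_congr; intro i _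
    simp [Bool.not_eq_true]
  rw [h2, hfiber j] at h
  exact h

lemma hgt_N_eq (ω : Fin N → Bool) :
    hgt ω N = ((univ.filter fun i => ω i = true).card : ℤ)
      - ((univ.filter fun i => ω i = false).card : ℤ) := by
  unfold hgt
  congr 3 <;> · apply filter_congr; intro i _; simp [i.isLt]

lemma op_total (ω : Fin N → Bool) :
    (univ.filter fun i => ω i = true).card = ∑ j, ocount g ω j := by
  have h := grp_sum g ω true (fun _ => True)
  simp only [true_and, filter_true] at h
  exact h

/-- all openers in a fiber, for a `Pcond` word, are the top part -/
lemma ucdet (ω : Fin N → Bool) (hP : Pcond g ω) (x : Fin N) :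
    ω x = true ↔ (univ.filter fun y => g y = g x ∧ x ≤ y).card ≤ ocount g ω (g x) := by
  constructor
  · intro hωx
    apply card_le_card
    intro y hy
    simp only [mem_filter, mem_univ, true_and] at hy ⊢
    exact ⟨hy.1, hP x y hy.2 hy.1.symm hωx⟩
  · intro hcnt
    by_contra hcon
    rw [Bool.not_eq_true] at hcon
    have hsub : insert x (univ.filter fun i => g i = g x ∧ ω i = true)
        ⊆ univ.filter fun y => g y = g x ∧ x ≤ y := by
      intro y hy
      rcases Finset.mem_insert.mp hy with h | h
      · rw [h]
        exact mem_filter.mpr ⟨mem_univ x, rfl, le_refl x⟩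
      · simp only [mem_filter, mem_univ, true_and] at h ⊢
        refine ⟨h.1, ?_⟩
        by_contra hcon2
        push_neg at hcon2
        have := hP y x (le_of_lt hcon2) h.1 h.2
        rw [this] at hcon
        exact absurd hcon (by simp)
    have hnm : x ∉ univ.filter fun i => g i = g x ∧ ω i = true := by
      intro hmem
      have h := (mem_filter.mp hmem).2.2
      rw [hcon] at h
      exact absurd h (by simp)
    have := card_le_card hsub
    rw [card_insert_of_notMem hnm] at this
    unfold ocount at hcnt
    omega

variable (hg : Monotone g) (a : Fin q → ℕ)
  (hfiber : ∀ j, (univ.filter fun i => g i = j).card = a j)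
  (m' : ℕ) (hsa : ∑ j, a j = N) (hNm : N = 2 * m')

include hg in
lemma ballot_of_word (ω : Fin N → Bool) (hb1 : ∀ k, 0 ≤ hgt ω k) (hP : Pcond g ω)
    (j : Fin q) :
    (∑ i ∈ univ.filter (· ≤ j), (univ.filter fun x => g x = i ∧ ω x = false).card)
      ≤ ∑ i ∈ univ.filter (· < j), ocount g ω i := by
  set K := univ.filter fun x : Fin N => g x < j ∨ (g x = j ∧ ω x = false) with hK
  have hdc : ∀ x ∈ K, ∀ y : Fin N, y ≤ x → y ∈ K := by
    intro x hx y hyx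
    simp only [hK, mem_filter, mem_univ, true_and] at hx ⊢
    rcases hx with h | ⟨he, hcl⟩
    · exact Or.inl (lt_of_le_of_lt (hg hyx) h)
    · rcases lt_or_eq_of_le (le_trans (hg hyx) (le_of_eq he)) with h2 | h2
      · exact Or.inl h2
      · refine Or.inr ⟨h2, ?_⟩
        cases hcase : ω y
        · rfl
        · exfalso
          have := hP y x hyx (h2.trans he.symm) hcase
          rw [this] at hcl
          exact absurd hcl (by simp)
  have hKN : K.card ≤ N := le_trans (card_le_univ K) (by simp)
  have hkey := hb1 K.card
  rw [hgt_sub ω (Nat.zero_le K.card), hgt_zero] at hkey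
  have hcl : cntIn ω false 0 K.card = (univ.filter fun x => g x ≤ j ∧ ω x = false).card := by
    unfold cntIn
    congr 1
    ext x
    simp only [mem_filter, mem_univ, true_and]
    rw [show (x.val < K.card ↔ x ∈ K) from (dc_iff K hdc x).symm]
    simp only [hK, mem_filter, mem_univ, true_and]
    constructor
    · rintro ⟨_, h1, h2⟩
      rcases h1 with h | ⟨he, _⟩
      · exact ⟨le_of_lt h, h2⟩
      · exact ⟨le_of_eq he, h2⟩
    · rintro ⟨h1, h2⟩
      rcases lt_or_eq_of_le h1 with h | h
      · exact ⟨Nat.zero_le _, Or.inl h, h2⟩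
      · exact ⟨Nat.zero_le _, Or.inr ⟨h, h2⟩, h2⟩
  have hop : cntIn ω true 0 K.card = (univ.filter fun x => g x < j ∧ ω x = true).card := by
    unfold cntIn
    congr 1
    ext x
    simp only [mem_filter, mem_univ, true_and]
    rw [show (x.val < K.card ↔ x ∈ K) from (dc_iff K hdc x).symm]
    simp only [hK, mem_filter, mem_univ, true_and]
    constructor
    · rintro ⟨_, h1, h2⟩
      rcases h1 with h | ⟨_, hcl2⟩
      · exact ⟨h, h2⟩
      · rw [h2] at hcl2; exact absurd hcl2 (by simp)
    · rintro ⟨h1, h2⟩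
      exact ⟨Nat.zero_le _, Or.inl h1, h2⟩
  have e1 : (univ.filter fun x => g x ≤ j ∧ ω x = false).card
      = ∑ i ∈ univ.filter (· ≤ j), (univ.filter fun x => g x = i ∧ ω x = false).card :=
    grp_sum g ω false (· ≤ j)
  have e2 : (univ.filter fun x => g x < j ∧ ω x = true).card
      = ∑ i ∈ univ.filter (· < j), (univ.filter fun x => g x = i ∧ ω x = true).card :=
    grp_sum g ω true (· < j)
  have e3 : ∑ i ∈ univ.filter (· < j), (univ.filter fun x => g x = i ∧ ω x = true).card
      = ∑ i ∈ univ.filter (· < j), ocount g ω i := rfl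
  omega

include hfiber in
lemma wrd_count (o : Fin q → ℕ) (ho : ∀ j, o j ≤ a j) (j : Fin q) :
    ocount g (wrd g o) j = o j := by
  unfold ocount
  have hset : (univ.filter fun i => g i = j ∧ wrd g o i = true)
      = (univ.filter fun i : Fin N => g i = j).filter
          (fun x => ((univ.filter fun i : Fin N => g i = j).filter fun y => x ≤ y).card ≤ o j) := by
    rw [filter_filter]
    apply filter_congr
    intro x _
    simp only [wrd, decide_eq_true_eq, filter_filter]
    constructor
    · rintro ⟨h1, h2⟩
      rw [h1] at h2
      exact ⟨h1, h2⟩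
    · rintro ⟨h1, h2⟩
      rw [h1]
      exact ⟨rfl, h2⟩
  rw [hset, uc_count _ _ (by rw [hfiber j]; exact ho j)]

include hg hfiber hsa hNm in
lemma wrd_conds (o : Fin q → ℕ) (ho : ∀ j, o j ≤ a j) (hSo : ∑ j, o j = m')
    (hbal : ∀ j : Fin q,
      (∑ i ∈ univ.filter (· ≤ j), (a i - o i)) ≤ ∑ i ∈ univ.filter (· < j), o i) :
    (∀ k, 0 ≤ hgt (wrd g o) k) ∧ hgt (wrd g o) N = 0 ∧ Pcond g (wrd g o) := by
  have hP : Pcond g (wrd g o) := by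
    intro i j hij hgij hωi
    simp only [wrd, decide_eq_true_eq] at hωi ⊢
    rw [← hgij]
    refine le_trans (card_le_card ?_) hωi
    intro y hy
    simp only [mem_filter, mem_univ, true_and] at hy ⊢
    exact ⟨hgij ▸ hy.1, le_trans hij hy.2⟩
  have hcnt : ∀ j, ocount g (wrd g o) j = o j := wrd_count g a hfiber o ho
  have hclcnt : ∀ j, (univ.filter fun i => g i = j ∧ wrd g o i = false).card = a j - o j := by
    intro j
    have := fib_split g (wrd g o) a hfiber j
    rw [hcnt j] at this
    omega
  have hoptot : (univ.filter fun i => wrd g o i = true).card = m' := by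
    rw [op_total g (wrd g o)]
    rw [show ∑ j, ocount g (wrd g o) j = ∑ j, o j from sum_congr rfl fun j _ => hcnt j]
    exact hSo
  have hcltot : (univ.filter fun i => wrd g o i = false).card = m' := by
    have h := card_filter_add_card_filter_not
      (s := (univ : Finset (Fin N))) (p := fun i => wrd g o i = true)
    have h2 : (univ.filter fun i : Fin N => ¬ wrd g o i = true)
        = univ.filter fun i : Fin N => wrd g o i = false := by
      apply filter_congr; intro i _; simp [Bool.not_eq_true]
    rw [h2, hoptot] at h
    have h3 : (univ : Finset (Fin N)).card = N := by simp
    omega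
  have hb2 : hgt (wrd g o) N = 0 := by
    rw [hgt_N_eq, hoptot, hcltot]
    ring
  refine ⟨?_, hb2, hP⟩
  -- positivity of heights
  have claim : ∀ k, 1 ≤ k → k ≤ N → 0 ≤ hgt (wrd g o) k := by
    intro k hk1 hkN
    have hkm : k - 1 < N := by omega
    set j' := g ⟨k - 1, hkm⟩ with hj'
    have hsub1 : (univ.filter fun x : Fin N => x.val < k ∧ wrd g o x = false)
        ⊆ univ.filter fun x => g x ≤ j' ∧ wrd g o x = false := by
      intro x hx
      simp only [mem_filter, mem_univ, true_and] at hx ⊢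
      refine ⟨?_, hx.2⟩
      rw [hj']
      apply hg
      rw [Fin.le_def]
      show x.val ≤ k - 1
      omega
    have hsub2 : (univ.filter fun x : Fin N => g x < j' ∧ wrd g o x = true)
        ⊆ univ.filter fun x => x.val < k ∧ wrd g o x = true := by
      intro x hx
      simp only [mem_filter, mem_univ, true_and] at hx ⊢
      refine ⟨?_, hx.2⟩
      by_contra hcon
      push_neg at hcon
      have : (⟨k - 1, hkm⟩ : Fin N) ≤ x := by
        rw [Fin.le_def]
        show k - 1 ≤ x.val
        omega
      have := hg this
      rw [← hj'] at this
      exact absurd hx.1 (not_lt.mpr this)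
    have e1 := grp_sum g (wrd g o) false (· ≤ j')
    have e2 := grp_sum g (wrd g o) true (· < j')
    have e3 : ∑ i ∈ univ.filter (· ≤ j'), (univ.filter fun x => g x = i ∧ wrd g o x = false).card
        = ∑ i ∈ univ.filter (· ≤ j'), (a i - o i) :=
      sum_congr rfl fun i _ => hclcnt i
    have e4 : ∑ i ∈ univ.filter (· < j'), (univ.filter fun x => g x = i ∧ wrd g o x = true).card
        = ∑ i ∈ univ.filter (· < j'), o i :=
      sum_congr rfl fun i _ => hcnt i
    have c1 := card_le_card hsub1
    have c2 := card_le_card hsub2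
    have hbal' := hbal j'
    have hsubst := hgt_sub (wrd g o) (Nat.zero_le k)
    rw [hgt_zero] at hsubst
    unfold cntIn at hsubst
    have hz1 : (univ.filter fun x : Fin N => 0 ≤ x.val ∧ x.val < k ∧ wrd g o x = true)
        = univ.filter fun x : Fin N => x.val < k ∧ wrd g o x = true := by
      apply filter_congr; intro x _
      simp only [Nat.zero_le, true_and]
    have hz2 : (univ.filter fun x : Fin N => 0 ≤ x.val ∧ x.val < k ∧ wrd g o x = false)
        = univ.filter fun x : Fin N => x.val < k ∧ wrd g o x = false := by
      apply filter_congr; intro x _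
      simp only [Nat.zero_le, true_and]
    rw [hz1, hz2] at hsubst
    omega
  intro k
  rcases Nat.eq_zero_or_pos k with h | h
  · rw [h, hgt_zero]
  rcases le_or_gt k N with h2 | h2
  · exact claim k h h2
  · rw [hgt_stable (wrd g o) (le_of_lt h2), hb2]

end E2sec


section E2equiv

variable {q : ℕ} (g : Fin N → Fin q) (hg : Monotone g) (a : Fin q → ℕ)
  (hfiber : ∀ j, (univ.filter fun i => g i = j).card = a j)
  (m' : ℕ) (hsa : ∑ j, a j = N) (hNm : N = 2 * m')

include hNm in
lemma op_m' (ω : Fin N → Bool) (hb2 : hgt ω N = 0) : ∑ j, ocount g ω j = m' := by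
  rw [← op_total g ω]
  have h := card_filter_add_card_filter_not
    (s := (univ : Finset (Fin N))) (p := fun i => ω i = true)
  have h2 : (univ.filter fun i : Fin N => ¬ ω i = true)
      = univ.filter fun i : Fin N => ω i = false := by
    apply filter_congr; intro i _; simp [Bool.not_eq_true]
  rw [h2] at h
  have h3 : (univ : Finset (Fin N)).card = N := by simp
  rw [hgt_N_eq] at hb2
  omega

noncomputable def E2 :
    {ω : Fin N → Bool // (∀ k, 0 ≤ hgt ω k) ∧ hgt ω N = 0 ∧ Pcond g ω} ≃
      {o : Fin q → ℕ // (∀ j, o j ≤ a j) ∧ (∑ j, o j = m') ∧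
        ∀ j : Fin q, (∑ i ∈ univ.filter (· ≤ j), (a i - o i))
          ≤ ∑ i ∈ univ.filter (· < j), o i} where
  toFun := fun ωp =>
    ⟨ocount g ωp.1, by
      obtain ⟨ω, hb1, hb2, hP⟩ := ωp
      have hle : ∀ j, ocount g ω j ≤ a j := by
        intro j
        rw [← hfiber j]
        apply card_le_card
        intro x hx
        simp only [mem_filter, mem_univ, true_and] at hx ⊢
        exact hx.1
      refine ⟨hle, op_m' g m' hNm ω hb2, ?_⟩
      intro j
      have h := ballot_of_word g hg ω hb1 hP j
      have e : ∑ i ∈ univ.filter (· ≤ j), (univ.filter fun x => g x = i ∧ ω x = false).card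
          = ∑ i ∈ univ.filter (· ≤ j), (a i - ocount g ω i) := by
        apply sum_congr rfl
        intro i _
        have := fib_split g ω a hfiber i
        have := hle i
        omega
      rw [e] at h
      exact h⟩
  invFun := fun op =>
    ⟨wrd g op.1, by
      obtain ⟨o, ho, hSo, hbal⟩ := op
      exact wrd_conds g hg a hfiber m' hsa hNm o ho hSo hbal⟩
  left_inv := fun ωp => by
    obtain ⟨ω, hb1, hb2, hP⟩ := ωp
    apply Subtype.ext
    funext i
    show wrd g (ocount g ω) i = ω i
    cases hw : ω i
    · have hnot : ¬ ((univ.filter fun y => g y = g i ∧ i ≤ y).card ≤ ocount g ω (g i)) := by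
        intro hc
        have := (ucdet g ω hP i).mpr hc
        rw [this] at hw
        exact absurd hw (by simp)
      simp only [wrd]
      rw [decide_eq_false_iff_not]
      exact hnot
    · simp only [wrd]
      rw [decide_eq_true_eq]
      exact (ucdet g ω hP i).mp hw
  right_inv := fun op => by
    obtain ⟨o, ho, hSo, hbal⟩ := op
    exact Subtype.ext (funext fun j => wrd_count g a hfiber o ho j)

end E2equiv

section E3sec

variable {q m' : ℕ}

/-- cumulative sums up to and including `j` -/
def Sv (v : Fin q → ℕ) (j : Fin q) : ℕ := ∑ i ∈ univ.filter (· ≤ j), v i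

/-- cumulative sums strictly below `j` -/
def Pv (v : Fin q → ℕ) (j : Fin q) : ℕ := ∑ i ∈ univ.filter (· < j), v i

/-- the canonical weakly increasing row with value counts `v` -/
def rowFn (v : Fin q → ℕ) : Fin m' → ℕ := fun col =>
  1 + (univ.filter fun j : Fin q => Sv v j ≤ col.val).card

lemma Sv_mono (v : Fin q → ℕ) {i j : Fin q} (hij : i ≤ j) : Sv v i ≤ Sv v j := by
  apply sum_le_sum_of_subset
  intro x hx
  simp only [mem_filter, mem_univ, true_and] at hx ⊢
  exact le_trans hx hij

lemma Pv_le_Sv (v : Fin q → ℕ) (j : Fin q) : Pv v j ≤ Sv v j := by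
  apply sum_le_sum_of_subset
  intro x hx
  simp only [mem_filter, mem_univ, true_and] at hx ⊢
  exact le_of_lt hx

lemma Sv_eq_Pv_add (v : Fin q → ℕ) (j : Fin q) : Sv v j = Pv v j + v j := by
  unfold Sv Pv
  have h : (univ.filter (· ≤ j)) = insert j (univ.filter (· < j)) := by
    ext x
    simp only [mem_filter, mem_univ, true_and, mem_insert]
    rw [le_iff_lt_or_eq]
    tauto
  rw [h, sum_insert (by simp)]
  ring

lemma Sv_le_total (v : Fin q → ℕ) (j : Fin q) : Sv v j ≤ ∑ i, v i := by
  apply sum_le_sum_of_subset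
  exact subset_univ _

lemma Sv_top (v : Fin q → ℕ) (hq0 : 0 < q) : Sv v ⟨q - 1, by omega⟩ = ∑ i, v i := by
  unfold Sv
  have h : (univ.filter (· ≤ (⟨q - 1, by omega⟩ : Fin q))) = (univ : Finset (Fin q)) := by
    rw [eq_univ_iff_forall]
    intro x
    simp only [mem_filter, mem_univ, true_and]
    rw [Fin.le_def]
    have := x.isLt
    show x.val ≤ q - 1
    omega
  rw [h]

lemma Pv_bot (v : Fin q → ℕ) (j : Fin q) (hj : j.val = 0) : Pv v j = 0 := by
  unfold Pv
  rw [filter_false_of_mem, sum_empty]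
  intro x _
  rw [Fin.lt_def, hj]
  omega

lemma Pv_eq_Sv_pred (v : Fin q → ℕ) (j : Fin q) (hj : 0 < j.val) :
    Pv v j = Sv v ⟨j.val - 1, by have := j.isLt; omega⟩ := by
  unfold Sv Pv
  congr 1
  ext x
  simp only [mem_filter, mem_univ, true_and]
  rw [Fin.lt_def, Fin.le_def]
  show x.val < j.val ↔ x.val ≤ j.val - 1
  omega

lemma Dset_dc (v : Fin q → ℕ) (c : ℕ) :
    ∀ x ∈ (univ.filter fun j : Fin q => Sv v j ≤ c), ∀ y : Fin q, y ≤ x →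
      y ∈ (univ.filter fun j : Fin q => Sv v j ≤ c) := by
  intro x hx y hyx
  simp only [mem_filter, mem_univ, true_and] at hx ⊢
  exact le_trans (Sv_mono v hyx) hx

lemma interval_card (x y : ℕ) (hy : y ≤ m') :
    (univ.filter fun col : Fin m' => x ≤ col.val ∧ col.val < y).card = y - x := by
  rcases le_or_gt x y with hxy | hxy
  · have h1 : (univ.filter fun col : Fin m' => col.val < y)
        = (univ.filter fun col : Fin m' => col.val < x)
          ∪ (univ.filter fun col : Fin m' => x ≤ col.val ∧ col.val < y) := by
      ext col
      simp only [mem_union, mem_filter, mem_univ, true_and]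
      omega
    have h2 := card_union_of_disjoint (s := univ.filter fun col : Fin m' => col.val < x)
      (t := univ.filter fun col : Fin m' => x ≤ col.val ∧ col.val < y) (by
        rw [disjoint_left]
        intro col hc1 hc2
        simp only [mem_filter, mem_univ, true_and] at hc1 hc2
        omega)
    have h3 : (univ.filter fun col : Fin m' => col.val < y).card
        = (univ.filter fun col : Fin m' => col.val < x).card
          + (univ.filter fun col : Fin m' => x ≤ col.val ∧ col.val < y).card := by
      rw [h1]; exact h2
    have h4 := card_filter_val_lt m' y
    have h5 := card_filter_val_lt m' x
    omega
  · have h0 : y - x = 0 := by omega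
    rw [h0, card_eq_zero, Finset.eq_empty_iff_forall_notMem]
    intro col hc
    simp only [mem_filter, mem_univ, true_and] at hc
    omega

lemma rowFn_mem_iff (v : Fin q → ℕ) (hv : ∑ i, v i = m') (col : Fin m') (j : Fin q) :
    rowFn v col = j.val + 1 ↔ (Pv v j ≤ col.val ∧ col.val < Sv v j) := by
  have hq0 : 0 < q := j.pos
  set D := univ.filter fun x : Fin q => Sv v x ≤ col.val with hD
  have hdc := Dset_dc v col.val
  constructor
  · intro h
    have hcard : D.card = j.val := by
      rw [hD]
      unfold rowFn at h
      omega
    have hjD : j ∉ D := by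
      rw [dc_iff D hdc j, hcard]
      omega
    have hcol : col.val < Sv v j := by
      simp only [hD, mem_filter, mem_univ, true_and] at hjD
      omega
    refine ⟨?_, hcol⟩
    rcases Nat.eq_zero_or_pos j.val with hj0 | hj0
    · rw [Pv_bot v j hj0]
      omega
    · set i : Fin q := ⟨j.val - 1, by have := j.isLt; omega⟩ with hi
      have hiD : i ∈ D := by
        rw [dc_iff D hdc i, hcard]
        show j.val - 1 < j.val
        omega
      simp only [hD, mem_filter, mem_univ, true_and] at hiD
      rw [Pv_eq_Sv_pred v j hj0]
      exact hiD
  · rintro ⟨h1, h2⟩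
    have hDeq : D = univ.filter fun x : Fin q => x.val < j.val := by
      apply filter_congr
      intro x _
      constructor
      · intro hx
        by_contra hcon
        push_neg at hcon
        have hjx : j ≤ x := by rw [Fin.le_def]; omega
        have := Sv_mono v hjx
        omega
      · intro hx
        have hj0 : 0 < j.val := by omega
        have hxle : x ≤ (⟨j.val - 1, by have := j.isLt; omega⟩ : Fin q) := by
          rw [Fin.le_def]
          show x.val ≤ j.val - 1
          omega
        have := Sv_mono v hxle
        rw [← Pv_eq_Sv_pred v j hj0] at this
        omega
    unfold rowFn
    rw [show (univ.filter fun x : Fin q => Sv v x ≤ col.val) = D from rfl, hDeq,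
      card_filter_val_lt]
    have := j.isLt
    omega

lemma rowFn_count (v : Fin q → ℕ) (hv : ∑ i, v i = m') (j : Fin q) :
    (univ.filter fun col : Fin m' => rowFn v col = j.val + 1).card = v j := by
  have h1 : (univ.filter fun col : Fin m' => rowFn v col = j.val + 1)
      = univ.filter fun col : Fin m' => Pv v j ≤ col.val ∧ col.val < Sv v j := by
    apply filter_congr
    intro col _
    exact rowFn_mem_iff v hv col j
  rw [h1, interval_card _ _ (le_trans (Sv_le_total v j) (le_of_eq hv))]
  have := Sv_eq_Pv_add v j
  omega

lemma rowFn_mono (v : Fin q → ℕ) : Monotone (rowFn (m' := m') v) := by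
  intro c c' hcc
  unfold rowFn
  have : (univ.filter fun j : Fin q => Sv v j ≤ c.val)
      ⊆ univ.filter fun j : Fin q => Sv v j ≤ c'.val := by
    intro j hj
    simp only [mem_filter, mem_univ, true_and] at hj ⊢
    rw [Fin.le_def] at hcc
    omega
  have := card_le_card this
  omega

lemma rowFn_le (v : Fin q → ℕ) (hv : ∑ i, v i = m') (hq0 : 0 < q) (col : Fin m') :
    rowFn v col ≤ q := by
  set top : Fin q := ⟨q - 1, by omega⟩ with htop
  have hnot : top ∉ univ.filter fun j : Fin q => Sv v j ≤ col.val := by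
    simp only [mem_filter, mem_univ, true_and]
    rw [Sv_top v hq0, hv]
    have := col.isLt
    omega
  have hss : (univ.filter fun j : Fin q => Sv v j ≤ col.val) ⊂ univ :=
    (Finset.ssubset_iff_of_subset (subset_univ _)).mpr ⟨top, mem_univ top, hnot⟩
  have := card_lt_card hss
  rw [card_univ, Fintype.card_fin] at this
  unfold rowFn
  omega

lemma rowFn_strict (aa o : Fin q → ℕ) (ho : ∀ j, o j ≤ aa j) (hSo : ∑ j, o j = m')
    (hbal : ∀ j, Sv (fun i => aa i - o i) j ≤ Pv o j) (col : Fin m') :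
    rowFn o col < rowFn (fun i => aa i - o i) col := by
  have hq0 : 0 < q := by
    rcases Nat.eq_zero_or_pos q with h | h
    · exfalso
      subst h
      have h0 : m' = 0 := by rw [← hSo]; simp
      have := col.pos
      omega
    · exact h
  set Do := univ.filter fun j : Fin q => Sv o j ≤ col.val with hDo
  set Dc := univ.filter fun j : Fin q => Sv (fun i => aa i - o i) j ≤ col.val with hDc
  have hsub : Do ⊆ Dc := by
    intro j hj
    simp only [hDo, hDc, mem_filter, mem_univ, true_and] at hj ⊢
    have h1 := hbal j
    have h2 := Pv_le_Sv o j
    omega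
  have htlt : Do.card < q := by
    have hnot : (⟨q - 1, by omega⟩ : Fin q) ∉ Do := by
      simp only [hDo, mem_filter, mem_univ, true_and]
      rw [Sv_top o hq0, hSo]
      have := col.isLt
      omega
    have hss : Do ⊂ univ := (Finset.ssubset_iff_of_subset (subset_univ _)).mpr
      ⟨_, mem_univ _, hnot⟩
    have := card_lt_card hss
    rw [card_univ, Fintype.card_fin] at this
    exact this
  set jt : Fin q := ⟨Do.card, htlt⟩ with hjt
  have hjtno : jt ∉ Do := by
    rw [dc_iff Do (Dset_dc o col.val) jt]
    show ¬ Do.card < Do.card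
    omega
  have hjtin : jt ∈ Dc := by
    simp only [hDc, mem_filter, mem_univ, true_and]
    have hPle : Pv o jt ≤ col.val := by
      rcases Nat.eq_zero_or_pos jt.val with h0 | h0
      · rw [Pv_bot o jt h0]
        omega
      · have hmem : (⟨jt.val - 1, by have := jt.isLt; omega⟩ : Fin q) ∈ Do := by
          rw [dc_iff Do (Dset_dc o col.val)]
          show jt.val - 1 < Do.card
          have : jt.val = Do.card := rfl
          omega
        simp only [hDo, mem_filter, mem_univ, true_and] at hmem
        rw [Pv_eq_Sv_pred o jt h0]
        exact hmem
    exact le_trans (hbal jt) hPle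
  have hcard : Do.card < Dc.card := card_lt_card
    ((Finset.ssubset_iff_of_subset hsub).mpr ⟨jt, hjtin, hjtno⟩)
  show 1 + (univ.filter fun j : Fin q => Sv o j ≤ col.val).card
      < 1 + (univ.filter fun j : Fin q => Sv (fun i => aa i - o i) j ≤ col.val).card
  rw [← hDo, ← hDc]
  omega

lemma entry_split (T : Fin 2 → Fin m' → ℕ) (k : ℕ) :
    entryCount T k = (univ.filter fun col => T 0 col = k).card
      + (univ.filter fun col => T 1 col = k).card := by
  unfold entryCount
  rw [card_filter, Fintype.sum_prod_type, Fin.sum_univ_two, card_filter, card_filter]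

lemma count_cum_le (u : Fin m' → ℕ) (hlb : ∀ col, 1 ≤ u col) (hub : ∀ col, u col ≤ q)
    (j : Fin q) :
    Sv (fun i => (univ.filter fun col => u col = i.val + 1).card) j
      = (univ.filter fun col : Fin m' => u col ≤ j.val + 1).card := by
  unfold Sv
  rw [card_eq_sum_card_fiberwise
    (f := fun col : Fin m' => (⟨u col - 1, by have := hub col; have := hlb col; omega⟩ : Fin q))
    (t := univ.filter (· ≤ j)) (by
      intro col hcol
      simp only [Finset.mem_coe, mem_filter, mem_univ, true_and] at hcol ⊢
      rw [Fin.le_def]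
      show u col - 1 ≤ j.val
      omega)]
  apply sum_congr rfl
  intro i hi
  simp only [mem_filter, mem_univ, true_and] at hi
  apply congrArg Finset.card
  ext col
  simp only [mem_filter, mem_univ, true_and]
  have hij : i.val ≤ j.val := hi
  constructor
  · intro h
    have := hlb col
    refine ⟨by omega, Fin.ext (show u col - 1 = i.val by omega)⟩
  · rintro ⟨h1, h2⟩
    have h3 : u col - 1 = i.val := congrArg Fin.val h2
    have := hlb col
    omega

lemma count_cum_lt (u : Fin m' → ℕ) (hlb : ∀ col, 1 ≤ u col) (hub : ∀ col, u col ≤ q)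
    (j : Fin q) :
    Pv (fun i => (univ.filter fun col => u col = i.val + 1).card) j
      = (univ.filter fun col : Fin m' => u col ≤ j.val).card := by
  unfold Pv
  rw [card_eq_sum_card_fiberwise
    (f := fun col : Fin m' => (⟨u col - 1, by have := hub col; have := hlb col; omega⟩ : Fin q))
    (t := univ.filter (· < j)) (by
      intro col hcol
      simp only [Finset.mem_coe, mem_filter, mem_univ, true_and] at hcol ⊢
      rw [Fin.lt_def]
      show u col - 1 < j.val
      have := hlb col
      omega)]
  apply sum_congr rfl
  intro i hi
  simp only [mem_filter, mem_univ, true_and] at hi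
  apply congrArg Finset.card
  ext col
  simp only [mem_filter, mem_univ, true_and]
  have hij : i.val < j.val := hi
  constructor
  · intro h
    have := hlb col
    refine ⟨by omega, Fin.ext (show u col - 1 = i.val by omega)⟩
  · rintro ⟨h1, h2⟩
    have h3 : u col - 1 = i.val := congrArg Fin.val h2
    have := hlb col
    omega

lemma mono_canon (u : Fin m' → ℕ) (hmono : Monotone u) (hlb : ∀ col, 1 ≤ u col)
    (hub : ∀ col, u col ≤ q) (col : Fin m') :
    rowFn (fun i : Fin q => (univ.filter fun c2 => u c2 = i.val + 1).card) col = u col := by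
  have hset : (univ.filter fun j : Fin q =>
      Sv (fun i : Fin q => (univ.filter fun c2 => u c2 = i.val + 1).card) j ≤ col.val)
      = univ.filter fun j : Fin q => j.val < u col - 1 := by
    apply filter_congr
    intro j _
    rw [count_cum_le u hlb hub j]
    constructor
    · intro h
      by_contra hcon
      push_neg at hcon
      have hj1 : u col ≤ j.val + 1 := by have := hlb col; omega
      have hsub : (univ.filter fun c2 : Fin m' => c2.val < col.val + 1)
          ⊆ univ.filter fun c2 : Fin m' => u c2 ≤ j.val + 1 := by
        intro c2 hc2
        simp only [mem_filter, mem_univ, true_and] at hc2 ⊢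
        have : c2 ≤ col := by rw [Fin.le_def]; omega
        exact le_trans (le_trans (hmono this) hj1) (le_refl _)
      have hcard := card_le_card hsub
      rw [card_filter_val_lt] at hcard
      have := col.isLt
      omega
    · intro h
      have hsub : (univ.filter fun c2 : Fin m' => u c2 ≤ j.val + 1)
          ⊆ univ.filter fun c2 : Fin m' => c2.val < col.val := by
        intro c2 hc2
        simp only [mem_filter, mem_univ, true_and] at hc2 ⊢
        by_contra hcon
        push_neg at hcon
        have : col ≤ c2 := by rw [Fin.le_def]; omega
        have := hmono this
        omega
      have hcard := card_le_card hsub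
      rw [card_filter_val_lt] at hcard
      have := col.isLt
      omega
  unfold rowFn
  rw [hset, card_filter_val_lt]
  have h1 := hlb col
  have h2 := hub col
  omega

end E3sec


section E3equiv

variable (q m' : ℕ) (a : Fin q → ℕ) (hsa2 : ∑ j, a j = 2 * m')
  (hqimp : m' ≠ 0 → 0 < q)

noncomputable def E3 :
    {o : Fin q → ℕ // (∀ j, o j ≤ a j) ∧ (∑ j, o j = m') ∧
        ∀ j : Fin q, (∑ i ∈ univ.filter (· ≤ j), (a i - o i))
          ≤ ∑ i ∈ univ.filter (· < j), o i} ≃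
      {T : Fin 2 → Fin m' → ℕ //
        (∀ i, Monotone (T i)) ∧
        (∀ j, T 0 j < T 1 j) ∧
        (∀ j : Fin q, entryCount T ((j : ℕ) + 1) = a j) ∧
        (∀ i j, 1 ≤ T i j ∧ T i j ≤ q)} where
  toFun := fun op => ⟨![rowFn op.1, rowFn (fun i => a i - op.1 i)], by
    obtain ⟨o, ho, hSo, hbal⟩ := op
    have hSc : ∑ j, (a j - o j) = m' := by
      have h1 : ∑ j, ((a j - o j) + o j) = ∑ j, a j :=
        sum_congr rfl fun j _ => by have := ho j; omega
      rw [sum_add_distrib] at h1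
      omega
    refine ⟨?_, ?_, ?_, ?_⟩
    · intro i
      fin_cases i
      · simpa using rowFn_mono o
      · simpa using rowFn_mono (fun i => a i - o i)
    · intro col
      simp only [Matrix.cons_val_zero, Matrix.cons_val_one, Matrix.head_cons]
      exact rowFn_strict a o ho hSo (fun j => hbal j) col
    · intro j
      rw [entry_split]
      simp only [Matrix.cons_val_zero, Matrix.cons_val_one, Matrix.head_cons]
      show (univ.filter fun col => rowFn o col = j.val + 1).card + (univ.filter fun col => rowFn (fun i => a i - o i) col = j.val + 1).card = a j
      rw [rowFn_count o hSo j, rowFn_count (fun i => a i - o i) hSc j]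
      have := ho j
      omega
    · intro i col
      have hq1 : 0 < q := hqimp (by have := col.pos; omega)
      fin_cases i
      · simp only [Matrix.cons_val_zero]
        exact ⟨Nat.le_add_right 1 _, rowFn_le o hSo hq1 col⟩
      · simp only [Matrix.cons_val_one, Matrix.head_cons]
        exact ⟨Nat.le_add_right 1 _, rowFn_le (fun i => a i - o i) hSc hq1 col⟩⟩
  invFun := fun Tp => ⟨fun j => (univ.filter fun col => Tp.1 0 col = (j : ℕ) + 1).card, by
    obtain ⟨T, hmono, hstrict, hcontent, hbounds⟩ := Tp
    simp only []
    have hlb0 : ∀ col, 1 ≤ T 0 col := fun col => (hbounds 0 col).1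
    have hub0 : ∀ col, T 0 col ≤ q := fun col => (hbounds 0 col).2
    have hlb1 : ∀ col, 1 ≤ T 1 col := fun col => (hbounds 1 col).1
    have hub1 : ∀ col, T 1 col ≤ q := fun col => (hbounds 1 col).2
    have hsplit : ∀ j : Fin q, (univ.filter fun col => T 0 col = (j : ℕ) + 1).card
        + (univ.filter fun col => T 1 col = (j : ℕ) + 1).card = a j := by
      intro j
      rw [← entry_split]
      exact hcontent j
    refine ⟨fun j => by have := hsplit j; omega, ?_, ?_⟩
    · rcases Nat.eq_zero_or_pos m' with hm | hm
      · have hemp : IsEmpty (Fin m') := by rw [hm]; exact Fin.isEmpty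
        have hz : ∀ j : Fin q, (univ.filter fun col => T 0 col = (j : ℕ) + 1).card = 0 := by
          intro j
          rw [card_eq_zero]
          apply Finset.eq_empty_of_isEmpty
        rw [sum_congr rfl (fun j _ => hz j)]
        simp [hm]
      · have hq1 : 0 < q := hqimp (by omega)
        have h1 := count_cum_le (q := q) (T 0) hlb0 hub0 ⟨q - 1, by omega⟩
        have h2 : (univ.filter fun col : Fin m' => T 0 col ≤ (⟨q - 1, by omega⟩ : Fin q).val + 1)
            = univ := by
          rw [eq_univ_iff_forall]
          intro col
          simp only [mem_filter, mem_univ, true_and]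
          have := hub0 col
          show T 0 col ≤ q - 1 + 1
          omega
        have h3 := Sv_top (q := q)
          (fun i : Fin q => (univ.filter fun col => T 0 col = (i : ℕ) + 1).card) hq1
        rw [h2] at h1
        rw [h1] at h3
        rw [← h3]
        rw [card_univ, Fintype.card_fin]
    · intro j
      have e1 : ∑ i ∈ univ.filter (· ≤ j),
            (a i - (univ.filter fun col => T 0 col = (i : ℕ) + 1).card)
          = ∑ i ∈ univ.filter (· ≤ j),
            (univ.filter fun col => T 1 col = (i : ℕ) + 1).card :=
        sum_congr rfl fun i _ => by have := hsplit i; omega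
      have e2 := count_cum_le (q := q) (T 1) hlb1 hub1 j
      have e3 := count_cum_lt (q := q) (T 0) hlb0 hub0 j
      have hsub : (univ.filter fun col : Fin m' => T 1 col ≤ (j : ℕ) + 1)
          ⊆ univ.filter fun col : Fin m' => T 0 col ≤ (j : ℕ) := by
        intro col hcol
        simp only [mem_filter, mem_univ, true_and] at hcol ⊢
        have := hstrict col
        omega
      have hc := card_le_card hsub
      have e2' : ∑ i ∈ univ.filter (· ≤ j),
            (univ.filter fun col => T 1 col = (i : ℕ) + 1).card
          = (univ.filter fun col : Fin m' => T 1 col ≤ (j : ℕ) + 1).card := e2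
      have e3' : ∑ i ∈ univ.filter (· < j),
            (univ.filter fun col => T 0 col = (i : ℕ) + 1).card
          = (univ.filter fun col : Fin m' => T 0 col ≤ (j : ℕ)).card := e3
      rw [e1]
      omega⟩
  left_inv := fun op => by
    obtain ⟨o, ho, hSo, hbal⟩ := op
    apply Subtype.ext
    funext j
    show (univ.filter fun col => ![rowFn o, rowFn (fun i => a i - o i)] 0 col = (j : ℕ) + 1).card
      = o j
    simp only [Matrix.cons_val_zero]
    exact rowFn_count o hSo j
  right_inv := fun Tp => by
    obtain ⟨T, hmono, hstrict, hcontent, hbounds⟩ := Tp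
    apply Subtype.ext
    have hlb0 : ∀ col, 1 ≤ T 0 col := fun col => (hbounds 0 col).1
    have hub0 : ∀ col, T 0 col ≤ q := fun col => (hbounds 0 col).2
    have hlb1 : ∀ col, 1 ≤ T 1 col := fun col => (hbounds 1 col).1
    have hub1 : ∀ col, T 1 col ≤ q := fun col => (hbounds 1 col).2
    have hsplit : ∀ j : Fin q, (univ.filter fun col => T 0 col = (j : ℕ) + 1).card
        + (univ.filter fun col => T 1 col = (j : ℕ) + 1).card = a j := by
      intro j
      rw [← entry_split]
      exact hcontent j
    funext r
    fin_cases r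
    · show ![rowFn (fun j : Fin q => (univ.filter fun col => T 0 col = (j : ℕ) + 1).card),
        rowFn (fun i : Fin q =>
          a i - (univ.filter fun col => T 0 col = (i : ℕ) + 1).card)] 0 = T 0
      simp only [Matrix.cons_val_zero]
      funext col
      exact mono_canon (T 0) (hmono 0) hlb0 hub0 col
    · show ![rowFn (fun j : Fin q => (univ.filter fun col => T 0 col = (j : ℕ) + 1).card),
        rowFn (fun i : Fin q =>
          a i - (univ.filter fun col => T 0 col = (i : ℕ) + 1).card)] 1 = T 1
      simp only [Matrix.cons_val_one, Matrix.head_cons]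
      have hfun : (fun i : Fin q => a i - (univ.filter fun col => T 0 col = (i : ℕ) + 1).card)
          = fun i : Fin q => (univ.filter fun col => T 1 col = (i : ℕ) + 1).card := by
        funext i
        have := hsplit i
        omega
      rw [hfun]
      funext col
      exact mono_canon (T 1) (hmono 1) hlb1 hub1 col

end E3equiv

end NCMaux

/-- Given separated finite sets `A 1, …, A q` on the real line with
`|A j| = a j + 1` and `Σ a j = 2d - 2`, the number of non-crossing perfect matchings of
`2d - 2` linearly ordered points, partitioned into `q` consecutive groups of sizes
`a 1, …, a q` (via a monotone surjective grouping map `g` with fibers of cardinality `a j`),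
with no chord joining two points of the same group, equals the Kostka number
`K_{(a 1, …, a q)}` of shape `2 × (d-1)`, i.e. the number of SSYT of shape `2 × (d-1)`
in which the entry `j` appears exactly `a j` times. -/
theorem card_grouped_noncrossing_matchings_eq_kostka
    (d q : ℕ) (hd : 1 ≤ d) (a : Fin q → ℕ)
    (A : Fin q → Finset ℝ)
    (hcard : ∀ j, (A j).card = a j + 1)
    (hsep : ∀ i j : Fin q, i < j → ∀ x ∈ A i, ∀ y ∈ A j, x < y)
    (ha : ∀ j, 1 ≤ a j) (hsum : ∑ j, a j = 2 * d - 2)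
    (g : Fin (2 * d - 2) → Fin q) (hg : Monotone g)
    (hfiber : ∀ j, (Finset.univ.filter fun i => g i = j).card = a j) :
    Nat.card {f : Fin (2 * d - 2) → Fin (2 * d - 2) //
        NoncrossingMatching f ∧ ∀ i, g (f i) ≠ g i}
    = Nat.card {T : Fin 2 → Fin (d - 1) → ℕ //
        (∀ i, Monotone (T i)) ∧
        (∀ j, T 0 j < T 1 j) ∧
        (∀ j : Fin q, entryCount T ((j : ℕ) + 1) = a j) ∧
        (∀ i j, 1 ≤ T i j ∧ T i j ≤ q)} := by

  have hNm : 2 * d - 2 = 2 * (d - 1) := by omega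
  have hqimp : (d - 1) ≠ 0 → 0 < q := by
    intro h
    rcases Nat.eq_zero_or_pos q with hq | hq
    · exfalso
      subst hq
      simp only [Finset.univ_eq_empty, Finset.sum_empty] at hsum
      omega
    · exact hq
  exact Nat.card_congr ((NCMaux.E1 g hg).trans
    ((NCMaux.E2 g hg a hfiber (d - 1) hsum hNm).trans
      (NCMaux.E3 q (d - 1) a (hsum.trans hNm) hqimp)))
end

section
/- The map described in Part A of Lemma 3 is a bijection: semistandard Young tableaux of shape 2×(d-1) with content (a_1,...,a_q) are in bijection with non-crossing perfect matchings on 2d-2 linearly ordered points grouped into consecutive blocks of sizes a_1,...,a_q such that no chord joins two points in the same block. Explicitly, given such a tableau, reading cells in a canonical order and pairing each second-row entry k with the rightmost available first-row entry m < k yields such a matching, and this map is invertible. -/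
namespace S8

open Finset

variable {N : ℕ}

/-- number of positions `i < k` with `w i = b`. -/
def cnt (w : Fin N → Bool) (b : Bool) (k : ℕ) : ℕ :=
  (univ.filter fun i : Fin N => (i : ℕ) < k ∧ w i = b).card

/-- height -/
def Hw (w : Fin N → Bool) (k : ℕ) : ℤ := (cnt w true k : ℤ) - (cnt w false k : ℤ)

lemma cnt_succ (w : Fin N → Bool) (b : Bool) (p : Fin N) :
    cnt w b ((p : ℕ) + 1) = cnt w b p + if w p = b then 1 else 0 := by
  unfold cnt
  by_cases h : w p = b
  · rw [if_pos h]
    have e : (univ.filter fun i : Fin N => (i : ℕ) < (p : ℕ) + 1 ∧ w i = b)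
        = insert p (univ.filter fun i : Fin N => (i : ℕ) < (p : ℕ) ∧ w i = b) := by
      ext i
      simp only [mem_filter, mem_insert, mem_univ, true_and]
      constructor
      · rintro ⟨hi, hb⟩
        rcases Nat.lt_succ_iff_lt_or_eq.mp hi with h' | h'
        · exact Or.inr ⟨h', hb⟩
        · exact Or.inl (Fin.ext h')
      · rintro (rfl | ⟨hi, hb⟩)
        · exact ⟨Nat.lt_succ_self _, h⟩
        · exact ⟨Nat.lt_succ_of_lt hi, hb⟩
    rw [e, card_insert_of_notMem]
    simp
  · rw [if_neg h, add_zero]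
    apply congrArg
    apply filter_congr
    intro i _
    constructor
    · rintro ⟨hi, hb⟩
      refine ⟨?_, hb⟩
      rcases Nat.lt_succ_iff_lt_or_eq.mp hi with h' | h'
      · exact h'
      · exact absurd hb (by rw [Fin.ext h']; exact h)
    · rintro ⟨hi, hb⟩; exact ⟨Nat.lt_succ_of_lt hi, hb⟩

lemma cnt_mono (w : Fin N → Bool) (b : Bool) {k k' : ℕ} (h : k ≤ k') :
    cnt w b k ≤ cnt w b k' := by
  apply card_le_card
  intro i hi
  simp only [mem_filter] at hi ⊢
  exact ⟨hi.1, lt_of_lt_of_le hi.2.1 h, hi.2.2⟩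

lemma cnt_of_ge (w : Fin N → Bool) (b : Bool) {k : ℕ} (h : N ≤ k) :
    cnt w b k = cnt w b N := by
  unfold cnt
  congr 1
  apply filter_congr
  intro i _
  simp only [eq_iff_iff, and_congr_left_iff]
  intro _
  simp [i.isLt, lt_of_lt_of_le i.isLt h]

lemma Hw_succ (w : Fin N → Bool) (p : Fin N) :
    Hw w ((p : ℕ) + 1) = Hw w p + if w p then 1 else -1 := by
  unfold Hw
  rw [cnt_succ, cnt_succ]
  cases h : w p <;> simp [h] <;> ring

lemma Hw_zero (w : Fin N → Bool) : Hw w 0 = 0 := by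
  simp [Hw, cnt]

lemma cnt_true_add_cnt_false (w : Fin N → Bool) (k : ℕ) :
    cnt w true k + cnt w false k = (univ.filter fun i : Fin N => (i : ℕ) < k).card := by
  unfold cnt
  have h1 : (univ.filter fun i : Fin N => (i : ℕ) < k ∧ w i = true)
      = (univ.filter fun i : Fin N => (i : ℕ) < k).filter (fun i => w i = true) := by
    rw [filter_filter]
  have h2 : (univ.filter fun i : Fin N => (i : ℕ) < k ∧ w i = false)
      = (univ.filter fun i : Fin N => (i : ℕ) < k).filter (fun i => ¬ (w i = true)) := by
    rw [filter_filter]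
    apply filter_congr; intro i _; simp
  rw [h1, h2, card_filter_add_card_filter_not]

end S8
section DEV2
namespace S8
open Finset
variable {N q : ℕ}

/-- The conditions on a word making it correspond to a matching/tableau. -/
structure WordOK (g : Fin N → Fin q) (w : Fin N → Bool) : Prop where
  ballot : ∀ k, cnt w false k ≤ cnt w true k
  bal : cnt w true N = cnt w false N
  blocks : ∀ i i' : Fin N, i ≤ i' → g i = g i' → w i = true → w i' = true

variable {g : Fin N → Fin q} {w : Fin N → Bool}

lemma Hw_nonneg (hw : WordOK g w) (k : ℕ) : 0 ≤ Hw w k := by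
  have := hw.ballot k
  unfold Hw
  omega

lemma Hw_N (hw : WordOK g w) : Hw w N = 0 := by
  unfold Hw
  rw [hw.bal]
  ring

def Aset (w : Fin N → Bool) (i : Fin N) : Finset (Fin N) :=
  univ.filter fun j => (i : ℕ) < (j : ℕ) ∧ Hw w ((j : ℕ) + 1) ≤ Hw w i

def Bset (w : Fin N → Bool) (i : Fin N) : Finset (Fin N) :=
  univ.filter fun j => (j : ℕ) < (i : ℕ) ∧ Hw w j ≤ Hw w ((i : ℕ) + 1)

noncomputable def fOf (w : Fin N → Bool) (i : Fin N) : Fin N :=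
  if w i then (if h : (Aset w i).Nonempty then (Aset w i).min' h else i)
  else (if h : (Bset w i).Nonempty then (Bset w i).max' h else i)

lemma Aset_nonempty (hw : WordOK g w) {i : Fin N} (hi : w i = true) :
    (Aset w i).Nonempty := by
  have hN : 0 < N := i.pos
  have hsucc : Hw w ((i : ℕ) + 1) = Hw w i + 1 := by rw [Hw_succ, hi]; simp
  by_cases hil : (i : ℕ) = N - 1
  · exfalso
    have h1 : (i : ℕ) + 1 = N := by omega
    have h2 : Hw w ((i : ℕ) + 1) = 0 := by rw [h1]; exact Hw_N hw
    have := Hw_nonneg hw i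
    omega
  · refine ⟨⟨N - 1, by omega⟩, ?_⟩
    simp only [Aset, mem_filter, mem_univ, true_and]
    have hi2 : (i : ℕ) < N - 1 := by have := i.isLt; omega
    refine ⟨hi2, ?_⟩
    have h1 : (N - 1) + 1 = N := by omega
    rw [h1, Hw_N hw]
    exact Hw_nonneg hw i

lemma Bset_nonempty (hw : WordOK g w) {i : Fin N} (hi : w i = false) :
    (Bset w i).Nonempty := by
  have hN : 0 < N := i.pos
  have hsucc : Hw w ((i : ℕ) + 1) = Hw w i - 1 := by rw [Hw_succ, hi]; simp only [Bool.false_eq_true, if_false]; omega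
  have hipos : (i : ℕ) ≠ 0 := by
    intro h0
    have h1 : Hw w ((i : ℕ)) = 0 := by rw [h0]; exact Hw_zero w
    have := Hw_nonneg hw ((i : ℕ) + 1)
    omega
  refine ⟨⟨0, hN⟩, ?_⟩
  simp only [Bset, mem_filter, mem_univ, true_and]
  constructor
  · omega
  · rw [Hw_zero]
    exact Hw_nonneg hw _

lemma fOf_open_eq (hi : w i = true) (h : (Aset w i).Nonempty) :
    fOf w i = (Aset w i).min' h := by
  simp [fOf, hi, dif_pos h]

lemma fOf_close_eq (hi : w i = false) (h : (Bset w i).Nonempty) :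
    fOf w i = (Bset w i).max' h := by
  simp [fOf, hi, dif_pos h]

lemma fOf_open_mem (hw : WordOK g w) {i : Fin N} (hi : w i = true) :
    fOf w i ∈ Aset w i := by
  rw [fOf_open_eq hi (Aset_nonempty hw hi)]
  exact min'_mem _ _

lemma fOf_open_min (hw : WordOK g w) {i : Fin N} (hi : w i = true)
    {j : Fin N} (hj : j ∈ Aset w i) : fOf w i ≤ j := by
  rw [fOf_open_eq hi (Aset_nonempty hw hi)]
  exact min'_le _ _ hj

lemma fOf_close_mem (hw : WordOK g w) {i : Fin N} (hi : w i = false) :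
    fOf w i ∈ Bset w i := by
  rw [fOf_close_eq hi (Bset_nonempty hw hi)]
  exact max'_mem _ _

lemma fOf_close_max (hw : WordOK g w) {i : Fin N} (hi : w i = false)
    {j : Fin N} (hj : j ∈ Bset w i) : j ≤ fOf w i := by
  rw [fOf_close_eq hi (Bset_nonempty hw hi)]
  exact le_max' _ _ hj

lemma open_lt (hw : WordOK g w) {i : Fin N} (hi : w i = true) :
    (i : ℕ) < (fOf w i : ℕ) :=
  (mem_filter.mp (fOf_open_mem hw hi)).2.1

lemma close_lt (hw : WordOK g w) {i : Fin N} (hi : w i = false) :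
    (fOf w i : ℕ) < (i : ℕ) :=
  (mem_filter.mp (fOf_close_mem hw hi)).2.1

/-- heights strictly above `Hw w i` on `(i, fOf w i]`. -/
lemma open_mid (hw : WordOK g w) {i : Fin N} (hi : w i = true) :
    ∀ m : ℕ, (i : ℕ) < m → m ≤ (fOf w i : ℕ) → Hw w i < Hw w m := by
  intro m h1 h2
  by_cases hm : m = (i : ℕ) + 1
  · rw [hm, Hw_succ, hi]; simp
  · have hm2 : (i : ℕ) + 1 < m := by omega
    have hmN : m - 1 < N := by
      have := (fOf w i).isLt; omega
    set j' : Fin N := ⟨m - 1, hmN⟩ with hj'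
    by_contra hcon
    push_neg at hcon
    have hjA : j' ∈ Aset w i := by
      simp only [Aset, mem_filter, mem_univ, true_and, hj']
      constructor
      · omega
      · have : m - 1 + 1 = m := by omega
        rw [this]; exact hcon
    have := fOf_open_min hw hi hjA
    have h3 : (fOf w i : ℕ) ≤ m - 1 := this
    omega

lemma close_mid (hw : WordOK g w) {i : Fin N} (hi : w i = false) :
    ∀ m : ℕ, (fOf w i : ℕ) < m → m ≤ (i : ℕ) → Hw w ((i : ℕ) + 1) < Hw w m := by
  intro m h1 h2
  by_cases hm : m = (i : ℕ)
  · have : Hw w ((i : ℕ) + 1) = Hw w i - 1 := by rw [Hw_succ, hi]; simp only [Bool.false_eq_true, if_false]; omega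
    rw [hm]; omega
  · have hmi : m < (i : ℕ) := by omega
    have hmN : m < N := by have := i.isLt; omega
    set j' : Fin N := ⟨m, hmN⟩ with hj'
    by_contra hcon
    push_neg at hcon
    have hjB : j' ∈ Bset w i := by
      simp only [Bset, mem_filter, mem_univ, true_and, hj']
      exact ⟨hmi, hcon⟩
    have := fOf_close_max hw hi hjB
    have h3 : m ≤ (fOf w i : ℕ) := this
    omega

lemma open_partner (hw : WordOK g w) {i : Fin N} (hi : w i = true) :
    w (fOf w i) = false ∧ Hw w ((fOf w i : ℕ) + 1) = Hw w i := by
  have hmem := mem_filter.mp (fOf_open_mem hw hi)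
  have hle : Hw w ((fOf w i : ℕ) + 1) ≤ Hw w i := hmem.2.2
  have hgt : Hw w i < Hw w (fOf w i) :=
    open_mid hw hi (fOf w i) hmem.2.1 le_rfl
  have hstep := Hw_succ w (fOf w i)
  cases hwf : w (fOf w i) with
  | true => rw [hwf] at hstep; simp at hstep; omega
  | false => rw [hwf] at hstep; simp at hstep; exact ⟨rfl, by omega⟩

lemma close_partner (hw : WordOK g w) {i : Fin N} (hi : w i = false) :
    w (fOf w i) = true ∧ Hw w (fOf w i) = Hw w ((i : ℕ) + 1) := by
  have hmem := mem_filter.mp (fOf_close_mem hw hi)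
  have hle : Hw w (fOf w i) ≤ Hw w ((i : ℕ) + 1) := hmem.2.2
  have hlt : (fOf w i : ℕ) + 1 ≤ (i : ℕ) := by
    have := hmem.2.1
    omega
  have hgt : Hw w ((i : ℕ) + 1) < Hw w ((fOf w i : ℕ) + 1) :=
    close_mid hw hi ((fOf w i : ℕ) + 1) (by omega) hlt
  have hstep := Hw_succ w (fOf w i)
  cases hwf : w (fOf w i) with
  | false => rw [hwf] at hstep; simp at hstep; omega
  | true => rw [hwf] at hstep; simp at hstep; exact ⟨rfl, by omega⟩

lemma fOf_involutive (hw : WordOK g w) : Function.Involutive (fOf w) := by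
  intro i
  cases hi : w i with
  | true =>
    have hwf := (open_partner hw hi).1
    have hH := (open_partner hw hi).2
    have hij : (i : ℕ) < (fOf w i : ℕ) := open_lt hw hi
    apply le_antisymm
    · by_contra hcon
      push_neg at hcon
      have hcon' : (i : ℕ) < (fOf w (fOf w i) : ℕ) := hcon
      have hmem := mem_filter.mp (fOf_close_mem hw hwf)
      have hmid := open_mid hw hi (fOf w (fOf w i) : ℕ) hcon' (le_of_lt hmem.2.1)
      have hle : Hw w ((fOf w (fOf w i)) : ℕ) ≤ Hw w ((fOf w i : ℕ) + 1) := hmem.2.2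
      rw [hH] at hle
      omega
    · apply fOf_close_max hw hwf
      simp only [Bset, mem_filter, mem_univ, true_and]
      exact ⟨hij, le_of_eq (by rw [hH])⟩
  | false =>
    have hwf := (close_partner hw hi).1
    have hH := (close_partner hw hi).2
    have hij : (fOf w i : ℕ) < (i : ℕ) := close_lt hw hi
    apply le_antisymm
    · apply fOf_open_min hw hwf
      simp only [Aset, mem_filter, mem_univ, true_and]
      exact ⟨hij, le_of_eq (by rw [hH])⟩
    · by_contra hcon
      push_neg at hcon
      have hcon' : (fOf w (fOf w i) : ℕ) < (i : ℕ) := hcon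
      have hmem := mem_filter.mp (fOf_open_mem hw hwf)
      have hmid := close_mid hw hi ((fOf w (fOf w i) : ℕ) + 1)
        (by have : (fOf w i : ℕ) < (fOf w (fOf w i) : ℕ) := hmem.2.1; omega) (by omega)
      have hle : Hw w ((fOf w (fOf w i) : ℕ) + 1) ≤ Hw w (fOf w i) := hmem.2.2
      rw [hH] at hle
      omega

lemma fOf_ne (hw : WordOK g w) (i : Fin N) : fOf w i ≠ i := by
  cases hi : w i with
  | true => have := open_lt hw hi; intro h; rw [h] at this; omega
  | false => have := close_lt hw hi; intro h; rw [h] at this; omega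

lemma fOf_noncrossing (hw : WordOK g w) :
    ¬∃ a c : Fin N, a < c ∧ c < fOf w a ∧ fOf w a < fOf w c := by
  rintro ⟨a, c, hac, hcfa, hfafc⟩
  have hwa : w a = true := by
    cases h : w a with
    | true => rfl
    | false =>
      have := close_lt hw h
      have h1 : (a : ℕ) < (c : ℕ) := hac
      have h2 : (c : ℕ) < (fOf w a : ℕ) := hcfa
      omega
  have hwc : w c = true := by
    cases h : w c with
    | true => rfl
    | false =>
      have := close_lt hw h
      have h1 : (c : ℕ) < (fOf w a : ℕ) := hcfa
      have h2 : (fOf w a : ℕ) < (fOf w c : ℕ) := hfafc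
      omega
  have hHa := (open_partner hw hwa).2
  have h1 : Hw w a < Hw w c := open_mid hw hwa c hac (le_of_lt hcfa)
  have h2 : Hw w c < Hw w ((fOf w a : ℕ) + 1) := by
    have hx : (c : ℕ) < (fOf w a : ℕ) + 1 := by
      have : (c : ℕ) < (fOf w a : ℕ) := hcfa; omega
    exact open_mid hw hwc ((fOf w a : ℕ) + 1) hx (by
      have : (fOf w a : ℕ) < (fOf w c : ℕ) := hfafc; omega)
  omega

lemma fOf_blocks (hw : WordOK g w) (i : Fin N) : g (fOf w i) ≠ g i := by
  cases hi : w i with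
  | true =>
    intro hgeq
    have hlt : i ≤ fOf w i := le_of_lt (open_lt hw hi)
    have := hw.blocks i (fOf w i) hlt hgeq.symm hi
    rw [(open_partner hw hi).1] at this
    exact Bool.noConfusion this
  | false =>
    intro hgeq
    have hlt : fOf w i ≤ i := le_of_lt (close_lt hw hi)
    have h2 := hw.blocks (fOf w i) i hlt hgeq (close_partner hw hi).1
    rw [hi] at h2
    exact Bool.noConfusion h2

end S8
end DEV2
section DEV3
namespace S8
open Finset
variable {N q : ℕ} {g : Fin N → Fin q}

def wOf (f : Fin N → Fin N) : Fin N → Bool := fun i => decide (i < f i)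

variable {f : Fin N → Fin N}

lemma wOf_true {i : Fin N} (h : i < f i) : wOf f i = true := by simp [wOf, h]

lemma wOf_iff {i : Fin N} : wOf f i = true ↔ i < f i := by simp [wOf]

lemma wOf_false_iff (hne : ∀ i, f i ≠ i) {i : Fin N} : wOf f i = false ↔ f i < i := by
  simp only [wOf, decide_eq_false_iff_not, not_lt]
  constructor
  · intro h; exact lt_of_le_of_ne h (hne i)
  · intro h; exact le_of_lt h

/-- interval closure for noncrossing matchings -/
lemma interval_closed (hinv : Function.Involutive f) (hne : ∀ i, f i ≠ i)
    (hnc : ¬∃ a c : Fin N, a < c ∧ c < f a ∧ f a < f c)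
    {i j : Fin N} (hif : i < f i) (h1 : i < j) (h2 : j < f i) :
    i < f j ∧ f j < f i := by
  have hji : j ≠ f i := ne_of_lt h2
  have hfj_ne : f j ≠ f i := fun h => (ne_of_lt h1).symm (by
    have := hinv.injective h; exact this)
  have hfj_ne_i : f j ≠ i := fun h => hji (by rw [← hinv j, h])
  rcases lt_or_gt_of_ne (hne j) with hjc | hjo
  · -- f j < j : closer
    rcases lt_trichotomy (f j) i with h3 | h3 | h3
    · exfalso
      apply hnc
      exact ⟨f j, i, h3, by rw [hinv]; exact h1, by rw [hinv]; exact h2⟩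
    · exact absurd h3 hfj_ne_i
    · exact ⟨h3, lt_trans hjc h2⟩
  · -- j < f j : opener
    rcases lt_trichotomy (f j) (f i) with h3 | h3 | h3
    · exact ⟨lt_trans h1 hjo, h3⟩
    · exact absurd h3 hfj_ne
    · exfalso
      apply hnc
      exact ⟨i, j, h1, h2, h3⟩

section withf
variable (hinv : Function.Involutive f) (hne : ∀ i, f i ≠ i)
  (hnc : ¬∃ a c : Fin N, a < c ∧ c < f a ∧ f a < f c)

include hinv hne in
lemma wOf_ballot : ∀ k, cnt (wOf f) false k ≤ cnt (wOf f) true k := by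
  intro k
  apply card_le_card_of_injOn f
  · intro p hp
    simp only [mem_coe, mem_filter, mem_univ, true_and] at hp ⊢
    obtain ⟨hpk, hpf⟩ := hp
    have hfp : f p < p := (wOf_false_iff hne).mp hpf
    refine ⟨lt_trans (by exact hfp) hpk, wOf_true ?_⟩
    rw [hinv]; exact hfp
  · intro x _ y _ hxy
    exact hinv.injective hxy

include hinv hne in
lemma wOf_bal : cnt (wOf f) true N = cnt (wOf f) false N := by
  apply card_bij' (fun p _ => f p) (fun p _ => f p)
  · intro p hp
    simp only [mem_filter, mem_univ, true_and] at hp ⊢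
    have hfp : p < f p := wOf_iff.mp hp.2
    refine ⟨(f p).isLt, (wOf_false_iff hne).mpr ?_⟩
    rw [hinv]; exact hfp
  · intro p hp
    simp only [mem_filter, mem_univ, true_and] at hp ⊢
    have hfp : f p < p := (wOf_false_iff hne).mp hp.2
    refine ⟨(f p).isLt, wOf_true ?_⟩
    rw [hinv]; exact hfp
  · intro p _; exact hinv p
  · intro p _; exact hinv p

include hinv hne hnc in
lemma wOf_blocks (hg : Monotone g) (hb : ∀ i, g (f i) ≠ g i) :
    ∀ i i' : Fin N, i ≤ i' → g i = g i' → wOf f i = true → wOf f i' = true := by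
  intro i i' hle hgeq hwi
  by_contra hwi'
  rw [Bool.not_eq_true] at hwi'
  have h1 : i < f i := wOf_iff.mp hwi
  have h2 : f i' < i' := (wOf_false_iff hne).mp hwi'
  have hii' : i < i' := by
    rcases lt_or_eq_of_le hle with h | h
    · exact h
    · exfalso; rw [h] at hwi; rw [hwi] at hwi'; exact Bool.noConfusion hwi'
  have hgfi : g i < g (f i) := by
    rcases lt_or_ge i (f i) with _ | h
    · exact lt_of_le_of_ne (hg (le_of_lt h1)) (fun h => hb i h.symm)
    · exact absurd h1 (not_lt.mpr h)
  have hgfi' : g (f i') < g i' := lt_of_le_of_ne (hg (le_of_lt h2)) (hb i')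
  have hfi'_lt : f i' < i := by
    by_contra hcon
    push_neg at hcon
    have := hg hcon
    rw [hgeq] at this
    exact absurd this (not_le.mpr hgfi')
  have hfi_gt : i' < f i := by
    by_contra hcon
    push_neg at hcon
    have := hg hcon
    rw [← hgeq] at this
    exact absurd this (not_le.mpr hgfi)
  apply hnc
  refine ⟨f i', i, hfi'_lt, ?_, ?_⟩
  · rw [hinv]; exact hii'
  · rw [hinv]; exact hfi_gt

end withf

/-- splitting a prefix count at an intermediate point -/
lemma cnt_split (w : Fin N → Bool) (b : Bool) {k m : ℕ} (h : k ≤ m) :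
    cnt w b m = cnt w b k +
      (univ.filter fun p : Fin N => k ≤ (p : ℕ) ∧ (p : ℕ) < m ∧ w p = b).card := by
  unfold cnt
  rw [← card_union_of_disjoint]
  · congr 1
    ext p
    simp only [mem_union, mem_filter, mem_univ, true_and]
    constructor
    · rintro ⟨hpm, hb⟩
      rcases lt_or_ge (p : ℕ) k with h' | h'
      · exact Or.inl ⟨h', hb⟩
      · exact Or.inr ⟨h', hpm, hb⟩
    · rintro (⟨hpk, hb⟩ | ⟨_, hpm, hb⟩)
      · exact ⟨lt_of_lt_of_le hpk h, hb⟩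
      · exact ⟨hpm, hb⟩
  · rw [disjoint_left]
    intro p hp hp'
    simp only [mem_filter, mem_univ, true_and] at hp hp'
    omega

end S8
end DEV3
section DEV4
namespace S8
open Finset
variable {N q : ℕ} {g : Fin N → Fin q} {f : Fin N → Fin N}

section withf2
variable (hinv : Function.Involutive f) (hne : ∀ i, f i ≠ i)
  (hnc : ¬∃ a c : Fin N, a < c ∧ c < f a ∧ f a < f c)

include hinv hne hnc in
lemma wOf_Hw_mid {i : Fin N} (hif : i < f i) :
    ∀ m : ℕ, (i : ℕ) < m → m ≤ (f i : ℕ) → Hw (wOf f) i < Hw (wOf f) m := by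
  intro m h1 h2
  have hsp := fun b => cnt_split (wOf f) b (k := (i : ℕ) + 1) (m := m) (by omega)
  have hstep : Hw (wOf f) ((i : ℕ) + 1) = Hw (wOf f) i + 1 := by
    rw [Hw_succ, wOf_true hif]; simp
  have hcard : (univ.filter fun p : Fin N =>
        (i : ℕ) + 1 ≤ (p : ℕ) ∧ (p : ℕ) < m ∧ wOf f p = false).card ≤
      (univ.filter fun p : Fin N =>
        (i : ℕ) + 1 ≤ (p : ℕ) ∧ (p : ℕ) < m ∧ wOf f p = true).card := by
    apply card_le_card_of_injOn f
    · intro p hp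
      simp only [mem_coe, mem_filter, mem_univ, true_and] at hp ⊢
      obtain ⟨hp1, hp2, hp3⟩ := hp
      have hfp : f p < p := (wOf_false_iff hne).mp hp3
      have hip : i < p := by rw [Fin.lt_def]; omega
      have hpfi : p < f i := by rw [Fin.lt_def]; omega
      obtain ⟨hl, _⟩ := interval_closed hinv hne hnc hif hip hpfi
      have : (i : ℕ) < (f p : ℕ) := hl
      refine ⟨by omega, by omega, wOf_true ?_⟩
      rw [hinv]; exact hfp
    · intro x _ y _ hxy; exact hinv.injective hxy
  have e1 := hsp true
  have e2 := hsp false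
  unfold Hw at *
  omega

include hinv hne hnc in
lemma wOf_Hw_partner {i : Fin N} (hif : i < f i) :
    Hw (wOf f) ((f i : ℕ) + 1) = Hw (wOf f) i := by
  have h2 : (i : ℕ) + 1 ≤ (f i : ℕ) := hif
  have hsp := fun b => cnt_split (wOf f) b (k := (i : ℕ) + 1) (m := (f i : ℕ)) h2
  have hstep : Hw (wOf f) ((i : ℕ) + 1) = Hw (wOf f) i + 1 := by
    rw [Hw_succ, wOf_true hif]; simp
  have hwfi : wOf f (f i) = false := by
    rw [wOf_false_iff hne, hinv]; exact hif
  have hstep2 : Hw (wOf f) ((f i : ℕ) + 1) = Hw (wOf f) (f i) - 1 := by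
    rw [Hw_succ, hwfi]; simp only [Bool.false_eq_true, if_false]; omega
  have hcard : (univ.filter fun p : Fin N =>
        (i : ℕ) + 1 ≤ (p : ℕ) ∧ (p : ℕ) < (f i : ℕ) ∧ wOf f p = true).card =
      (univ.filter fun p : Fin N =>
        (i : ℕ) + 1 ≤ (p : ℕ) ∧ (p : ℕ) < (f i : ℕ) ∧ wOf f p = false).card := by
    apply card_bij' (fun p _ => f p) (fun p _ => f p)
    · intro p hp
      simp only [mem_filter, mem_univ, true_and] at hp ⊢
      obtain ⟨hp1, hp2, hp3⟩ := hp
      have hfp : p < f p := wOf_iff.mp hp3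
      have hip : i < p := by rw [Fin.lt_def]; omega
      have hpfi : p < f i := by rw [Fin.lt_def]; omega
      obtain ⟨hl, hr⟩ := interval_closed hinv hne hnc hif hip hpfi
      have hl' : (i : ℕ) < (f p : ℕ) := hl
      have hr' : (f p : ℕ) < (f i : ℕ) := hr
      refine ⟨by omega, by omega, ?_⟩
      rw [wOf_false_iff hne, hinv]; exact hfp
    · intro p hp
      simp only [mem_filter, mem_univ, true_and] at hp ⊢
      obtain ⟨hp1, hp2, hp3⟩ := hp
      have hfp : f p < p := (wOf_false_iff hne).mp hp3
      have hip : i < p := by rw [Fin.lt_def]; omega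
      have hpfi : p < f i := by rw [Fin.lt_def]; omega
      obtain ⟨hl, hr⟩ := interval_closed hinv hne hnc hif hip hpfi
      have hl' : (i : ℕ) < (f p : ℕ) := hl
      have hr' : (f p : ℕ) < (f i : ℕ) := hr
      refine ⟨by omega, by omega, wOf_true ?_⟩
      rw [hinv]; exact hfp
    · intro p _; exact hinv p
    · intro p _; exact hinv p
  have e1 := hsp true
  have e2 := hsp false
  unfold Hw at *
  omega

include hinv hne hnc in
lemma fOf_wOf (hg : Monotone g) (hb : ∀ i, g (f i) ≠ g i) : fOf (wOf f) = f := by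
  have hwOK : WordOK g (wOf f) :=
    ⟨wOf_ballot hinv hne, wOf_bal hinv hne, wOf_blocks hinv hne hnc hg hb⟩
  have hopen : ∀ i : Fin N, i < f i → fOf (wOf f) i = f i := by
    intro i hif
    have hwi : wOf f i = true := wOf_true hif
    have hmemA : f i ∈ Aset (wOf f) i := by
      simp only [Aset, mem_filter, mem_univ, true_and]
      exact ⟨hif, le_of_eq (wOf_Hw_partner hinv hne hnc hif)⟩
    apply le_antisymm (fOf_open_min hwOK hwi hmemA)
    -- f i ≤ fOf (wOf f) i
    have hmem := mem_filter.mp (fOf_open_mem hwOK hwi)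
    by_contra hcon
    push_neg at hcon
    have hcon' : (fOf (wOf f) i : ℕ) < (f i : ℕ) := hcon
    have h1 : (i : ℕ) < (fOf (wOf f) i : ℕ) := hmem.2.1
    have hmid := wOf_Hw_mid hinv hne hnc hif ((fOf (wOf f) i : ℕ) + 1) (by omega) (by omega)
    have := hmem.2.2
    omega
  funext i
  rcases lt_or_gt_of_ne (hne i) with h | h
  · -- f i < i : closer
    have h2 : f i < f (f i) := by rw [hinv]; exact h
    have e1 : fOf (wOf f) (f i) = f (f i) := hopen (f i) h2
    rw [hinv] at e1
    calc fOf (wOf f) i = fOf (wOf f) (fOf (wOf f) (f i)) := by rw [e1]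
    _ = f i := fOf_involutive hwOK (f i)
  · exact hopen i h

end withf2

lemma wOf_fOf {w : Fin N → Bool} (hw : WordOK g w) : wOf (fOf w) = w := by
  funext i
  cases hi : w i with
  | true =>
    apply wOf_true
    rw [Fin.lt_def]; exact open_lt hw hi
  | false =>
    rw [wOf, decide_eq_false_iff_not, not_lt, Fin.le_def]
    exact le_of_lt (close_lt hw hi)

end S8
end DEV4
section DEV5
namespace S8
open Finset
variable {n : ℕ}

/-- A down-closed subset of `Fin n` is an initial segment. -/
lemma downset_iff {D : Finset (Fin n)}
    (hD : ∀ i j : Fin n, i ≤ j → j ∈ D → i ∈ D) {i : Fin n} :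
    i ∈ D ↔ (i : ℕ) < D.card := by
  constructor
  · intro hi
    have hsub : Finset.Iic i ⊆ D := fun j hj => hD j i (mem_Iic.mp hj) hi
    have := card_le_card hsub
    rw [Fin.card_Iic] at this
    omega
  · intro hlt
    by_contra hi
    have hsub : D ⊆ Finset.Iio i := by
      intro j hj
      rw [mem_Iio]
      by_contra hcon
      push_neg at hcon
      exact hi (hD i j hcon hj)
    have := card_le_card hsub
    rw [Fin.card_Iio] at this
    omega

lemma card_lt_prefix {u : ℕ} (hu : u ≤ n) :
    (univ.filter fun p : Fin n => (p : ℕ) < u).card = u := by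
  rw [← Finset.card_range u]
  apply card_bij (fun (p : Fin n) _ => (p : ℕ))
  · intro p hp
    simp only [mem_filter, mem_univ, true_and] at hp
    simpa using hp
  · intro p _ p' _ h
    exact Fin.ext h
  · intro x hx
    rw [Finset.mem_range] at hx
    exact ⟨⟨x, lt_of_lt_of_le hx hu⟩, by simp [hx], rfl⟩

lemma card_interval {l u : ℕ} (hlu : l ≤ u) (hu : u ≤ n) :
    (univ.filter fun p : Fin n => l ≤ (p : ℕ) ∧ (p : ℕ) < u).card = u - l := by
  have hsplit : (univ.filter fun p : Fin n => (p : ℕ) < u)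
      = (univ.filter fun p : Fin n => (p : ℕ) < l)
        ∪ (univ.filter fun p : Fin n => l ≤ (p : ℕ) ∧ (p : ℕ) < u) := by
    ext p
    simp only [mem_union, mem_filter, mem_univ, true_and]
    omega
  have hdisj : Disjoint (univ.filter fun p : Fin n => (p : ℕ) < l)
      (univ.filter fun p : Fin n => l ≤ (p : ℕ) ∧ (p : ℕ) < u) := by
    rw [disjoint_left]
    intro p hp hp'
    simp only [mem_filter, mem_univ, true_and] at hp hp'
    omega
  have := card_union_of_disjoint hdisj
  rw [← hsplit, card_lt_prefix hu, card_lt_prefix (le_trans hlu hu)] at this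
  omega

variable {m q : ℕ}

/-- count of a value among entries of `s` -/
def vcnt (s : Fin m → ℕ) (v : ℕ) : ℕ := (univ.filter fun k => s k = v).card

def ccnt (s : Fin m → ℕ) (v : ℕ) : ℕ := (univ.filter fun k => s k ≤ v).card

lemma aux_single (q v c : ℕ) (h1 : 1 ≤ c) (h2 : c ≤ q) :
    ∑ u : Fin q, (if (u : ℕ) + 1 ≤ v ∧ c = (u : ℕ) + 1 then 1 else 0)
      = if c ≤ v then 1 else 0 := by
  have hcq : c - 1 < q := by omega
  rw [Finset.sum_eq_single (⟨c - 1, hcq⟩ : Fin q)]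
  · simp only
    have : c - 1 + 1 = c := by omega
    rw [this]
    by_cases h : c ≤ v
    · rw [if_pos ⟨h, rfl⟩, if_pos h]
    · rw [if_neg (fun hc => h hc.1), if_neg h]
  · intro u _ hu
    rw [if_neg]
    rintro ⟨_, hc⟩
    apply hu
    apply Fin.ext
    simp only
    omega
  · intro h
    exact absurd (mem_univ _) h

lemma ccnt_eq_sum {s : Fin m → ℕ} (hsb : ∀ k, 1 ≤ s k ∧ s k ≤ q) (v : ℕ) :
    ccnt s v = ∑ u : Fin q, if (u : ℕ) + 1 ≤ v then vcnt s ((u : ℕ) + 1) else 0 := by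
  unfold ccnt vcnt
  rw [card_filter]
  have : ∀ u : Fin q, (if (u : ℕ) + 1 ≤ v then (univ.filter fun k => s k = (u : ℕ) + 1).card else 0)
      = ∑ k : Fin m, (if (u : ℕ) + 1 ≤ v ∧ s k = (u : ℕ) + 1 then 1 else 0) := by
    intro u
    rw [card_filter]
    by_cases h : (u : ℕ) + 1 ≤ v
    · rw [if_pos h]
      apply Finset.sum_congr rfl
      intro k _
      by_cases h2 : s k = (u : ℕ) + 1
      · rw [if_pos h2, if_pos ⟨h, h2⟩]
      · rw [if_neg h2, if_neg (fun hc => h2 hc.2)]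
    · rw [if_neg h]
      symm
      apply Finset.sum_eq_zero
      intro k _
      rw [if_neg (fun hc => h hc.1)]
  rw [Finset.sum_congr rfl (fun u _ => this u), Finset.sum_comm]
  apply Finset.sum_congr rfl
  intro k _
  exact (aux_single q v (s k) (hsb k).1 (hsb k).2).symm

lemma sum_vcnt {s : Fin m → ℕ} (hsb : ∀ k, 1 ≤ s k ∧ s k ≤ q) :
    ∑ u : Fin q, vcnt s ((u : ℕ) + 1) = m := by
  have h1 : ccnt s q = m := by
    unfold ccnt
    rw [filter_true_of_mem, card_univ, Fintype.card_fin]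
    intro k _
    exact (hsb k).2
  rw [ccnt_eq_sum hsb] at h1
  refine Eq.trans ?_ h1
  apply Finset.sum_congr rfl
  intro u _
  rw [if_pos (by omega : (u : ℕ) + 1 ≤ q)]

lemma mono_le_iff {s : Fin m → ℕ} (hs : Monotone s) (j : Fin m) (v : ℕ) :
    s j ≤ v ↔ (j : ℕ) < ccnt s v := by
  unfold ccnt
  rw [← downset_iff (D := univ.filter fun k => s k ≤ v)]
  · simp
  · intro i j' hij hj'
    simp only [mem_filter, mem_univ, true_and] at hj' ⊢
    exact le_trans (hs hij) hj'

lemma mono_eq_of_counts {s t : Fin m → ℕ} (hs : Monotone s) (ht : Monotone t)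
    (hsb : ∀ k, 1 ≤ s k ∧ s k ≤ q) (htb : ∀ k, 1 ≤ t k ∧ t k ≤ q)
    (h : ∀ u : Fin q, vcnt s ((u : ℕ) + 1) = vcnt t ((u : ℕ) + 1)) : s = t := by
  have hc : ∀ v, ccnt s v = ccnt t v := by
    intro v
    rw [ccnt_eq_sum hsb, ccnt_eq_sum htb]
    apply Finset.sum_congr rfl
    intro u _
    rw [h u]
  funext j
  apply le_antisymm
  · rw [mono_le_iff hs j (t j), hc]
    rw [← mono_le_iff ht j (t j)]
  · rw [mono_le_iff ht j (s j), ← hc]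
    rw [← mono_le_iff hs j (s j)]

/-- splitting a filter card on `Fin 2 × Fin m` into the two rows. -/
lemma card_filter_fin2 {m : ℕ} (P : Fin 2 × Fin m → Prop) [DecidablePred P] :
    (univ.filter P).card
      = (univ.filter fun j : Fin m => P (0, j)).card
        + (univ.filter fun j : Fin m => P (1, j)).card := by
  rw [card_filter, card_filter, card_filter, Fintype.sum_prod_type, Fin.sum_univ_two]

end S8
end DEV5
section DEV6
namespace S8
open Finset
variable {N m q : ℕ} {g : Fin N → Fin q} {a : Fin q → ℕ} {w : Fin N → Bool}

lemma cnt_N (w : Fin N → Bool) (b : Bool) :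
    cnt w b N = (univ.filter fun p => w p = b).card := by
  unfold cnt
  congr 1
  apply filter_congr
  intro p _
  simp [p.isLt]

def rowSet (w : Fin N → Bool) (i : Fin 2) : Finset (Fin N) :=
  univ.filter fun p => w p = decide (i = 0)

lemma rowSet_zero (w : Fin N → Bool) : rowSet w 0 = univ.filter fun p => w p = true := by
  simp [rowSet]

lemma rowSet_one (w : Fin N → Bool) : rowSet w 1 = univ.filter fun p => w p = false := by
  simp [rowSet]

lemma fin2_cases (i : Fin 2) : i = 0 ∨ i = 1 := by
  rcases i with ⟨iv, h⟩
  interval_cases iv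
  · exact Or.inl rfl
  · exact Or.inr rfl

lemma rowSet_card (hw : WordOK g w) (hNm : N = 2 * m) (i : Fin 2) :
    (rowSet w i).card = m := by
  have htot : (univ.filter fun p : Fin N => w p = true).card
      + (univ.filter fun p : Fin N => w p = false).card = N := by
    have h2 : (univ.filter fun p : Fin N => w p = false)
        = univ.filter fun p : Fin N => ¬ (w p = true) := by
      apply filter_congr; intro p _; simp
    rw [h2, card_filter_add_card_filter_not, card_univ, Fintype.card_fin]
  have hbal : (univ.filter fun p : Fin N => w p = true).card
      = (univ.filter fun p : Fin N => w p = false).card := by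
    rw [← cnt_N, ← cnt_N]; exact hw.bal
  rcases fin2_cases i with rfl | rfl
  · rw [rowSet_zero]; omega
  · rw [rowSet_one]; omega

noncomputable def TOf (m : ℕ) (g : Fin N → Fin q) (w : Fin N → Bool) : Fin 2 → Fin m → ℕ := fun i j =>
  if h : (rowSet w i).card = m then (g ((rowSet w i).orderEmbOfFin h j) : ℕ) + 1 else 0

lemma TOf_eq (hw : WordOK g w) (hNm : N = 2 * m) (i : Fin 2) (j : Fin m) :
    TOf m g w i j = (g ((rowSet w i).orderEmbOfFin (rowSet_card hw hNm i) j) : ℕ) + 1 := by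
  unfold TOf
  rw [dif_pos (rowSet_card hw hNm i)]

lemma enum_count (s : Finset (Fin N)) (h : s.card = m) (P : Fin N → Prop) [DecidablePred P] :
    (univ.filter fun j : Fin m => P (s.orderEmbOfFin h j)).card = (s.filter P).card := by
  apply card_bij (fun j _ => s.orderEmbOfFin h j)
  · intro j hj
    simp only [mem_filter, mem_univ, true_and] at hj ⊢
    exact ⟨Finset.orderEmbOfFin_mem s h j, hj⟩
  · intro j _ j' _ hjj
    exact (s.orderEmbOfFin h).injective hjj
  · intro x hx
    simp only [mem_filter] at hx
    have : x ∈ Set.range (s.orderEmbOfFin h) := by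
      rw [Finset.range_orderEmbOfFin]; exact hx.1
    obtain ⟨j, hj⟩ := this
    exact ⟨j, by simp [hj, hx.2], hj⟩

lemma enum_le_count (s : Finset (Fin N)) (h : s.card = m) (j : Fin m) :
    (s.filter fun x => x ≤ s.orderEmbOfFin h j).card = (j : ℕ) + 1 := by
  rw [← enum_count s h (fun x => x ≤ s.orderEmbOfFin h j)]
  have e : (univ.filter fun k : Fin m => s.orderEmbOfFin h k ≤ s.orderEmbOfFin h j)
      = Finset.Iic j := by
    ext k
    simp only [mem_filter, mem_univ, true_and, mem_Iic]
    exact (s.orderEmbOfFin h).le_iff_le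
  rw [e, Fin.card_Iic]

lemma cnt_le_point (w : Fin N → Bool) (b : Bool) (c : Fin N) :
    cnt w b ((c : ℕ) + 1)
      = ((univ.filter fun p => w p = b).filter fun p => p ≤ c).card := by
  unfold cnt
  congr 1
  ext p
  simp only [mem_filter, mem_univ, true_and]
  rw [Fin.le_def]
  constructor
  · rintro ⟨h1, h2⟩; exact ⟨h2, by omega⟩
  · rintro ⟨h1, h2⟩; exact ⟨by omega, h1⟩

lemma TOf_mono (hw : WordOK g w) (hNm : N = 2 * m) (hg : Monotone g) (i : Fin 2) :
    Monotone (TOf m g w i) := by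
  intro j j' hjj
  rw [TOf_eq hw hNm, TOf_eq hw hNm]
  have := ((rowSet w i).orderEmbOfFin (rowSet_card hw hNm i)).monotone hjj
  have := hg this
  omega

lemma TOf_col (hw : WordOK g w) (hNm : N = 2 * m) (hg : Monotone g) (j : Fin m) :
    TOf m g w 0 j < TOf m g w 1 j := by
  rw [TOf_eq hw hNm, TOf_eq hw hNm]
  set o := (rowSet w 0).orderEmbOfFin (rowSet_card hw hNm 0) j with ho
  set c := (rowSet w 1).orderEmbOfFin (rowSet_card hw hNm 1) j with hc
  have how : w o = true := by
    have h := Finset.orderEmbOfFin_mem (rowSet w 0) (rowSet_card hw hNm 0) j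
    have h2 : w (((rowSet w 0).orderEmbOfFin (rowSet_card hw hNm 0)) j)
        = decide ((0 : Fin 2) = 0) := (mem_filter.mp h).2
    simpa using h2
  have hcw : w c = false := by
    have h := Finset.orderEmbOfFin_mem (rowSet w 1) (rowSet_card hw hNm 1) j
    have h2 : w (((rowSet w 1).orderEmbOfFin (rowSet_card hw hNm 1)) j)
        = decide ((1 : Fin 2) = 0) := (mem_filter.mp h).2
    simpa using h2
  have hoc : o < c := by
    have h1 : ((univ.filter fun p => w p = false).filter fun p => p ≤ c).card = (j : ℕ) + 1 := by
      rw [← rowSet_one]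
      exact enum_le_count _ _ j
    have h2 : (j : ℕ) + 1 ≤ ((univ.filter fun p => w p = true).filter fun p => p ≤ c).card := by
      have hb := hw.ballot ((c : ℕ) + 1)
      rw [cnt_le_point, cnt_le_point, h1] at hb
      exact hb
    by_contra hcon
    push_neg at hcon
    have hne : c ≠ o := by
      intro h; rw [h, how] at hcw; exact Bool.noConfusion hcw
    have hco : c < o := lt_of_le_of_ne hcon hne
    have hsub : ((univ.filter fun p => w p = true).filter fun p => p ≤ c)
        ⊆ ((univ.filter fun p => w p = true).filter fun p => p ≤ o).erase o := by
      intro p hp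
      simp only [mem_filter, mem_erase] at hp ⊢
      refine ⟨?_, hp.1, le_trans hp.2 (le_of_lt hco)⟩
      intro hpo
      rw [hpo] at hp
      exact absurd (lt_of_le_of_lt hp.2 hco) (lt_irrefl o)
    have hocard : ((univ.filter fun p => w p = true).filter fun p => p ≤ o).card = (j : ℕ) + 1 := by
      rw [← rowSet_zero]
      exact enum_le_count _ _ j
    have homem : o ∈ (univ.filter fun p => w p = true).filter fun p => p ≤ o := by
      simp [how]
    have := card_le_card hsub
    rw [card_erase_of_mem homem, hocard] at this
    omega
  have hle : g o ≤ g c := hg (le_of_lt hoc)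
  rcases lt_or_eq_of_le hle with h | h
  · have : (g o : ℕ) < (g c : ℕ) := h
    omega
  · exfalso
    have := hw.blocks o c (le_of_lt hoc) h how
    rw [hcw] at this
    exact Bool.noConfusion this

lemma TOf_count (hw : WordOK g w) (hNm : N = 2 * m) (i : Fin 2) (t : Fin q) :
    vcnt (TOf m g w i) ((t : ℕ) + 1) = ((rowSet w i).filter fun p => g p = t).card := by
  unfold vcnt
  rw [← enum_count (rowSet w i) (rowSet_card hw hNm i) (fun p => g p = t)]
  apply congrArg Finset.card
  apply filter_congr
  intro j _
  rw [TOf_eq hw hNm]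
  constructor
  · intro h
    have h2 : (g ((rowSet w i).orderEmbOfFin (rowSet_card hw hNm i) j) : ℕ) = (t : ℕ) := by omega
    exact Fin.ext h2
  · intro h
    rw [h]

lemma filter_row_split (w : Fin N → Bool) (P : Fin N → Prop) [DecidablePred P] :
    ((univ.filter fun p => w p = true).filter P).card
      + ((univ.filter fun p => w p = false).filter P).card
      = (univ.filter P).card := by
  have h1 : (univ.filter fun p => w p = true).filter P = (univ.filter P).filter fun p => w p = true := by
    rw [filter_filter, filter_filter]
    apply filter_congr; intro p _; exact and_comm
  have h2 : (univ.filter fun p => w p = false).filter P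
      = (univ.filter P).filter fun p => ¬ (w p = true) := by
    rw [filter_filter, filter_filter]
    apply filter_congr; intro p _; simp [and_comm]
  rw [h1, h2, card_filter_add_card_filter_not]

lemma TOf_entry (hw : WordOK g w) (hNm : N = 2 * m)
    (hfiber : ∀ j, (univ.filter fun i => g i = j).card = a j) (t : Fin q) :
    (univ.filter fun c : Fin 2 × Fin m => TOf m g w c.1 c.2 = (t : ℕ) + 1).card = a t := by
  rw [card_filter_fin2]
  have e0 := TOf_count hw hNm 0 t
  have e1 := TOf_count hw hNm 1 t
  unfold vcnt at e0 e1
  rw [e0, e1, rowSet_zero, rowSet_one, filter_row_split w (fun p => g p = t)]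
  exact hfiber t

lemma TOf_bounds (hw : WordOK g w) (hNm : N = 2 * m) (i : Fin 2) (j : Fin m) :
    1 ≤ TOf m g w i j ∧ TOf m g w i j ≤ q := by
  rw [TOf_eq hw hNm]
  have := (g ((rowSet w i).orderEmbOfFin (rowSet_card hw hNm i) j)).isLt
  omega

end S8
end DEV6
section DEV7
namespace S8
open Finset
variable {N m q : ℕ} {g : Fin N → Fin q} {a : Fin q → ℕ} {w : Fin N → Bool}
  {T : Fin 2 → Fin m → ℕ}

structure TabOK (q : ℕ) (a : Fin q → ℕ) (T : Fin 2 → Fin m → ℕ) : Prop where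
  mono : ∀ i, Monotone (T i)
  col : ∀ j, T 0 j < T 1 j
  entry : ∀ t : Fin q, (univ.filter fun c : Fin 2 × Fin m => T c.1 c.2 = (t : ℕ) + 1).card = a t
  bounds : ∀ i j, 1 ≤ T i j ∧ T i j ≤ q

def cT (T : Fin 2 → Fin m → ℕ) (i : Fin 2) (t : Fin q) : ℕ := vcnt (T i) ((t : ℕ) + 1)

def bs (g : Fin N → Fin q) (t : Fin q) : ℕ := (univ.filter fun p : Fin N => g p < t).card

def wOfT (g : Fin N → Fin q) (T : Fin 2 → Fin m → ℕ) : Fin N → Bool :=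
  fun p => decide (bs g (g p) + cT T 1 (g p) ≤ (p : ℕ))

lemma bs_iff (hg : Monotone g) (t : Fin q) (p : Fin N) :
    (p : ℕ) < bs g t ↔ g p < t := by
  have h := downset_iff (D := univ.filter fun p : Fin N => g p < t)
    (fun i j hij hj => by
      simp only [mem_filter, mem_univ, true_and] at hj ⊢
      exact lt_of_le_of_lt (hg hij) hj) (i := p)
  simp only [mem_filter, mem_univ, true_and] at h
  exact h.symm

lemma gle_card (hg : Monotone g)
    (hfiber : ∀ j, (univ.filter fun i => g i = j).card = a j) (t : Fin q) :
    (univ.filter fun p : Fin N => g p ≤ t).card = bs g t + a t := by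
  have hsplit : (univ.filter fun p : Fin N => g p ≤ t)
      = (univ.filter fun p : Fin N => g p < t) ∪ (univ.filter fun p : Fin N => g p = t) := by
    ext p
    simp only [mem_union, mem_filter, mem_univ, true_and]
    rw [le_iff_lt_or_eq]
  have hdisj : Disjoint (univ.filter fun p : Fin N => g p < t)
      (univ.filter fun p : Fin N => g p = t) := by
    rw [disjoint_left]
    intro p hp hp'
    simp only [mem_filter, mem_univ, true_and] at hp hp'
    rw [hp'] at hp
    exact lt_irrefl t hp
  rw [hsplit, card_union_of_disjoint hdisj, hfiber t]
  rfl

lemma bsa_iff (hg : Monotone g)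
    (hfiber : ∀ j, (univ.filter fun i => g i = j).card = a j) (t : Fin q) (p : Fin N) :
    (p : ℕ) < bs g t + a t ↔ g p ≤ t := by
  have h := downset_iff (D := univ.filter fun p : Fin N => g p ≤ t)
    (fun i j hij hj => by
      simp only [mem_filter, mem_univ, true_and] at hj ⊢
      exact le_trans (hg hij) hj) (i := p)
  simp only [mem_filter, mem_univ, true_and] at h
  rw [gle_card hg hfiber t] at h
  exact h.symm

lemma cT_sum (hT : TabOK q a T) (t : Fin q) : cT T 0 t + cT T 1 t = a t := by
  have h := hT.entry t
  rw [card_filter_fin2] at h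
  exact h

lemma cT1_le (hT : TabOK q a T) (t : Fin q) : cT T 1 t ≤ a t := by
  have := cT_sum hT t; omega

lemma wOfT_false_iff (p : Fin N) :
    wOfT g T p = false ↔ (p : ℕ) < bs g (g p) + cT T 1 (g p) := by
  simp [wOfT]

lemma wOfT_true_iff (p : Fin N) :
    wOfT g T p = true ↔ bs g (g p) + cT T 1 (g p) ≤ (p : ℕ) := by
  simp [wOfT]

lemma closers_block (hg : Monotone g)
    (hfiber : ∀ j, (univ.filter fun i => g i = j).card = a j)
    (hT : TabOK q a T) (t : Fin q) :
    (univ.filter fun p : Fin N => g p = t ∧ wOfT g T p = false)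
      = univ.filter fun p : Fin N => bs g t ≤ (p : ℕ) ∧ (p : ℕ) < bs g t + cT T 1 t := by
  ext p
  simp only [mem_filter, mem_univ, true_and]
  constructor
  · rintro ⟨hgp, hcl⟩
    rw [wOfT_false_iff, hgp] at hcl
    refine ⟨?_, hcl⟩
    by_contra hcon
    push_neg at hcon
    rw [bs_iff hg t p, hgp] at hcon
    exact lt_irrefl t hcon
  · rintro ⟨h1, h2⟩
    have hle : g p ≤ t := by
      rw [← bsa_iff hg hfiber t p]
      have := cT1_le hT t
      omega
    have hge : ¬ g p < t := by
      rw [← bs_iff hg t p]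
      omega
    have heq : g p = t := le_antisymm hle (not_lt.mp hge)
    refine ⟨heq, ?_⟩
    rw [wOfT_false_iff, heq]
    exact h2

lemma closers_block_card (hg : Monotone g)
    (hfiber : ∀ j, (univ.filter fun i => g i = j).card = a j)
    (hT : TabOK q a T) (t : Fin q) :
    (univ.filter fun p : Fin N => g p = t ∧ wOfT g T p = false).card = cT T 1 t := by
  have huN : bs g t + a t ≤ N := by
    have h1 := gle_card hg hfiber t
    have h2 := card_filter_le (univ : Finset (Fin N)) (fun p => g p ≤ t)
    rw [card_univ, Fintype.card_fin] at h2
    omega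
  have hc := cT1_le hT t
  rw [closers_block hg hfiber hT t,
    card_interval (Nat.le_add_right _ _) (by omega)]
  omega

lemma block_split (P : Fin N → Bool) (t : Fin q) :
    (univ.filter fun p : Fin N => g p = t ∧ P p = true).card
      + (univ.filter fun p : Fin N => g p = t ∧ P p = false).card
      = (univ.filter fun p : Fin N => g p = t).card := by
  have h1 : (univ.filter fun p : Fin N => g p = t ∧ P p = true)
      = (univ.filter fun p : Fin N => g p = t).filter fun p => P p = true := by
    rw [filter_filter]
  have h2 : (univ.filter fun p : Fin N => g p = t ∧ P p = false)
      = (univ.filter fun p : Fin N => g p = t).filter fun p => ¬ (P p = true) := by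
    rw [filter_filter]
    apply filter_congr
    intro p _
    simp
  rw [h1, h2, card_filter_add_card_filter_not]

lemma openers_block_card (hg : Monotone g)
    (hfiber : ∀ j, (univ.filter fun i => g i = j).card = a j)
    (hT : TabOK q a T) (t : Fin q) :
    (univ.filter fun p : Fin N => g p = t ∧ wOfT g T p = true).card = cT T 0 t := by
  have h1 := block_split (g := g) (wOfT g T) t
  rw [closers_block_card hg hfiber hT t, hfiber t] at h1
  have := cT_sum hT t
  omega

lemma wOfT_blocks :
    ∀ p p' : Fin N, p ≤ p' → g p = g p' → wOfT g T p = true → wOfT g T p' = true := by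
  intro p p' hle hgeq hw
  rw [wOfT_true_iff] at hw ⊢
  rw [← hgeq]
  have : (p : ℕ) ≤ (p' : ℕ) := hle
  omega

lemma closers_total (hg : Monotone g)
    (hfiber : ∀ j, (univ.filter fun i => g i = j).card = a j)
    (hT : TabOK q a T) :
    (univ.filter fun p : Fin N => wOfT g T p = false).card = m := by
  rw [card_eq_sum_card_fiberwise (f := g) (t := univ) (fun x _ => mem_univ _)]
  have he : ∀ t : Fin q, ((univ.filter fun p : Fin N => wOfT g T p = false).filter
      fun p => g p = t).card = cT T 1 t := by
    intro t
    rw [← closers_block_card hg hfiber hT t]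
    congr 1
    rw [filter_filter]
    apply filter_congr
    intro p _
    exact and_comm
  rw [Finset.sum_congr rfl (fun t _ => he t)]
  exact sum_vcnt (fun k => hT.bounds 1 k)

lemma wOfT_bal (hNm : N = 2 * m) (hg : Monotone g)
    (hfiber : ∀ j, (univ.filter fun i => g i = j).card = a j)
    (hT : TabOK q a T) :
    cnt (wOfT g T) true N = cnt (wOfT g T) false N := by
  rw [cnt_N, cnt_N]
  have htot : (univ.filter fun p : Fin N => wOfT g T p = true).card
      + (univ.filter fun p : Fin N => wOfT g T p = false).card = N := by
    have h2 : (univ.filter fun p : Fin N => wOfT g T p = false)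
        = univ.filter fun p : Fin N => ¬ (wOfT g T p = true) := by
      apply filter_congr; intro p _; simp
    rw [h2, card_filter_add_card_filter_not, card_univ, Fintype.card_fin]
  rw [closers_total hg hfiber hT] at htot ⊢
  omega

lemma cnt_zero (w : Fin N → Bool) (b : Bool) : cnt w b 0 = 0 := by
  simp [cnt]

lemma wOfT_ballot (hNm : N = 2 * m) (hg : Monotone g)
    (hfiber : ∀ j, (univ.filter fun i => g i = j).card = a j)
    (hT : TabOK q a T) :
    ∀ k, cnt (wOfT g T) false k ≤ cnt (wOfT g T) true k := by
  intro k
  rcases Nat.eq_zero_or_pos k with rfl | hk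
  · rw [cnt_zero, cnt_zero]
  rcases le_or_gt N k with hNk | hkN
  · rw [cnt_of_ge _ _ hNk, cnt_of_ge _ _ hNk, ← wOfT_bal hNm hg hfiber hT]
  set p0 : Fin N := ⟨k - 1, by omega⟩ with hp0
  set t0 : Fin q := g p0 with ht0
  -- Step A
  have hA : cnt (wOfT g T) false k ≤ ∑ u ∈ univ.filter (fun u : Fin q => u ≤ t0), cT T 1 u := by
    have hsub : cnt (wOfT g T) false k
        ≤ (univ.filter fun p : Fin N => g p ≤ t0 ∧ wOfT g T p = false).card := by
      apply card_le_card
      intro p hp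
      simp only [mem_filter, mem_univ, true_and] at hp ⊢
      refine ⟨?_, hp.2⟩
      rw [ht0]
      apply hg
      rw [Fin.le_def]
      simp only [hp0]
      omega
    refine le_trans hsub (le_of_eq ?_)
    rw [card_eq_sum_card_fiberwise (f := g) (t := univ.filter (fun u : Fin q => u ≤ t0))
      (fun x hx => by
        simp only [mem_coe, mem_filter, mem_univ, true_and] at hx ⊢
        exact hx.1)]
    apply Finset.sum_congr rfl
    intro u hu
    simp only [mem_filter, mem_univ, true_and] at hu
    rw [← closers_block_card hg hfiber hT u]
    congr 1
    ext p
    simp only [mem_filter, mem_univ, true_and]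
    constructor
    · rintro ⟨⟨_, h2⟩, h3⟩; exact ⟨h3, h2⟩
    · rintro ⟨h1, h2⟩; exact ⟨⟨h1 ▸ hu, h2⟩, h1⟩
  -- Step B
  have hB : ∑ u ∈ univ.filter (fun u : Fin q => u ≤ t0), cT T 1 u
      ≤ ∑ u ∈ univ.filter (fun u : Fin q => u < t0), cT T 0 u := by
    have hcc : ccnt (T 1) ((t0 : ℕ) + 1) ≤ ccnt (T 0) (t0 : ℕ) := by
      apply card_le_card
      intro j hj
      simp only [mem_filter, mem_univ, true_and] at hj ⊢
      have := hT.col j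
      omega
    have he1 : ccnt (T 1) ((t0 : ℕ) + 1)
        = ∑ u ∈ univ.filter (fun u : Fin q => u ≤ t0), cT T 1 u := by
      rw [ccnt_eq_sum (fun k => hT.bounds 1 k), Finset.sum_filter]
      apply Finset.sum_congr rfl
      intro u _
      by_cases h : u ≤ t0
      · have h' : (u : ℕ) + 1 ≤ (t0 : ℕ) + 1 := by rw [Fin.le_def] at h; omega
        rw [if_pos h', if_pos h]
        rfl
      · have h' : ¬ ((u : ℕ) + 1 ≤ (t0 : ℕ) + 1) := by rw [Fin.le_def] at h; omega
        rw [if_neg h', if_neg h]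
    have he0 : ccnt (T 0) (t0 : ℕ)
        = ∑ u ∈ univ.filter (fun u : Fin q => u < t0), cT T 0 u := by
      rw [ccnt_eq_sum (fun k => hT.bounds 0 k), Finset.sum_filter]
      apply Finset.sum_congr rfl
      intro u _
      by_cases h : u < t0
      · have h' : (u : ℕ) + 1 ≤ (t0 : ℕ) := by rw [Fin.lt_def] at h; omega
        rw [if_pos h', if_pos h]
        rfl
      · have h' : ¬ ((u : ℕ) + 1 ≤ (t0 : ℕ)) := by rw [Fin.lt_def] at h; omega
        rw [if_neg h', if_neg h]
    rw [← he1, ← he0]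
    exact hcc
  -- Step C
  have hC : ∑ u ∈ univ.filter (fun u : Fin q => u < t0), cT T 0 u
      ≤ cnt (wOfT g T) true k := by
    have hbs : bs g t0 ≤ k - 1 := by
      by_contra hcon
      push_neg at hcon
      have := (bs_iff hg t0 p0).mp (by simpa [hp0] using hcon)
      rw [← ht0] at this
      exact lt_irrefl t0 this
    have hsub : (univ.filter fun p : Fin N => g p < t0 ∧ wOfT g T p = true).card
        ≤ cnt (wOfT g T) true k := by
      apply card_le_card
      intro p hp
      simp only [mem_filter, mem_univ, true_and] at hp ⊢
      refine ⟨?_, hp.2⟩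
      have := (bs_iff hg t0 p).mpr hp.1
      omega
    refine le_trans (le_of_eq ?_) hsub
    rw [card_eq_sum_card_fiberwise (f := g) (t := univ.filter (fun u : Fin q => u < t0))
      (fun x hx => by
        simp only [mem_coe, mem_filter, mem_univ, true_and] at hx ⊢
        exact hx.1)]
    symm
    apply Finset.sum_congr rfl
    intro u hu
    simp only [mem_filter, mem_univ, true_and] at hu
    rw [← openers_block_card hg hfiber hT u]
    congr 1
    ext p
    simp only [mem_filter, mem_univ, true_and]
    constructor
    · rintro ⟨⟨_, h2⟩, h3⟩; exact ⟨h3, h2⟩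
    · rintro ⟨h1, h2⟩; exact ⟨⟨h1 ▸ hu, h2⟩, h1⟩
  omega

lemma wOfT_wordOK (hNm : N = 2 * m) (hg : Monotone g)
    (hfiber : ∀ j, (univ.filter fun i => g i = j).card = a j)
    (hT : TabOK q a T) : WordOK g (wOfT g T) :=
  ⟨wOfT_ballot hNm hg hfiber hT, wOfT_bal hNm hg hfiber hT, wOfT_blocks⟩

end S8
end DEV7
section DEV8
namespace S8
open Finset
variable {N m q : ℕ} {g : Fin N → Fin q} {a : Fin q → ℕ} {w : Fin N → Bool}
  {T : Fin 2 → Fin m → ℕ}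

lemma TOf_tabOK (hw : WordOK g w) (hNm : N = 2 * m) (hg : Monotone g)
    (hfiber : ∀ j, (univ.filter fun i => g i = j).card = a j) :
    TabOK q a (TOf m g w) where
  mono := TOf_mono hw hNm hg
  col := TOf_col hw hNm hg
  entry := TOf_entry hw hNm hfiber
  bounds := TOf_bounds hw hNm

lemma cT1_TOf (hw : WordOK g w) (hNm : N = 2 * m) (t : Fin q) :
    cT (TOf m g w) 1 t = (univ.filter fun p : Fin N => g p = t ∧ w p = false).card := by
  show vcnt (TOf m g w 1) ((t : ℕ) + 1) = _
  rw [TOf_count hw hNm 1 t, rowSet_one, filter_filter]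
  apply congrArg Finset.card
  apply filter_congr
  intro p _
  exact and_comm

lemma wOfT_TOf_aux (hw : WordOK g w) (hNm : N = 2 * m) (hg : Monotone g)
    (t : Fin q) (p : Fin N) (hpt : g p = t) :
    w p = false ↔ (p : ℕ) < bs g t + cT (TOf m g w) 1 t := by
  set D : Finset (Fin N) :=
    univ.filter fun p' => g p' < t ∨ (g p' = t ∧ w p' = false) with hD
  have hdown : ∀ i j : Fin N, i ≤ j → j ∈ D → i ∈ D := by
    intro i j hij hj
    simp only [hD, mem_filter, mem_univ, true_and] at hj ⊢
    rcases hj with hj1 | ⟨hj2, hj3⟩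
    · exact Or.inl (lt_of_le_of_lt (hg hij) hj1)
    · by_cases h : g i < t
      · exact Or.inl h
      · have heq : g i = t := le_antisymm (hj2 ▸ hg hij) (not_lt.mp h)
        refine Or.inr ⟨heq, ?_⟩
        by_contra hcon
        rw [Bool.not_eq_false] at hcon
        have := hw.blocks i j hij (heq.trans hj2.symm) hcon
        rw [hj3] at this
        exact Bool.noConfusion this
  have hcard : D.card = bs g t + (univ.filter fun p' : Fin N => g p' = t ∧ w p' = false).card := by
    have hsplit : D = (univ.filter fun p' : Fin N => g p' < t)
        ∪ (univ.filter fun p' : Fin N => g p' = t ∧ w p' = false) := by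
      ext p'
      simp only [hD, mem_union, mem_filter, mem_univ, true_and]
    have hdisj : Disjoint (univ.filter fun p' : Fin N => g p' < t)
        (univ.filter fun p' : Fin N => g p' = t ∧ w p' = false) := by
      rw [disjoint_left]
      intro p' h1 h2
      simp only [mem_filter, mem_univ, true_and] at h1 h2
      rw [h2.1] at h1
      exact lt_irrefl t h1
    rw [hsplit, card_union_of_disjoint hdisj]
    rfl
  have hmemD : p ∈ D ↔ w p = false := by
    simp only [hD, mem_filter, mem_univ, true_and, hpt]
    simp
  have hiff := downset_iff hdown (i := p)
  rw [hcard, hmemD, ← cT1_TOf hw hNm t] at hiff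
  exact hiff

/-- the word reconstructed from the tableau of a word is the word itself -/
lemma wOfT_TOf (hw : WordOK g w) (hNm : N = 2 * m) (hg : Monotone g)
    (hfiber : ∀ j, (univ.filter fun i => g i = j).card = a j) :
    wOfT g (TOf m g w) = w := by
  funext p
  have aux := wOfT_TOf_aux hw hNm hg (g p) p rfl
  cases hwp : w p with
  | false =>
    rw [wOfT_false_iff]
    exact aux.mp hwp
  | true =>
    rw [wOfT_true_iff]
    have h2 : ¬ ((p : ℕ) < bs g (g p) + cT (TOf m g w) 1 (g p)) := fun hc => by
      rw [aux.mpr hc] at hwp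
      exact Bool.noConfusion hwp
    omega

/-- the tableau reconstructed from the word of a tableau is the tableau itself -/
lemma TOf_wOfT (hNm : N = 2 * m) (hg : Monotone g)
    (hfiber : ∀ j, (univ.filter fun i => g i = j).card = a j)
    (hT : TabOK q a T) :
    TOf m g (wOfT g T) = T := by
  have hwOK : WordOK g (wOfT g T) := wOfT_wordOK hNm hg hfiber hT
  funext i
  have hcnt : ∀ (i : Fin 2) (u : Fin q),
      vcnt (TOf m g (wOfT g T) i) ((u : ℕ) + 1) = vcnt (T i) ((u : ℕ) + 1) := by
    intro i u
    rw [TOf_count hwOK hNm i u]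
    rcases fin2_cases i with rfl | rfl
    · rw [rowSet_zero, filter_filter]
      have e : ((univ : Finset (Fin N)).filter fun p => wOfT g T p = true ∧ g p = u)
          = univ.filter fun p => g p = u ∧ wOfT g T p = true := by
        apply filter_congr
        intro p _
        exact and_comm
      rw [e, openers_block_card hg hfiber hT u]
      rfl
    · rw [rowSet_one, filter_filter]
      have e : ((univ : Finset (Fin N)).filter fun p => wOfT g T p = false ∧ g p = u)
          = univ.filter fun p => g p = u ∧ wOfT g T p = false := by
        apply filter_congr
        intro p _
        exact and_comm
      rw [e, closers_block_card hg hfiber hT u]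
      rfl
  exact mono_eq_of_counts (q := q) (TOf_mono hwOK hNm hg i) (hT.mono i)
    (fun k => TOf_bounds hwOK hNm i k) (fun k => hT.bounds i k) (hcnt i)

end S8
end DEV8

/-- (Lemma 3, Part A/B.) Semistandard Young tableaux of shape `2 × (d-1)`
with content `(a 1, …, a q)` are in bijection with non-crossing perfect matchings on
`2d - 2` linearly ordered points grouped into consecutive blocks of sizes `a 1, …, a q`
(encoded by a monotone grouping map `g` with fiber sizes `a j`) having no chord joining two
points of the same block. -/
theorem ssyt_equiv_grouped_noncrossing_matchings
    (d q : ℕ) (hd : 1 ≤ d) (a : Fin q → ℕ)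
    (ha : ∀ j, 1 ≤ a j) (hsum : ∑ j, a j = 2 * d - 2)
    (g : Fin (2 * d - 2) → Fin q) (hg : Monotone g)
    (hfiber : ∀ j, (Finset.univ.filter fun i => g i = j).card = a j) :
    Nonempty
      ({T : Fin 2 → Fin (d - 1) → ℕ //
          (∀ i, Monotone (T i)) ∧
          (∀ j, T 0 j < T 1 j) ∧
          (∀ j : Fin q, entryCount T ((j : ℕ) + 1) = a j) ∧
          (∀ i j, 1 ≤ T i j ∧ T i j ≤ q)} ≃
       {f : Fin (2 * d - 2) → Fin (2 * d - 2) //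
          NoncrossingMatching f ∧ ∀ i, g (f i) ≠ g i}) := by
  have hNm : 2 * d - 2 = 2 * (d - 1) := by omega
  refine ⟨?_⟩
  refine
    { toFun := fun Ts =>
        ⟨S8.fOf (S8.wOfT g Ts.1), ?_⟩
      invFun := fun fs =>
        ⟨S8.TOf (d - 1) g (S8.wOf fs.1), ?_⟩
      left_inv := ?_
      right_inv := ?_ }
  · -- forward membership
    obtain ⟨T, hT1, hT2, hT3, hT4⟩ := Ts
    have hTab : S8.TabOK q a T := ⟨hT1, hT2, hT3, hT4⟩
    have hw : S8.WordOK g (S8.wOfT g T) := S8.wOfT_wordOK hNm hg hfiber hTab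
    exact ⟨⟨S8.fOf_involutive hw, S8.fOf_ne hw, S8.fOf_noncrossing hw⟩, S8.fOf_blocks hw⟩
  · -- backward membership
    obtain ⟨f, ⟨hinv, hne, hnc⟩, hb⟩ := fs
    have hw : S8.WordOK g (S8.wOf f) :=
      ⟨S8.wOf_ballot hinv hne, S8.wOf_bal hinv hne, S8.wOf_blocks hinv hne hnc hg hb⟩
    have hTab : S8.TabOK q a (S8.TOf (d - 1) g (S8.wOf f)) :=
      S8.TOf_tabOK hw hNm hg hfiber
    exact ⟨hTab.mono, hTab.col, hTab.entry, hTab.bounds⟩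
  · -- left inverse
    rintro ⟨T, hT1, hT2, hT3, hT4⟩
    have hTab : S8.TabOK q a T := ⟨hT1, hT2, hT3, hT4⟩
    have hw : S8.WordOK g (S8.wOfT g T) := S8.wOfT_wordOK hNm hg hfiber hTab
    apply Subtype.ext
    show S8.TOf (d - 1) g (S8.wOf (S8.fOf (S8.wOfT g T))) = T
    rw [S8.wOf_fOf hw, S8.TOf_wOfT hNm hg hfiber hTab]
  · -- right inverse
    rintro ⟨f, ⟨hinv, hne, hnc⟩, hb⟩
    have hw : S8.WordOK g (S8.wOf f) :=
      ⟨S8.wOf_ballot hinv hne, S8.wOf_bal hinv hne, S8.wOf_blocks hinv hne hnc hg hb⟩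
    apply Subtype.ext
    show S8.fOf (S8.wOfT g (S8.TOf (d - 1) g (S8.wOf f))) = f
    rw [S8.wOfT_TOf hw hNm hg hfiber, S8.fOf_wOf hinv hne hnc hg hb]
end

section
/- Let f = P/Q be a complex rational function of degree d and W the projective subspace of P^d spanned by E(z_0), ..., E(z_a), where E(z) = (1 : z : ... : z^d) and z_0,...,z_a are distinct complex numbers, none a pole of f. Let X ⊂ P^d be the codimension-2 subspace cut out by the two linear equations whose coefficient vectors are the coefficient vectors of P and Q. Then dim(X ∩ W) ≥ a - 1 if and only if f(z_0) = f(z_1) = ... = f(z_a). -/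
open Polynomial

/-- Let `f = P/Q` be a rational function of degree `d` (with `P`, `Q`
coprime, `max (deg P) (deg Q) = d`), let `X` be the codimension-2 projective subspace of
`P^d` cut out by the two linear forms with coefficient vectors those of `P` and `Q`
(realized as the kernel of `B.mulVecLin` in `ℂ^{d+1}`), and let `W` be the projective span
of the points `E (z 0), …, E (z a)` of the rational normal curve, for distinct `z k`, none a
pole of `f` (realized as the linear span of the Vandermonde vectors). Then the projective
dimension of `X ∩ W` is `≥ a - 1` (i.e. its linear dimension is `≥ a`) iff
`f (z 0) = ⋯ = f (z a)`. -/
theorem codim_two_meets_span_iff_constant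
    (d a : ℕ) (B : Matrix (Fin 2) (Fin (d + 1)) ℂ)
    (P Q : Polynomial ℂ)
    (hP : P = ∑ j : Fin (d + 1), Polynomial.C (B 0 j) * X ^ (j : ℕ))
    (hQ : Q = ∑ j : Fin (d + 1), Polynomial.C (B 1 j) * X ^ (j : ℕ))
    (hcop : IsCoprime P Q)
    (hdeg : max P.natDegree Q.natDegree = d)
    (z : Fin (a + 1) → ℂ) (hz : Function.Injective z) (had : a ≤ d)
    (hpole : ∀ k, Q.eval (z k) ≠ 0)
    (Xsub Wsub : Submodule ℂ (Fin (d + 1) → ℂ))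
    (hX : Xsub = LinearMap.ker B.mulVecLin)
    (hW : Wsub = Submodule.span ℂ
      (Set.range fun k : Fin (a + 1) => fun j : Fin (d + 1) => z k ^ (j : ℕ))) :
    a ≤ Module.finrank ℂ ↥(Xsub ⊓ Wsub) ↔
      ∀ k l : Fin (a + 1), P.eval (z k) / Q.eval (z k) = P.eval (z l) / Q.eval (z l) := by
  classical
  set L := B.mulVecLin with hL
  set v : Fin (a + 1) → (Fin (d + 1) → ℂ) := fun k j => z k ^ (j : ℕ) with hv
  have hPe : ∀ t : ℂ, P.eval t = ∑ j : Fin (d + 1), B 0 j * t ^ (j : ℕ) := by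
    intro t; simp [hP, eval_finset_sum]
  have hQe : ∀ t : ℂ, Q.eval t = ∑ j : Fin (d + 1), B 1 j * t ^ (j : ℕ) := by
    intro t; simp [hQ, eval_finset_sum]
  have hLv : ∀ k, L (v k) = ![P.eval (z k), Q.eval (z k)] := by
    intro k
    funext i
    fin_cases i <;>
      simp [hL, Matrix.mulVecLin_apply, Matrix.mulVec, dotProduct, hPe, hQe, hv]
  -- linear independence of the Vandermonde vectors
  have h1 : a + 1 ≤ d + 1 := by omega
  have hind : LinearIndependent ℂ v := by
    have hvd : LinearIndependent ℂ (fun k => (Matrix.vandermonde z) k) := by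
      change LinearIndependent ℂ (Matrix.vandermonde z).row
      rw [Matrix.linearIndependent_rows_iff_isUnit, Matrix.isUnit_iff_isUnit_det,
        isUnit_iff_ne_zero, Matrix.det_vandermonde_ne_zero_iff]
      exact hz
    have hcomp : (LinearMap.funLeft ℂ ℂ (Fin.castLE h1)) ∘ v
        = fun k => (Matrix.vandermonde z) k := by
      funext k j
      simp [LinearMap.funLeft_apply, Matrix.vandermonde, hv]
    exact LinearIndependent.of_comp (LinearMap.funLeft ℂ ℂ (Fin.castLE h1))
      (hcomp ▸ hvd)
  have hWfin : Module.finrank ℂ Wsub = a + 1 := by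
    rw [hW]
    rw [finrank_span_eq_card hind, Fintype.card_fin]
  set L' := L.domRestrict Wsub with hL'
  have hker : Module.finrank ℂ (LinearMap.ker L') = Module.finrank ℂ ↥(Xsub ⊓ Wsub) := by
    rw [hL', LinearMap.ker_domRestrict]
    have heq : Submodule.comap Wsub.subtype (LinearMap.ker L)
        = Submodule.comap Wsub.subtype (Xsub ⊓ Wsub) := by
      ext x; simp [hX]
    rw [heq]
    exact (Submodule.comapSubtypeEquivOfLe inf_le_right).finrank_eq
  have hrn : Module.finrank ℂ (LinearMap.range L')
      + Module.finrank ℂ (LinearMap.ker L') = a + 1 := by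
    rw [LinearMap.finrank_range_add_finrank_ker L', hWfin]
  have hw_mem : ∀ k, (![P.eval (z k), Q.eval (z k)] : Fin 2 → ℂ) ∈ LinearMap.range L' := by
    intro k
    rw [hL', LinearMap.range_domRestrict]
    exact ⟨v k, by rw [hW]; exact Submodule.subset_span ⟨k, rfl⟩, hLv k⟩
  constructor
  · intro hdim k l
    have hrle : Module.finrank ℂ (LinearMap.range L') ≤ 1 := by omega
    have hdep : ¬ LinearIndependent ℂ
        ![(![P.eval (z k), Q.eval (z k)] : Fin 2 → ℂ), ![P.eval (z l), Q.eval (z l)]] := by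
      intro hLI
      have h2 : Module.finrank ℂ (Submodule.span ℂ (Set.range
          ![(![P.eval (z k), Q.eval (z k)] : Fin 2 → ℂ), ![P.eval (z l), Q.eval (z l)]])) = 2 := by
        rw [finrank_span_eq_card hLI, Fintype.card_fin]
      have hle : Submodule.span ℂ (Set.range
          ![(![P.eval (z k), Q.eval (z k)] : Fin 2 → ℂ), ![P.eval (z l), Q.eval (z l)]])
          ≤ LinearMap.range L' := by
        rw [Submodule.span_le]
        rintro x ⟨i, rfl⟩
        fin_cases i <;> simpa using hw_mem _
      have := Submodule.finrank_mono hle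
      rw [h2] at this
      exact absurd (this.trans hrle) (by norm_num)
    rw [linearIndependent_fin2] at hdep
    push_neg at hdep
    have hl0 : (![P.eval (z l), Q.eval (z l)] : Fin 2 → ℂ) ≠ 0 := by
      intro h
      exact hpole l (by simpa using congrFun h 1)
    obtain ⟨t, ht⟩ := hdep hl0
    have h0 := congrFun ht 0
    have h1' := congrFun ht 1
    simp at h0 h1'
    have htne : t ≠ 0 := by
      intro h; rw [h, zero_mul] at h1'; exact hpole k h1'.symm
    rw [← h0, ← h1', mul_div_mul_left _ _ htne]
  · intro hval
    set c := P.eval (z 0) / Q.eval (z 0) with hc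
    have hPc : ∀ k, P.eval (z k) = c * Q.eval (z k) := by
      intro k
      have := (hval k 0)
      rw [← hc] at this
      rw [← this, div_mul_cancel₀ _ (hpole k)]
    have hu : (![c, 1] : Fin 2 → ℂ) ≠ 0 := by
      intro h
      simpa using congrFun h 1
    have hrle : LinearMap.range L' ≤ Submodule.span ℂ {(![c, 1] : Fin 2 → ℂ)} := by
      rw [hL', LinearMap.range_domRestrict, hW, Submodule.map_span, Submodule.span_le]
      rintro y ⟨x, ⟨k, rfl⟩, rfl⟩
      have hvk : L (v k) = Q.eval (z k) • ![c, 1] := by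
        rw [hLv k]; funext i; fin_cases i <;> simp [hPc k, mul_comm]
      exact Submodule.mem_span_singleton.mpr ⟨Q.eval (z k), hvk.symm⟩
    have hfr : Module.finrank ℂ (LinearMap.range L') ≤ 1 := by
      have := Submodule.finrank_mono hrle
      rwa [finrank_span_singleton hu] at this
    omega
end
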